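/- arXiv:1803.09015 — 9 statements merged into one kernel-verified Lean document; each statement's English description precedes it below -/
import Mathlib

section
/- Under the conditional parallel trends assumption (holding for all pairs (g,s) with 2 ≤ g ≤ s ≤ T) and overlap, for every g and t with 2 ≤ g ≤ t ≤ T the group-time average treatment effect is nonparametrically identified by the weighted estimand: ATT(g,t) = E[(G_g/E[G_g] − (p_g(X)C/(1 − p_g(X)))/E[p_g(X)C/(1 − p_g(X))]) (Y_t − Y_{g−1})]. -/
open MeasureTheory ProbabilityTheory
open scoped Classical

/-- pull-out property + tower rule: integral of (m-measurable φ) * f equals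
integral of φ * condexp of f. -/
theorem aux_pullout {Ω : Type*} {m m0 : MeasurableSpace Ω} (hm : m ≤ m0)
    (μ : Measure Ω) [IsFiniteMeasure μ] (φ f : Ω → ℝ)
    (hφ : StronglyMeasurable[m] φ)
    (hφf : Integrable (fun ω => φ ω * f ω) μ) (hf : Integrable f μ) :
    ∫ ω, φ ω * f ω ∂μ = ∫ ω, φ ω * (μ[f|m]) ω ∂μ := by
  have h := condExp_mul_of_stronglyMeasurable_left hφ (by exact hφf) hf
  calc ∫ ω, φ ω * f ω ∂μ = ∫ ω, (μ[fun ω => φ ω * f ω|m]) ω ∂μ :=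
        (integral_condExp hm).symm
    _ = ∫ ω, φ ω * (μ[f|m]) ω ∂μ := integral_congr_ae (by exact h)

theorem aux_integral_cond {Ω : Type*} [MeasurableSpace Ω] (P : Measure Ω)
    (s : Set Ω) (f : Ω → ℝ) :
    ∫ ω, f ω ∂(P[|s]) = (P s).toReal⁻¹ * ∫ ω in s, f ω ∂P := by
  rw [ProbabilityTheory.cond, integral_smul_measure, ENNReal.toReal_inv, smul_eq_mul]

theorem aux_integrable_cond {Ω : Type*} [MeasurableSpace Ω] {P : Measure Ω}
    {E : Set Ω} (hE : P E ≠ 0) {f : Ω → ℝ} (hf : Integrable f (P.restrict E)) :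
    Integrable f (P[|E]) :=
  hf.smul_measure (ENNReal.inv_ne_top.2 hE)

theorem aux_integrable_restrict {Ω : Type*} [MeasurableSpace Ω] {P : Measure Ω}
    [IsFiniteMeasure P] {E : Set Ω} (hE : P E ≠ 0) {f : Ω → ℝ}
    (hf : Integrable f (P[|E])) : Integrable f (P.restrict E) := by
  have h2 := hf.smul_measure (c := P E) (measure_ne_top P E)
  rwa [ProbabilityTheory.cond, smul_smul,
    ENNReal.mul_inv_cancel hE (measure_ne_top P E), one_smul] at h2

theorem aux_ae_cond {Ω : Type*} [MeasurableSpace Ω] {P : Measure Ω}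
    {E : Set Ω} {q : Ω → Prop} (h : ∀ᵐ ω ∂P, q ω) : ∀ᵐ ω ∂(P[|E]), q ω :=
  cond_absolutelyContinuous.ae_le h

theorem aux_ae_cond_mem {Ω : Type*} [MeasurableSpace Ω] {P : Measure Ω}
    {E : Set Ω} (hE : MeasurableSet E) : ∀ᵐ ω ∂(P[|E]), ω ∈ E := by
  rw [ProbabilityTheory.cond]
  exact Measure.ae_smul_measure (ae_restrict_mem hE) _
/-- Theorem 1 of Callaway & Sant'Anna: nonparametric identification
of the group-time average treatment effect.  Under the conditional parallel trends
assumption (for all pairs `(g,s)` with `2 ≤ g ≤ s ≤ T`) and overlap, for every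
`2 ≤ g ≤ t ≤ T`,
`ATT(g,t) = E[(G_g/E[G_g] − (p_g(X)C/(1−p_g(X)))/E[p_g(X)C/(1−p_g(X))])(Y_t − Y_{g−1})]`. -/
theorem att_gt_nonparametric_identification
    {Ω : Type*} [MeasurableSpace Ω] (P : Measure Ω) [IsProbabilityMeasure P]
    (k T : ℕ) (hT : 2 ≤ T)
    -- potential outcomes, observed outcomes, covariates, group/control indicators
    (Y0 Y1 Y : ℕ → Ω → ℝ) (X : Ω → (Fin k → ℝ)) (G : ℕ → Ω → ℝ) (C : Ω → ℝ)
    -- measurability and integrability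
    (hY0meas : ∀ s, Measurable (Y0 s)) (hY1meas : ∀ s, Measurable (Y1 s))
    (hY0int : ∀ s, Integrable (Y0 s) P) (hY1int : ∀ s, Integrable (Y1 s) P)
    (hXmeas : Measurable X) (hGmeas : ∀ g, Measurable (G g)) (hCmeas : Measurable C)
    -- indicator structure
    (hG01 : ∀ g ω, G g ω = 0 ∨ G g ω = 1)
    (hC01 : ∀ ω, C ω = 0 ∨ C ω = 1)
    (hsum : ∀ ω, (∑ g ∈ Finset.Icc 2 T, G g ω) + C ω = 1)
    -- observed outcomes
    (hobs : ∀ s ω, Y s ω =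
      if ∃ g', 2 ≤ g' ∧ g' ≤ s ∧ G g' ω = 1 then Y1 s ω else Y0 s ω)
    -- generalized propensity scores: σ(X)-measurable versions of E[G_g | X, G_g + C = 1]
    (p : ℕ → Ω → ℝ)
    (hpmeas : ∀ g, Measurable[MeasurableSpace.comap X inferInstance] (p g))
    (hpver : ∀ g, 2 ≤ g → g ≤ T →
      p g =ᵐ[P[|{ω | G g ω + C ω = 1}]]
        (P[|{ω | G g ω + C ω = 1}])[G g | MeasurableSpace.comap X inferInstance])
    -- overlap
    (hPg : ∀ g, 2 ≤ g → g ≤ T → 0 < P {ω | G g ω = 1})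
    (hPC : 0 < P {ω | C ω = 1})
    (ε : ℝ) (hε : 0 < ε)
    (hoverlap : ∀ g, 2 ≤ g → g ≤ T → ∀ᵐ ω ∂P, 0 ≤ p g ω ∧ p g ω ≤ 1 - ε)
    -- conditional parallel trends for all pairs (g, s) with 2 ≤ g ≤ s ≤ T
    (hCPT : ∀ g s, 2 ≤ g → g ≤ s → s ≤ T →
      ∃ m : (Fin k → ℝ) → ℝ, Measurable m ∧
        (fun ω => m (X ω)) =ᵐ[P[|{ω | G g ω = 1}]]
          (P[|{ω | G g ω = 1}])[fun ω => Y0 s ω - Y0 (s - 1) ω |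
            MeasurableSpace.comap X inferInstance] ∧
        (fun ω => m (X ω)) =ᵐ[P[|{ω | C ω = 1}]]
          (P[|{ω | C ω = 1}])[fun ω => Y0 s ω - Y0 (s - 1) ω |
            MeasurableSpace.comap X inferInstance])
    -- the pair (g, t) under consideration, 2 ≤ g ≤ t ≤ T
    (g t : ℕ) (hg : 2 ≤ g) (hgt : g ≤ t) (htT : t ≤ T) :
    -- conclusion: ATT(g,t) is identified by the weighted estimand
    ∫ ω, (Y1 t ω - Y0 t ω) ∂(P[|{ω | G g ω = 1}]) =
      ∫ ω,
        (G g ω / (∫ ω', G g ω' ∂P) -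
          (p g ω * C ω / (1 - p g ω)) / (∫ ω', p g ω' * C ω' / (1 - p g ω') ∂P)) *
        (Y t ω - Y (g - 1) ω) ∂P := by
  classical
  have hgT : g ≤ T := le_trans hgt htT
  have hgmem : g ∈ Finset.Icc 2 T := Finset.mem_Icc.2 ⟨hg, hgT⟩
  have hle : MeasurableSpace.comap X inferInstance ≤ ‹MeasurableSpace Ω› := hXmeas.comap_le
  have hXmX : Measurable[MeasurableSpace.comap X inferInstance] X := fun s hs => ⟨s, hs, rfl⟩
  set A : Set Ω := {ω | G g ω = 1} with hAdef
  set Cs : Set Ω := {ω | C ω = 1} with hCsdef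
  set S : Set Ω := {ω | G g ω + C ω = 1} with hSdef
  -- basic pointwise facts
  have hGnn : ∀ g' ω, 0 ≤ G g' ω := fun g' ω => by rcases hG01 g' ω with h | h <;> simp [h]
  have hCnn : ∀ ω, 0 ≤ C ω := fun ω => by rcases hC01 ω with h | h <;> simp [h]
  have hexcl : ∀ ω, G g ω = 1 →
      C ω = 0 ∧ ∀ b ∈ Finset.Icc 2 T, b ≠ g → G b ω = 0 := by
    intro ω hGa
    have hsum' := hsum ω
    have h1 : G g ω ≤ ∑ g' ∈ Finset.Icc 2 T, G g' ω :=
      Finset.single_le_sum (fun i _ => hGnn i ω) hgmem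
    constructor
    · have := hCnn ω; linarith
    · intro b hb hba
      have h2 : G g ω + G b ω ≤ ∑ g' ∈ Finset.Icc 2 T, G g' ω := by
        have hsub : ({g, b} : Finset ℕ) ⊆ Finset.Icc 2 T := by
          intro x hx; rcases Finset.mem_insert.1 hx with h | h
          · exact h ▸ hgmem
          · exact (Finset.mem_singleton.1 h) ▸ hb
        have := Finset.sum_le_sum_of_subset_of_nonneg hsub
          (fun i hi _ => hGnn i ω)
        rwa [Finset.sum_pair (Ne.symm hba)] at this
      rcases hG01 b ω with h | h
      · exact h
      · exfalso; rw [hGa, h] at h2; have := hCnn ω; linarith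
  have hCzero : ∀ ω, C ω = 1 → ∀ b ∈ Finset.Icc 2 T, G b ω = 0 := by
    intro ω hC b hb
    have h1 : G b ω ≤ ∑ g' ∈ Finset.Icc 2 T, G g' ω :=
      Finset.single_le_sum (fun i _ => hGnn i ω) hb
    rcases hG01 b ω with h | h
    · exact h
    · exfalso; rw [h] at h1; have := hsum ω; have := hGnn b ω; linarith
  -- observed outcomes on the relevant events
  have hYt_A : ∀ ω, G g ω = 1 → Y t ω = Y1 t ω := by
    intro ω h; rw [hobs t ω, if_pos ⟨g, hg, hgt, h⟩]
  have hYg1_A : ∀ ω, G g ω = 1 → Y (g - 1) ω = Y0 (g - 1) ω := by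
    intro ω h; rw [hobs (g - 1) ω, if_neg]
    rintro ⟨g', hg'2, hg'le, hg'1⟩
    have hne : g' ≠ g := by omega
    have h0 : G g' ω = 0 :=
      (hexcl ω h).2 g' (Finset.mem_Icc.2 ⟨hg'2, by omega⟩) hne
    rw [h0] at hg'1; norm_num at hg'1
  have hY_C : ∀ s, s ≤ T → ∀ ω, C ω = 1 → Y s ω = Y0 s ω := by
    intro s hs ω h; rw [hobs s ω, if_neg]
    rintro ⟨g', h2, hle', h1⟩
    have h0 : G g' ω = 0 := hCzero ω h g' (Finset.mem_Icc.2 ⟨h2, le_trans hle' hs⟩)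
    rw [h0] at h1; norm_num at h1
  -- set relations
  have hAS : A ⊆ S := by
    intro ω h
    have h0 := (hexcl ω h).1
    simp only [hSdef, Set.mem_setOf_eq]; rw [h, h0]; norm_num
  have hCS : Cs ⊆ S := by
    intro ω h
    have h0 : G g ω = 0 := hCzero ω h g hgmem
    simp only [hSdef, Set.mem_setOf_eq]; rw [h, h0]; norm_num
  -- measurability of the sets
  have hAm : MeasurableSet A := hGmeas g (measurableSet_singleton (1 : ℝ))
  have hCsm : MeasurableSet Cs := hCmeas (measurableSet_singleton (1 : ℝ))
  have hSm : MeasurableSet S := ((hGmeas g).add hCmeas) (measurableSet_singleton (1 : ℝ))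
  -- measure positivity
  have hPA : P A ≠ 0 := (hPg g hg hgT).ne'
  have hPCs : P Cs ≠ 0 := hPC.ne'
  have hPS : P S ≠ 0 := fun h => hPA (measure_mono_null hAS h)
  haveI hprobA : IsProbabilityMeasure (P[|A]) := cond_isProbabilityMeasure hPA
  haveI hprobC : IsProbabilityMeasure (P[|Cs]) := cond_isProbabilityMeasure hPCs
  haveI hprobS : IsProbabilityMeasure (P[|S]) := cond_isProbabilityMeasure hPS
  have hPAr : 0 < (P A).toReal := ENNReal.toReal_pos hPA (measure_ne_top _ _)
  have hPSr : 0 < (P S).toReal := ENNReal.toReal_pos hPS (measure_ne_top _ _)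
  have hPCr : 0 < (P Cs).toReal := ENNReal.toReal_pos hPCs (measure_ne_top _ _)
  -- set-integral/conditional-integral conversion
  have e3 : ∀ (E : Set Ω) (f : Ω → ℝ),
      ∫ ω in E, f ω ∂P = (P E).toReal * ∫ ω, f ω ∂(P[|E]) := by
    intro E f
    rw [aux_integral_cond]
    rcases eq_or_ne (P E) 0 with h | h
    · simp [h, Measure.restrict_eq_zero.2 h]
    · field_simp [ENNReal.toReal_ne_zero, h, measure_ne_top P E]
  -- the weight function φ = p/(1-p)
  set φ : Ω → ℝ := fun ω => p g ω / (1 - p g ω) with hφdef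
  have hφmX : Measurable[MeasurableSpace.comap X inferInstance] φ := (hpmeas g).div (measurable_const.sub (hpmeas g))
  have hφmeas : Measurable φ := hφmX.mono hle le_rfl
  have hpm : Measurable (p g) := (hpmeas g).mono hle le_rfl
  set c₀ : ℝ := (1 - ε) / ε with hc₀def
  have hφbd : ∀ᵐ ω ∂P, |φ ω| ≤ c₀ ∧ 0 ≤ p g ω ∧ p g ω ≤ 1 - ε ∧ ε ≤ 1 - p g ω ∧
      |p g ω| ≤ c₀ + 1 := by
    filter_upwards [hoverlap g hg hgT] with ω hω
    obtain ⟨h0, h1⟩ := hω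
    have h2 : ε ≤ 1 - p g ω := by linarith
    have h3 : 0 < 1 - p g ω := lt_of_lt_of_le hε h2
    have hφ0 : 0 ≤ φ ω := div_nonneg h0 h3.le
    have hφle : φ ω ≤ c₀ := by
      rw [hφdef, hc₀def, div_le_div_iff₀ h3 hε]
      nlinarith
    have hc₀0 : 0 ≤ c₀ := le_trans hφ0 hφle
    refine ⟨abs_le.2 ⟨by linarith, hφle⟩, h0, h1, h2, abs_le.2 ⟨by linarith, by nlinarith⟩⟩
  -- disjointness and union
  have hdisj : Disjoint A Cs := by
    rw [Set.disjoint_left]; intro ω ha hc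
    have h0 := (hexcl ω ha).1
    have h1 : C ω = 1 := hc
    rw [h0] at h1; norm_num at h1
  have hSAC : S = A ∪ Cs := by
    ext ω; constructor
    · intro hs
      have hs' : G g ω + C ω = 1 := hs
      rcases hG01 g ω with h | h
      · right; show C ω = 1; linarith
      · left; exact h
    · intro h; rcases h with h | h
      · exact hAS h
      · exact hCS h
  -- bounded-multiplication integrability helper
  have hmulbd : ∀ (μ : Measure Ω) (f b : Ω → ℝ) (cb : ℝ), Integrable f μ →
      AEStronglyMeasurable b μ → (∀ᵐ ω ∂μ, |b ω| ≤ cb) →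
      Integrable (fun ω => f ω * b ω) μ := by
    intro μ f b cb hf hb hbd
    exact (hf.bdd_mul hb (by simpa [Real.norm_eq_abs] using hbd)).congr
      (Filter.Eventually.of_forall fun ω => mul_comm _ _)
  have hG1 : ∀ ω, |G g ω| ≤ 1 := fun ω => by rcases hG01 g ω with h | h <;> simp [h]
  have hCbd : ∀ ω, |C ω| ≤ 1 := fun ω => by rcases hC01 ω with h | h <;> simp [h]
  have hpverS := hpver g hg hgT
  have hφbdS : ∀ᵐ ω ∂(P[|S]), |φ ω| ≤ c₀ ∧ 0 ≤ p g ω ∧ p g ω ≤ 1 - ε ∧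
      ε ≤ 1 - p g ω ∧ |p g ω| ≤ c₀ + 1 := aux_ae_cond hφbd
  have hmemS : ∀ᵐ ω ∂(P[|S]), ω ∈ S := aux_ae_cond_mem hSm
  -- KEY: change of measure from the φ-weighted control group to the treated group
  have KEY : ∀ h : Ω → ℝ, Measurable[MeasurableSpace.comap X inferInstance] h →
      Integrable h (P.restrict S) →
      ∫ ω in Cs, φ ω * h ω ∂P = ∫ ω in A, h ω ∂P := by
    intro h hhmX hhS
    have hhμS : Integrable h (P[|S]) := aux_integrable_cond hPS hhS
    have ihG : Integrable (fun ω => h ω * G g ω) (P[|S]) :=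
      hmulbd _ _ _ 1 hhμS ((hGmeas g).aestronglyMeasurable)
        (Filter.Eventually.of_forall hG1)
    have ihp : Integrable (fun ω => h ω * p g ω) (P[|S]) :=
      hmulbd _ _ _ (c₀ + 1) hhμS hpm.aestronglyMeasurable
        (hφbdS.mono fun ω hω => hω.2.2.2.2)
    have ihφ : Integrable (fun ω => φ ω * h ω) (P[|S]) :=
      hhμS.bdd_mul hφmeas.aestronglyMeasurable
        (hφbdS.mono fun ω hω => by simpa [Real.norm_eq_abs] using hω.1)
    have ihφG : Integrable (fun ω => φ ω * h ω * G g ω) (P[|S]) :=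
      hmulbd _ _ _ 1 ihφ ((hGmeas g).aestronglyMeasurable)
        (Filter.Eventually.of_forall hG1)
    have ihφp : Integrable (fun ω => φ ω * h ω * p g ω) (P[|S]) :=
      hmulbd _ _ _ (c₀ + 1) ihφ hpm.aestronglyMeasurable
        (hφbdS.mono fun ω hω => hω.2.2.2.2)
    have iG : Integrable (G g) (P[|S]) :=
      (integrable_const (1 : ℝ)).mono' ((hGmeas g).aestronglyMeasurable)
        (Filter.Eventually.of_forall fun ω => by
          simpa [Real.norm_eq_abs] using hG1 ω)
    have pull : ∀ ψ : Ω → ℝ, Measurable[MeasurableSpace.comap X inferInstance] ψ →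
        Integrable (fun ω => ψ ω * G g ω) (P[|S]) →
        ∫ ω, ψ ω * G g ω ∂(P[|S]) = ∫ ω, ψ ω * p g ω ∂(P[|S]) := by
      intro ψ hψ hint
      rw [aux_pullout hle _ ψ (G g) hψ.stronglyMeasurable hint iG]
      exact integral_congr_ae (hpverS.mono fun ω hω =>
        congrArg (fun z => ψ ω * z) hω.symm)
    calc ∫ ω in Cs, φ ω * h ω ∂P
        = ∫ ω in S, C ω * (φ ω * h ω) ∂P := by
          rw [← integral_indicator hCsm, ← integral_indicator hSm]
          congr 1; funext ω
          by_cases hc : ω ∈ Cs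
          · have h1 : C ω = 1 := hc
            rw [Set.indicator_of_mem hc, Set.indicator_of_mem (hCS hc), h1, one_mul]
          · have h0 : C ω = 0 := by
              rcases hC01 ω with h' | h'
              · exact h'
              · exact absurd h' hc
            rw [Set.indicator_of_notMem hc]
            by_cases hs' : ω ∈ S
            · rw [Set.indicator_of_mem hs', h0, zero_mul]
            · rw [Set.indicator_of_notMem hs']
      _ = (P S).toReal * ∫ ω, C ω * (φ ω * h ω) ∂(P[|S]) := e3 S _
      _ = (P S).toReal * ∫ ω, (φ ω * h ω - φ ω * h ω * G g ω) ∂(P[|S]) := by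
          congr 1
          refine integral_congr_ae (hmemS.mono fun ω hω => ?_)
          have hC' : C ω = 1 - G g ω := by
            have h' : G g ω + C ω = 1 := hω
            linarith
          show C ω * (φ ω * h ω) = φ ω * h ω - φ ω * h ω * G g ω
          rw [hC']; ring
      _ = (P S).toReal *
          (∫ ω, φ ω * h ω ∂(P[|S]) - ∫ ω, φ ω * h ω * G g ω ∂(P[|S])) := by
          rw [integral_sub ihφ ihφG]
      _ = (P S).toReal *
          (∫ ω, φ ω * h ω ∂(P[|S]) - ∫ ω, φ ω * h ω * p g ω ∂(P[|S])) := by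
          rw [pull (fun ω => φ ω * h ω) (hφmX.mul hhmX) ihφG]
      _ = (P S).toReal * ∫ ω, (φ ω * h ω - φ ω * h ω * p g ω) ∂(P[|S]) := by
          rw [integral_sub ihφ ihφp]
      _ = (P S).toReal * ∫ ω, h ω * p g ω ∂(P[|S]) := by
          congr 1
          refine integral_congr_ae (hφbdS.mono fun ω hω => ?_)
          obtain ⟨-, -, -, hεle, -⟩ := hω
          have hne : (1 : ℝ) - p g ω ≠ 0 := by linarith
          show φ ω * h ω - φ ω * h ω * p g ω = h ω * p g ω
          rw [hφdef]
          field_simp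
      _ = (P S).toReal * ∫ ω, h ω * G g ω ∂(P[|S]) := by
          rw [pull h hhmX ihG]
      _ = ∫ ω in S, h ω * G g ω ∂P := (e3 S _).symm
      _ = ∫ ω in A, h ω ∂P := by
          rw [← integral_indicator hSm, ← integral_indicator hAm]
          congr 1; funext ω
          by_cases ha : ω ∈ A
          · have h1 : G g ω = 1 := ha
            rw [Set.indicator_of_mem (hAS ha), Set.indicator_of_mem ha, h1, mul_one]
          · have h0 : G g ω = 0 := by
              rcases hG01 g ω with h' | h'
              · exact h'
              · exact absurd h' ha
            rw [Set.indicator_of_notMem ha]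
            by_cases hs' : ω ∈ S
            · rw [Set.indicator_of_mem hs', h0, mul_zero]
            · rw [Set.indicator_of_notMem hs']
  -- integrability of φ times an integrable function
  have hφY : ∀ f : Ω → ℝ, Integrable f P → Integrable (fun ω => φ ω * f ω) P :=
    fun f hf => hf.bdd_mul hφmeas.aestronglyMeasurable
      (hφbd.mono fun ω hω => by simpa [Real.norm_eq_abs] using hω.1)
  have hφbdC : ∀ᵐ ω ∂(P[|Cs]), ‖φ ω‖ ≤ c₀ :=
    (aux_ae_cond (E := Cs) hφbd).mono fun ω hω => by
      simpa [Real.norm_eq_abs] using hω.1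
  -- one-step identification
  have STEP : ∀ s, g ≤ s → s ≤ T →
      ∫ ω in Cs, φ ω * (Y0 s ω - Y0 (s - 1) ω) ∂P
        = (P A).toReal * ∫ ω, (Y0 s ω - Y0 (s - 1) ω) ∂(P[|A]) := by
    intro s hgs hsT
    obtain ⟨m, hmmeas, hmA, hmC⟩ := hCPT g s hg hgs hsT
    set Δ : Ω → ℝ := fun ω => Y0 s ω - Y0 (s - 1) ω with hΔdef
    have hΔP : Integrable Δ P := (hY0int s).sub (hY0int (s - 1))
    have hΔA : Integrable Δ (P[|A]) := aux_integrable_cond hPA hΔP.restrict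
    have hΔC : Integrable Δ (P[|Cs]) := aux_integrable_cond hPCs hΔP.restrict
    have hmXmeas : Measurable[MeasurableSpace.comap X inferInstance]
        (fun ω => m (X ω)) := hmmeas.comp hXmX
    have hmA_int : Integrable (fun ω => m (X ω)) (P[|A]) :=
      integrable_condExp.congr hmA.symm
    have hmC_int : Integrable (fun ω => m (X ω)) (P[|Cs]) :=
      integrable_condExp.congr hmC.symm
    have hmS_int : Integrable (fun ω => m (X ω)) (P.restrict S) := by
      rw [hSAC, Measure.restrict_union hdisj hCsm]
      exact integrable_add_measure.2
        ⟨aux_integrable_restrict hPA hmA_int, aux_integrable_restrict hPCs hmC_int⟩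
    calc ∫ ω in Cs, φ ω * Δ ω ∂P
        = (P Cs).toReal * ∫ ω, φ ω * Δ ω ∂(P[|Cs]) := e3 Cs _
      _ = (P Cs).toReal *
          ∫ ω, φ ω * ((P[|Cs])[Δ|MeasurableSpace.comap X inferInstance]) ω ∂(P[|Cs]) := by
          congr 1
          exact aux_pullout hle _ φ Δ hφmX.stronglyMeasurable
            (hΔC.bdd_mul hφmeas.aestronglyMeasurable hφbdC) hΔC
      _ = (P Cs).toReal * ∫ ω, φ ω * m (X ω) ∂(P[|Cs]) := by
          congr 1
          exact integral_congr_ae (hmC.mono fun ω hω =>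
            congrArg (fun z => φ ω * z) hω.symm)
      _ = ∫ ω in Cs, φ ω * m (X ω) ∂P := (e3 Cs _).symm
      _ = ∫ ω in A, m (X ω) ∂P := KEY _ hmXmeas hmS_int
      _ = (P A).toReal * ∫ ω, m (X ω) ∂(P[|A]) := e3 A _
      _ = (P A).toReal *
          ∫ ω, ((P[|A])[Δ|MeasurableSpace.comap X inferInstance]) ω ∂(P[|A]) := by
          congr 1
          exact integral_congr_ae hmA
      _ = (P A).toReal * ∫ ω, Δ ω ∂(P[|A]) := by
          congr 1
          exact integral_condExp hle
  -- telescoping induction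
  have IND : ∀ s, g - 1 ≤ s → s ≤ t →
      ∫ ω in Cs, φ ω * (Y0 s ω - Y0 (g - 1) ω) ∂P
        = (P A).toReal * ∫ ω, (Y0 s ω - Y0 (g - 1) ω) ∂(P[|A]) := by
    intro s hs1 hs2
    induction s, hs1 using Nat.le_induction with
    | base => simp
    | succ n hn ih =>
      have hnt : n ≤ t := by omega
      have hstep := STEP (n + 1) (by omega) (by omega)
      rw [Nat.add_sub_cancel] at hstep
      have i1 : Integrable (fun ω => φ ω * (Y0 (n + 1) ω - Y0 n ω)) P :=
        hφY _ ((hY0int _).sub (hY0int _))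
      have i2 : Integrable (fun ω => φ ω * (Y0 n ω - Y0 (g - 1) ω)) P :=
        hφY _ ((hY0int _).sub (hY0int _))
      have j1 : Integrable (fun ω => Y0 (n + 1) ω - Y0 n ω) (P[|A]) :=
        aux_integrable_cond hPA ((hY0int _).sub (hY0int _)).restrict
      have j2 : Integrable (fun ω => Y0 n ω - Y0 (g - 1) ω) (P[|A]) :=
        aux_integrable_cond hPA ((hY0int _).sub (hY0int _)).restrict
      calc ∫ ω in Cs, φ ω * (Y0 (n + 1) ω - Y0 (g - 1) ω) ∂P
          = ∫ ω in Cs, (φ ω * (Y0 (n + 1) ω - Y0 n ω)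
              + φ ω * (Y0 n ω - Y0 (g - 1) ω)) ∂P := by
            refine integral_congr_ae (Filter.Eventually.of_forall fun ω => ?_)
            show φ ω * (Y0 (n + 1) ω - Y0 (g - 1) ω) = _
            ring
        _ = ∫ ω in Cs, φ ω * (Y0 (n + 1) ω - Y0 n ω) ∂P
              + ∫ ω in Cs, φ ω * (Y0 n ω - Y0 (g - 1) ω) ∂P :=
            integral_add i1.restrict i2.restrict
        _ = (P A).toReal * ∫ ω, (Y0 (n + 1) ω - Y0 n ω) ∂(P[|A])
              + (P A).toReal * ∫ ω, (Y0 n ω - Y0 (g - 1) ω) ∂(P[|A]) := by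
            rw [hstep, ih hnt]
        _ = (P A).toReal * ∫ ω, (Y0 (n + 1) ω - Y0 (g - 1) ω) ∂(P[|A]) := by
            rw [← mul_add, ← integral_add j1 j2]
            congr 1
            refine integral_congr_ae (Filter.Eventually.of_forall fun ω => ?_)
            show Y0 (n + 1) ω - Y0 n ω + (Y0 n ω - Y0 (g - 1) ω) = _
            ring
  -- both normalizing constants equal (P A).toReal
  have hD1 : (∫ ω', G g ω' ∂P) = (P A).toReal := by
    have hpt : ∀ ω, G g ω = Set.indicator A (fun _ => (1 : ℝ)) ω := by
      intro ω
      by_cases ha : ω ∈ A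
      · rw [Set.indicator_of_mem ha]; exact ha
      · rw [Set.indicator_of_notMem ha]
        rcases hG01 g ω with h' | h'
        · exact h'
        · exact absurd h' ha
    rw [integral_congr_ae (Filter.Eventually.of_forall hpt), integral_indicator hAm]
    simp
    rfl
  have hD2 : (∫ ω', p g ω' * C ω' / (1 - p g ω') ∂P) = (P A).toReal := by
    have hpt : ∀ ω, p g ω * C ω / (1 - p g ω)
        = Set.indicator Cs (fun ω' => φ ω' * (1 : ℝ)) ω := by
      intro ω
      by_cases hc : ω ∈ Cs
      · have h1 : C ω = 1 := hc
        rw [Set.indicator_of_mem hc, h1]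
        show p g ω * 1 / (1 - p g ω) = φ ω * 1
        rw [mul_one, mul_one]
      · have h0 : C ω = 0 := by
          rcases hC01 ω with h' | h'
          · exact h'
          · exact absurd h' hc
        rw [Set.indicator_of_notMem hc, h0, mul_zero, zero_div]
    have hone : ∫ ω in Cs, φ ω * (1 : ℝ) ∂P = ∫ ω in A, (1 : ℝ) ∂P :=
      KEY (fun _ => (1 : ℝ)) measurable_const (integrable_const _)
    rw [integral_congr_ae (Filter.Eventually.of_forall hpt), integral_indicator hCsm,
      hone]
    simp
    rfl
  -- pointwise rewriting of the estimand's integrand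
  have hpoint : ∀ ω,
      (G g ω / (P A).toReal - p g ω * C ω / (1 - p g ω) / (P A).toReal)
          * (Y t ω - Y (g - 1) ω)
        = G g ω * (Y1 t ω - Y0 (g - 1) ω) / (P A).toReal
          - φ ω * C ω * (Y0 t ω - Y0 (g - 1) ω) / (P A).toReal := by
    intro ω
    have hφω : φ ω = p g ω / (1 - p g ω) := rfl
    rcases hG01 g ω with hG0 | hG1'
    · rcases hC01 ω with hC0 | hC1'
      · rw [hG0, hC0, hφω]; ring
      · rw [hG0, hC1', hY_C t htT ω hC1', hY_C (g - 1) (by omega) ω hC1', hφω]; ring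
    · rw [hG1', (hexcl ω hG1').1, hYt_A ω hG1', hYg1_A ω hG1', hφω]; ring
  -- integrability of the two pieces
  have if1 : Integrable (fun ω => G g ω * (Y1 t ω - Y0 (g - 1) ω) / (P A).toReal) P :=
    (((hY1int t).sub (hY0int (g - 1))).bdd_mul (hGmeas g).aestronglyMeasurable
      (Filter.Eventually.of_forall fun ω => by
        simpa [Real.norm_eq_abs] using hG1 ω)).div_const _
  have if2 : Integrable
      (fun ω => φ ω * C ω * (Y0 t ω - Y0 (g - 1) ω) / (P A).toReal) P := by
    have hb : ∀ᵐ ω ∂P, ‖φ ω * C ω‖ ≤ c₀ := by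
      filter_upwards [hφbd] with ω hω
      have h1 : |φ ω * C ω| ≤ c₀ * 1 := by
        rw [abs_mul]
        exact mul_le_mul hω.1 (hCbd ω) (abs_nonneg _) (le_trans (abs_nonneg _) hω.1)
      rw [Real.norm_eq_abs]
      linarith
    exact (((hY0int t).sub (hY0int (g - 1))).bdd_mul
      (hφmeas.mul hCmeas).aestronglyMeasurable hb).div_const _
  -- indicator switches
  have hswitchA : ∫ ω, G g ω * (Y1 t ω - Y0 (g - 1) ω) ∂P
      = ∫ ω in A, (Y1 t ω - Y0 (g - 1) ω) ∂P := by
    rw [← integral_indicator hAm]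
    refine integral_congr_ae (Filter.Eventually.of_forall fun ω => ?_)
    show G g ω * (Y1 t ω - Y0 (g - 1) ω) = _
    by_cases ha : ω ∈ A
    · have h1 : G g ω = 1 := ha
      rw [Set.indicator_of_mem ha, h1, one_mul]
    · have h0 : G g ω = 0 := by
        rcases hG01 g ω with h' | h'
        · exact h'
        · exact absurd h' ha
      rw [Set.indicator_of_notMem ha, h0, zero_mul]
  have hswitchC : ∫ ω, φ ω * C ω * (Y0 t ω - Y0 (g - 1) ω) ∂P
      = ∫ ω in Cs, φ ω * (Y0 t ω - Y0 (g - 1) ω) ∂P := by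
    rw [← integral_indicator hCsm]
    refine integral_congr_ae (Filter.Eventually.of_forall fun ω => ?_)
    show φ ω * C ω * (Y0 t ω - Y0 (g - 1) ω) = _
    by_cases hc : ω ∈ Cs
    · have h1 : C ω = 1 := hc
      rw [Set.indicator_of_mem hc, h1, mul_one]
    · have h0 : C ω = 0 := by
        rcases hC01 ω with h' | h'
        · exact h'
        · exact absurd h' hc
      rw [Set.indicator_of_notMem hc, h0, mul_zero, zero_mul]
  have hINDt := IND t (by omega) le_rfl
  have hf1A : Integrable (fun ω => Y1 t ω - Y0 (g - 1) ω) (P[|A]) :=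
    aux_integrable_cond hPA ((hY1int t).sub (hY0int (g - 1))).restrict
  have hf0A : Integrable (fun ω => Y0 t ω - Y0 (g - 1) ω) (P[|A]) :=
    aux_integrable_cond hPA ((hY0int t).sub (hY0int (g - 1))).restrict
  have hmain : ∫ ω,
      (G g ω / (P A).toReal - p g ω * C ω / (1 - p g ω) / (P A).toReal)
        * (Y t ω - Y (g - 1) ω) ∂P = ∫ ω, (Y1 t ω - Y0 t ω) ∂(P[|A]) := by
    calc ∫ ω, (G g ω / (P A).toReal - p g ω * C ω / (1 - p g ω) / (P A).toReal)
          * (Y t ω - Y (g - 1) ω) ∂P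
        = ∫ ω, (G g ω * (Y1 t ω - Y0 (g - 1) ω) / (P A).toReal
            - φ ω * C ω * (Y0 t ω - Y0 (g - 1) ω) / (P A).toReal) ∂P :=
          integral_congr_ae (Filter.Eventually.of_forall hpoint)
      _ = ∫ ω, G g ω * (Y1 t ω - Y0 (g - 1) ω) / (P A).toReal ∂P
            - ∫ ω, φ ω * C ω * (Y0 t ω - Y0 (g - 1) ω) / (P A).toReal ∂P :=
          integral_sub if1 if2
      _ = (∫ ω, G g ω * (Y1 t ω - Y0 (g - 1) ω) ∂P) / (P A).toReal
            - (∫ ω, φ ω * C ω * (Y0 t ω - Y0 (g - 1) ω) ∂P) / (P A).toReal := by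
          rw [integral_div, integral_div]
      _ = ((P A).toReal * ∫ ω, (Y1 t ω - Y0 (g - 1) ω) ∂(P[|A])) / (P A).toReal
            - ((P A).toReal * ∫ ω, (Y0 t ω - Y0 (g - 1) ω) ∂(P[|A])) / (P A).toReal := by
          rw [hswitchA, hswitchC, hINDt, e3 A _]
      _ = ∫ ω, (Y1 t ω - Y0 (g - 1) ω) ∂(P[|A])
            - ∫ ω, (Y0 t ω - Y0 (g - 1) ω) ∂(P[|A]) := by
          rw [mul_div_cancel_left₀ _ hPAr.ne', mul_div_cancel_left₀ _ hPAr.ne']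
      _ = ∫ ω, (Y1 t ω - Y0 (g - 1) ω - (Y0 t ω - Y0 (g - 1) ω)) ∂(P[|A]) :=
          (integral_sub hf1A hf0A).symm
      _ = ∫ ω, (Y1 t ω - Y0 t ω) ∂(P[|A]) :=
          integral_congr_ae (Filter.Eventually.of_forall fun ω => by
            show Y1 t ω - Y0 (g - 1) ω - (Y0 t ω - Y0 (g - 1) ω) = _
            ring)
  rw [hD1, hD2]
  exact hmain.symm
end

section
/- If the unconditional parallel trends assumption holds for group g in all periods s with g ≤ s ≤ t (that is, E[Y_s(0) − Y_{s−1}(0) | G_g = 1] = E[Y_s(0) − Y_{s−1}(0) | C = 1] for every such s), and P(G_g = 1) > 0, P(C = 1) > 0, then for 2 ≤ g ≤ t ≤ T the group-time average treatment effect satisfies ATT(g,t) = E[Y_t − Y_{g−1} | G_g = 1] − E[Y_t − Y_{g−1} | C = 1]. -/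
open MeasureTheory ProbabilityTheory
open scoped Classical

/-- Callaway & Sant'Anna, unconditional DID identification.
If the unconditional parallel trends assumption holds for group `g` in all periods
`s` with `g ≤ s ≤ t`, and `P(G_g = 1) > 0`, `P(C = 1) > 0`, then for `2 ≤ g ≤ t ≤ T`
the group-time average treatment effect satisfies
`ATT(g,t) = E[Y_t − Y_{g−1} | G_g = 1] − E[Y_t − Y_{g−1} | C = 1]`. -/
theorem att_identification_unconditional
    {Ω : Type*} [MeasurableSpace Ω] (P : Measure Ω) [IsProbabilityMeasure P]
    (T : ℕ) (hT : 2 ≤ T)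
    -- potential outcomes, observed outcomes, group indicators, control indicator
    (Y0 Y1 Y : ℕ → Ω → ℝ) (G : ℕ → Ω → ℝ) (C : Ω → ℝ)
    -- measurability and integrability
    (hY0meas : ∀ t, Measurable (Y0 t)) (hY1meas : ∀ t, Measurable (Y1 t))
    (hY0int : ∀ t, Integrable (Y0 t) P) (hY1int : ∀ t, Integrable (Y1 t) P)
    (hGmeas : ∀ g, Measurable (G g)) (hCmeas : Measurable C)
    -- indicator structure: the `G g`'s and `C` are {0,1}-valued and exactly one is one
    (hG01 : ∀ g ω, G g ω = 0 ∨ G g ω = 1)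
    (hC01 : ∀ ω, C ω = 0 ∨ C ω = 1)
    (hsum : ∀ ω, (∑ g ∈ Finset.Icc 2 T, G g ω) + C ω = 1)
    -- observed outcomes
    (hobs : ∀ s ω, Y s ω =
      if ∃ g', 2 ≤ g' ∧ g' ≤ s ∧ G g' ω = 1 then Y1 s ω else Y0 s ω)
    -- the pair (g, t) under consideration
    (g t : ℕ) (hg : 2 ≤ g) (hgt : g ≤ t) (htT : t ≤ T)
    -- positive probability of group g and of the control group
    (hPg : 0 < P {ω | G g ω = 1}) (hPC : 0 < P {ω | C ω = 1})
    -- unconditional parallel trends for group g in all periods g ≤ s ≤ t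
    (hPT : ∀ s, g ≤ s → s ≤ t →
      ∫ ω, (Y0 s ω - Y0 (s - 1) ω) ∂(P[|{ω | G g ω = 1}]) =
      ∫ ω, (Y0 s ω - Y0 (s - 1) ω) ∂(P[|{ω | C ω = 1}])) :
    -- conclusion: ATT(g,t) equals the difference-in-differences of observed outcomes
    ∫ ω, (Y1 t ω - Y0 t ω) ∂(P[|{ω | G g ω = 1}]) =
      (∫ ω, (Y t ω - Y (g - 1) ω) ∂(P[|{ω | G g ω = 1}])) -
      (∫ ω, (Y t ω - Y (g - 1) ω) ∂(P[|{ω | C ω = 1}])) := by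

  classical
  set Sg : Set Ω := {ω | G g ω = 1} with hSg
  set Sc : Set Ω := {ω | C ω = 1} with hSc
  have hSgm : MeasurableSet Sg := (hGmeas g) (measurableSet_singleton 1)
  have hScm : MeasurableSet Sc := hCmeas (measurableSet_singleton 1)
  set mg := P[|Sg] with hmg
  set mc := P[|Sc] with hmc
  -- integrability under conditional measures
  have hcond_int : ∀ (A : Set Ω), 0 < P A → ∀ (f : Ω → ℝ), Integrable f P → Integrable f (P[|A]) := by
    intro A hA f hf
    rw [ProbabilityTheory.cond]
    exact (hf.restrict).smul_measure (ENNReal.inv_ne_top.mpr hA.ne')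
  have hGnonneg : ∀ g' ω, 0 ≤ G g' ω := fun g' ω => by
    rcases hG01 g' ω with h | h <;> simp [h]
  have hCnonneg : ∀ ω, 0 ≤ C ω := fun ω => by
    rcases hC01 ω with h | h <;> simp [h]
  -- pointwise facts
  have hno_two : ∀ ω g1 g2, g1 ≠ g2 → g1 ∈ Finset.Icc 2 T → g2 ∈ Finset.Icc 2 T →
      G g1 ω = 1 → G g2 ω = 1 → False := by
    intro ω g1 g2 hne h1 h2 hg1 hg2
    have hsub : ({g1, g2} : Finset ℕ) ⊆ Finset.Icc 2 T := by
      intro x hx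
      simp only [Finset.mem_insert, Finset.mem_singleton] at hx
      rcases hx with rfl | rfl <;> assumption
    have hle : (∑ g' ∈ ({g1, g2} : Finset ℕ), G g' ω) ≤ ∑ g' ∈ Finset.Icc 2 T, G g' ω :=
      Finset.sum_le_sum_of_subset_of_nonneg hsub (fun i _ _ => hGnonneg i ω)
    rw [Finset.sum_pair hne, hg1, hg2] at hle
    have := hsum ω
    have := hCnonneg ω
    linarith
  have hYc : ∀ s, s ≤ T → ∀ ω, ω ∈ Sc → Y s ω = Y0 s ω := by
    intro s hsT ω hω
    rw [hobs]
    rw [if_neg]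
    rintro ⟨g', hg'2, hg's, hG'⟩
    have hCω : C ω = 1 := hω
    have hsum' := hsum ω
    have hle : G g' ω ≤ ∑ g'' ∈ Finset.Icc 2 T, G g'' ω := by
      apply Finset.single_le_sum (fun i _ => hGnonneg i ω)
      simp only [Finset.mem_Icc]
      exact ⟨hg'2, le_trans hg's hsT⟩
    rw [hG'] at hle
    linarith
  have hYgt : ∀ ω, ω ∈ Sg → Y t ω = Y1 t ω := by
    intro ω hω
    rw [hobs, if_pos ⟨g, hg, hgt, hω⟩]
  have hYgm : ∀ ω, ω ∈ Sg → Y (g - 1) ω = Y0 (g - 1) ω := by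
    intro ω hω
    rw [hobs, if_neg]
    rintro ⟨g', hg'2, hg's, hG'⟩
    have hne : g' ≠ g := by
      intro h; subst h; omega
    refine hno_two ω g' g hne ?_ ?_ hG' hω
    · simp only [Finset.mem_Icc]; omega
    · simp only [Finset.mem_Icc]; omega
  -- a.e. congruence under conditional measures
  have hcongr : ∀ (A : Set Ω), MeasurableSet A → ∀ (f h : Ω → ℝ),
      (∀ ω ∈ A, f ω = h ω) → ∫ ω, f ω ∂(P[|A]) = ∫ ω, h ω ∂(P[|A]) := by
    intro A hA f h hfh
    apply integral_congr_ae
    rw [ProbabilityTheory.cond]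
    exact Measure.ae_smul_measure ((ae_restrict_iff' hA).mpr (ae_of_all _ hfh)) _
  -- rewrite observed integrals
  have e1 : ∫ ω, (Y t ω - Y (g - 1) ω) ∂mg = ∫ ω, (Y1 t ω - Y0 (g - 1) ω) ∂mg :=
    hcongr Sg hSgm _ _ (fun ω hω => by rw [hYgt ω hω, hYgm ω hω])
  have e2 : ∫ ω, (Y t ω - Y (g - 1) ω) ∂mc = ∫ ω, (Y0 t ω - Y0 (g - 1) ω) ∂mc :=
    hcongr Sc hScm _ _ (fun ω hω => by rw [hYc t htT ω hω, hYc (g - 1) (by omega) ω hω])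
  -- telescoping parallel trends
  have tele : ∀ u, g ≤ u → u ≤ t →
      ∫ ω, (Y0 u ω - Y0 (g - 1) ω) ∂mg = ∫ ω, (Y0 u ω - Y0 (g - 1) ω) ∂mc := by
    intro u hgu
    induction u, hgu using Nat.le_induction with
    | base => intro hut; exact hPT g le_rfl hgt
    | succ u hgu ih =>
      intro hut
      have ih' := ih (by omega)
      have hPT' := hPT (u + 1) (by omega) hut
      simp only [Nat.add_sub_cancel] at hPT'
      have key : ∀ (m : Measure Ω), Integrable (Y0 (u+1)) m → Integrable (Y0 u) m →
          Integrable (Y0 (g-1)) m →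
          ∫ ω, (Y0 (u+1) ω - Y0 (g-1) ω) ∂m =
          (∫ ω, (Y0 (u+1) ω - Y0 u ω) ∂m) + ∫ ω, (Y0 u ω - Y0 (g-1) ω) ∂m := by
        intro m h1 h2 h3
        have heq : (fun ω => Y0 (u+1) ω - Y0 (g-1) ω)
            = fun ω => (Y0 (u+1) ω - Y0 u ω) + (Y0 u ω - Y0 (g-1) ω) := by
          funext ω; ring
        calc ∫ ω, (Y0 (u+1) ω - Y0 (g-1) ω) ∂m
            = ∫ ω, ((Y0 (u+1) ω - Y0 u ω) + (Y0 u ω - Y0 (g-1) ω)) ∂m := by rw [heq]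
          _ = _ := integral_add (h1.sub h2) (h2.sub h3)
      rw [key mg (hcond_int _ hPg _ (hY0int _)) (hcond_int _ hPg _ (hY0int _)) (hcond_int _ hPg _ (hY0int _)),
          key mc (hcond_int _ hPC _ (hY0int _)) (hcond_int _ hPC _ (hY0int _)) (hcond_int _ hPC _ (hY0int _)),
          hPT', ih']
  have tele' := tele t hgt le_rfl
  -- finish by splitting integrals
  rw [e1, e2, ← tele']
  have i1 : Integrable (Y1 t) mg := hcond_int _ hPg _ (hY1int t)
  have i2 : Integrable (Y0 t) mg := hcond_int _ hPg _ (hY0int t)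
  have i3 : Integrable (Y0 (g-1)) mg := hcond_int _ hPg _ (hY0int (g-1))
  rw [integral_sub i1 i2, integral_sub i1 i3, integral_sub i2 i3]
  ring
end

section
/- If the unconditional parallel trends assumption holds for group g in all periods s with g ≤ s ≤ t (that is, E[Y_s(0) − Y_{s−1}(0) | G_g = 1] = E[Y_s(0) − Y_{s−1}(0) | C = 1] for every such s), and P(G_g = 1) > 0, P(C = 1) > 0, then for 2 ≤ g ≤ t ≤ T the unobserved counterfactual mean is identified by the recursion: E[Y_t(0) | G_g = 1] = E[Y_t − Y_{g−1} | C = 1] + E[Y_{g−1} | G_g = 1]. -/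
open MeasureTheory ProbabilityTheory
open scoped Classical

lemma cond_integral_congr' {Ω : Type*} [MeasurableSpace Ω] (P : Measure Ω)
    {s : Set Ω} (hs : MeasurableSet s) {f h : Ω → ℝ}
    (hfh : ∀ ω ∈ s, f ω = h ω) :
    ∫ ω, f ω ∂(P[|s]) = ∫ ω, h ω ∂(P[|s]) := by
  rw [ProbabilityTheory.cond, integral_smul_measure, integral_smul_measure,
    setIntegral_congr_fun hs hfh]

lemma cond_integrable' {Ω : Type*} [MeasurableSpace Ω] (P : Measure Ω)
    {s : Set Ω} (hP : 0 < P s) {f : Ω → ℝ} (hf : Integrable f P) :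
    Integrable f (P[|s]) := by
  rw [ProbabilityTheory.cond]
  exact (hf.restrict).smul_measure (ENNReal.inv_ne_top.mpr hP.ne')

/-- Callaway & Sant'Anna, identification of the counterfactual mean.
If the unconditional parallel trends assumption holds for group `g` in all periods
`s` with `g ≤ s ≤ t`, and `P(G_g = 1) > 0`, `P(C = 1) > 0`, then for `2 ≤ g ≤ t ≤ T`
the unobserved counterfactual mean is identified by the recursion
`E[Y_t(0) | G_g = 1] = E[Y_t − Y_{g−1} | C = 1] + E[Y_{g−1} | G_g = 1]`. -/
theorem counterfactual_mean_identification
    {Ω : Type*} [MeasurableSpace Ω] (P : Measure Ω) [IsProbabilityMeasure P]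
    (T : ℕ) (hT : 2 ≤ T)
    -- potential outcomes, observed outcomes, group indicators, control indicator
    (Y0 Y1 Y : ℕ → Ω → ℝ) (G : ℕ → Ω → ℝ) (C : Ω → ℝ)
    -- measurability and integrability
    (hY0meas : ∀ t, Measurable (Y0 t)) (hY1meas : ∀ t, Measurable (Y1 t))
    (hY0int : ∀ t, Integrable (Y0 t) P) (hY1int : ∀ t, Integrable (Y1 t) P)
    (hGmeas : ∀ g, Measurable (G g)) (hCmeas : Measurable C)
    -- indicator structure: the `G g`'s and `C` are {0,1}-valued and exactly one is one
    (hG01 : ∀ g ω, G g ω = 0 ∨ G g ω = 1)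
    (hC01 : ∀ ω, C ω = 0 ∨ C ω = 1)
    (hsum : ∀ ω, (∑ g ∈ Finset.Icc 2 T, G g ω) + C ω = 1)
    -- observed outcomes
    (hobs : ∀ s ω, Y s ω =
      if ∃ g', 2 ≤ g' ∧ g' ≤ s ∧ G g' ω = 1 then Y1 s ω else Y0 s ω)
    -- the pair (g, t) under consideration
    (g t : ℕ) (hg : 2 ≤ g) (hgt : g ≤ t) (htT : t ≤ T)
    -- positive probability of group g and of the control group
    (hPg : 0 < P {ω | G g ω = 1}) (hPC : 0 < P {ω | C ω = 1})
    -- unconditional parallel trends for group g in all periods g ≤ s ≤ t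
    (hPT : ∀ s, g ≤ s → s ≤ t →
      ∫ ω, (Y0 s ω - Y0 (s - 1) ω) ∂(P[|{ω | G g ω = 1}]) =
      ∫ ω, (Y0 s ω - Y0 (s - 1) ω) ∂(P[|{ω | C ω = 1}])) :
    -- conclusion: the counterfactual untreated mean for group g at time t is identified
    ∫ ω, Y0 t ω ∂(P[|{ω | G g ω = 1}]) =
      (∫ ω, (Y t ω - Y (g - 1) ω) ∂(P[|{ω | C ω = 1}])) +
      ∫ ω, Y (g - 1) ω ∂(P[|{ω | G g ω = 1}]) := by
  have hGnn : ∀ g' ω, (0:ℝ) ≤ G g' ω := fun g' ω => by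
    rcases hG01 g' ω with h | h <;> simp [h]
  have hCnn : ∀ ω, (0:ℝ) ≤ C ω := fun ω => by
    rcases hC01 ω with h | h <;> simp [h]
  have hsG : MeasurableSet {ω | G g ω = 1} := (hGmeas g) (measurableSet_singleton 1)
  have hsC : MeasurableSet {ω | C ω = 1} := hCmeas (measurableSet_singleton 1)
  set μG := P[|{ω | G g ω = 1}] with hμG
  set μC := P[|{ω | C ω = 1}] with hμC
  have hintG : ∀ s, Integrable (Y0 s) μG := fun s => cond_integrable' P hPg (hY0int s)
  have hintC : ∀ s, Integrable (Y0 s) μC := fun s => cond_integrable' P hPC (hY0int s)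
  -- On the control group, observed = untreated for all periods up to T
  have hYC : ∀ s, s ≤ T → ∀ ω ∈ {ω | C ω = 1}, Y s ω = Y0 s ω := by
    intro s hsT ω hω
    rw [hobs, if_neg]
    rintro ⟨g', hg1, hg2, hg3⟩
    have hmem : g' ∈ Finset.Icc 2 T := Finset.mem_Icc.mpr ⟨hg1, hg2.trans hsT⟩
    have hsum0 : ∑ g'' ∈ Finset.Icc 2 T, G g'' ω = 0 := by
      have := hsum ω; simp only [Set.mem_setOf_eq] at hω; linarith
    have := (Finset.sum_eq_zero_iff_of_nonneg (fun i _ => hGnn i ω)).mp hsum0 g' hmem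
    linarith
  -- On group g, observed = untreated for all periods before g
  have hYG : ∀ s, s < g → ∀ ω ∈ {ω | G g ω = 1}, Y s ω = Y0 s ω := by
    intro s hs ω hω
    simp only [Set.mem_setOf_eq] at hω
    rw [hobs, if_neg]
    rintro ⟨g', hg1, hg2, hg3⟩
    have hne : g' ≠ g := by omega
    have hsub : ({g', g} : Finset ℕ) ⊆ Finset.Icc 2 T := by
      intro i hi
      simp only [Finset.mem_insert, Finset.mem_singleton] at hi
      rcases hi with rfl | rfl <;> exact Finset.mem_Icc.mpr ⟨by omega, by omega⟩
    have h2 : (2:ℝ) ≤ ∑ g'' ∈ Finset.Icc 2 T, G g'' ω := by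
      have hle := Finset.sum_le_sum_of_subset_of_nonneg hsub
        (fun i _ _ => hGnn i ω)
      rw [Finset.sum_pair hne, hg3, hω] at hle
      linarith
    have := hsum ω
    have := hCnn ω
    linarith
  -- Telescoping the parallel-trends assumption
  have key : ∀ s, g - 1 ≤ s → s ≤ t →
      ∫ ω, Y0 s ω ∂μG - ∫ ω, Y0 (g-1) ω ∂μG =
      ∫ ω, Y0 s ω ∂μC - ∫ ω, Y0 (g-1) ω ∂μC := by
    intro s hs
    induction s, hs using Nat.le_induction with
    | base => intro _; simp
    | succ n hn ih =>
      intro hn1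
      have hPTn := hPT (n+1) (by omega) hn1
      have hsimp : n + 1 - 1 = n := rfl
      rw [hsimp, integral_sub (hintG (n+1)) (hintG n),
        integral_sub (hintC (n+1)) (hintC n)] at hPTn
      have := ih (by omega)
      linarith
  have e1 : ∫ ω, (Y t ω - Y (g-1) ω) ∂μC = ∫ ω, (Y0 t ω - Y0 (g-1) ω) ∂μC :=
    cond_integral_congr' P hsC (fun ω hω => by
      rw [hYC t htT ω hω, hYC (g-1) (by omega) ω hω])
  have e2 : ∫ ω, (Y0 t ω - Y0 (g-1) ω) ∂μC =
      ∫ ω, Y0 t ω ∂μC - ∫ ω, Y0 (g-1) ω ∂μC :=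
    integral_sub (hintC t) (hintC (g-1))
  have e3 : ∫ ω, Y (g-1) ω ∂μG = ∫ ω, Y0 (g-1) ω ∂μG :=
    cond_integral_congr' P hsG (fun ω hω => hYG (g-1) (by omega) ω hω)
  have := key t (by omega) le_rfl
  rw [e1, e2, e3]
  linarith
end

section
/- Under overlap, for every bounded Borel function f: ℝ^k → ℝ, the inverse-probability weighting by the odds of the generalized propensity score balances the covariate distribution of the control group to that of group g: E[G_g f(X)] = E[(p_g(X) C / (1 − p_g(X))) f(X)]. -/
open MeasureTheory ProbabilityTheory

/-- covariate balancing by propensity-score odds weighting.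
Under overlap, for every bounded Borel function `f : ℝ^k → ℝ`,
`E[G_g f(X)] = E[(p_g(X) C / (1 − p_g(X))) f(X)]`. -/
theorem odds_weighting_balances_covariates
    {Ω : Type*} [MeasurableSpace Ω] (P : Measure Ω) [IsProbabilityMeasure P]
    (k : ℕ) (X : Ω → (Fin k → ℝ)) (hXmeas : Measurable X)
    (G C : Ω → ℝ) (hGmeas : Measurable G) (hCmeas : Measurable C)
    -- indicator structure
    (hG01 : ∀ ω, G ω = 0 ∨ G ω = 1) (hC01 : ∀ ω, C ω = 0 ∨ C ω = 1)
    (hGC : ∀ ω, G ω + C ω ≤ 1)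
    (hPg : 0 < P {ω | G ω = 1}) (hPC : 0 < P {ω | C ω = 1})
    -- the generalized propensity score: a σ(X)-measurable version of E[G | X, G + C = 1]
    (p : Ω → ℝ)
    (hpmeas : Measurable[MeasurableSpace.comap X inferInstance] p)
    (hpver : p =ᵐ[P[|{ω | G ω + C ω = 1}]]
      (P[|{ω | G ω + C ω = 1}])[G | MeasurableSpace.comap X inferInstance])
    -- overlap
    (ε : ℝ) (hε : 0 < ε)
    (hoverlap : ∀ᵐ ω ∂P, 0 ≤ p ω ∧ p ω ≤ 1 - ε)
    -- a bounded Borel function of the covariates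
    (f : (Fin k → ℝ) → ℝ) (hfmeas : Measurable f) (hfbdd : ∃ M, ∀ x, |f x| ≤ M) :
    ∫ ω, G ω * f (X ω) ∂P = ∫ ω, (p ω * C ω / (1 - p ω)) * f (X ω) ∂P := by
  obtain ⟨M, hM⟩ := hfbdd
  have hM0 : 0 ≤ M := le_trans (abs_nonneg _) (hM 0)
  set S : Set Ω := {ω | G ω + C ω = 1} with hS
  have hSmeas : MeasurableSet S := measurableSet_eq_fun (hGmeas.add hCmeas) measurable_const
  -- off S, G = 0 and C = 0
  have hGoff : ∀ ω, ω ∉ S → G ω = 0 := by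
    intro ω hω
    rcases hG01 ω with h | h
    · exact h
    · exfalso; apply hω
      rcases hC01 ω with hc | hc
      · show G ω + C ω = 1; rw [h, hc]; ring
      · have := hGC ω; rw [h, hc] at this; linarith
  have hCoff : ∀ ω, ω ∉ S → C ω = 0 := by
    intro ω hω
    rcases hC01 ω with h | h
    · exact h
    · exfalso; apply hω
      rcases hG01 ω with hg | hg
      · show G ω + C ω = 1; rw [h, hg]; ring
      · have := hGC ω; rw [h, hg] at this; linarith
  have hS0 : P S ≠ 0 := by
    intro h0
    have hsub : {ω | G ω = 1} ⊆ S := by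
      intro ω hω
      by_contra hns
      have := hGoff ω hns
      have h1 : G ω = 1 := hω
      rw [h1] at this; norm_num at this
    have : P {ω | G ω = 1} = 0 := le_antisymm (h0 ▸ measure_mono hsub) zero_le
    rw [this] at hPg; exact lt_irrefl _ hPg
  set Q := P[|S] with hQ
  haveI hQprob : IsProbabilityMeasure Q := cond_isProbabilityMeasure hS0
  have hQP : Q ≪ P := cond_absolutelyContinuous
  have hm : MeasurableSpace.comap X (inferInstance : MeasurableSpace (Fin k → ℝ)) ≤
      (inferInstance : MeasurableSpace Ω) := hXmeas.comap_le
  haveI : SigmaFinite (Q.trim hm) := by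
    have : IsFiniteMeasure (Q.trim hm) := isFiniteMeasure_trim hm
    infer_instance
  have hXm : Measurable[MeasurableSpace.comap X inferInstance] X := Measurable.of_comap_le le_rfl
  set fX : Ω → ℝ := fun ω => f (X ω) with hfX
  have hfXm : Measurable[MeasurableSpace.comap X inferInstance] fX := hfmeas.comp hXm
  have hfXmeas : Measurable fX := hfmeas.comp hXmeas
  have hpm0 : Measurable p := hpmeas.mono hm le_rfl
  -- bounds
  have hGb : ∀ ω, |G ω| ≤ 1 := by
    intro ω; rcases hG01 ω with h | h <;> rw [h] <;> norm_num
  have hpQ : ∀ᵐ ω ∂Q, 0 ≤ p ω ∧ p ω ≤ 1 - ε := hoverlap.filter_mono hQP.ae_le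
  have hmemQ : ∀ᵐ ω ∂Q, ω ∈ S := by
    rw [hQ, ProbabilityTheory.cond]
    exact Measure.ae_smul_measure (ae_restrict_mem hSmeas) _
  -- integrability helper
  have hint : ∀ (g : Ω → ℝ), AEStronglyMeasurable g Q → ∀ (c : ℝ),
      (∀ᵐ ω ∂Q, |g ω| ≤ c) → Integrable g Q := by
    intro g hg c hb
    exact ⟨hg, HasFiniteIntegral.of_bounded
      (hb.mono fun ω h => by simpa [Real.norm_eq_abs] using h)⟩
  have hGint : Integrable G Q := hint G hGmeas.aestronglyMeasurable 1 (Filter.Eventually.of_forall hGb)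
  -- Step A : ∫ fX * G dQ = ∫ fX * p dQ
  have hfXGint : Integrable (fX * G) Q := by
    refine hint _ (hfXmeas.mul hGmeas).aestronglyMeasurable M (Filter.Eventually.of_forall fun ω => ?_)
    calc |fX ω * G ω| = |fX ω| * |G ω| := abs_mul _ _
      _ ≤ M * 1 := mul_le_mul (hM _) (hGb ω) (abs_nonneg _) hM0
      _ = M := mul_one M
  have hA : ∫ ω, fX ω * G ω ∂Q = ∫ ω, fX ω * p ω ∂Q := by
    have h1 : Q[fX * G|MeasurableSpace.comap X inferInstance] =ᵐ[Q] fX * Q[G|MeasurableSpace.comap X inferInstance] :=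
      condExp_mul_of_stronglyMeasurable_left hfXm.stronglyMeasurable hfXGint hGint
    calc ∫ ω, fX ω * G ω ∂Q = ∫ ω, (fX * G) ω ∂Q := rfl
      _ = ∫ ω, (Q[fX * G|MeasurableSpace.comap X inferInstance]) ω ∂Q := (integral_condExp hm).symm
      _ = ∫ ω, fX ω * (Q[G|MeasurableSpace.comap X inferInstance]) ω ∂Q := integral_congr_ae (h1.mono fun ω h => by simpa using h)
      _ = ∫ ω, fX ω * p ω ∂Q :=
        integral_congr_ae (hpver.mono fun ω h => by dsimp only; rw [h])
  -- Step B : with w := p/(1-p) * fX, ∫ w * (1 - G) dQ = ∫ w * (1 - p) dQ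
  set w : Ω → ℝ := fun ω => p ω / (1 - p ω) * fX ω with hw
  have hwm : Measurable[MeasurableSpace.comap X inferInstance] w := (hpmeas.div (measurable_const.sub hpmeas)).mul hfXm
  have hwmeas : Measurable w := hwm.mono hm le_rfl
  have hwb : ∀ᵐ ω ∂Q, |w ω| ≤ (1 / ε) * M := by
    filter_upwards [hpQ] with ω ⟨h0, h1⟩
    have hεp : ε ≤ 1 - p ω := by linarith
    have hdiv : |p ω / (1 - p ω)| ≤ 1 / ε := by
      rw [abs_div, abs_of_nonneg h0, abs_of_nonneg (by linarith : (0:ℝ) ≤ 1 - p ω)]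
      apply div_le_div₀ (by norm_num) (by linarith) hε hεp
    calc |w ω| = |p ω / (1 - p ω)| * |fX ω| := abs_mul _ _
      _ ≤ (1 / ε) * M := mul_le_mul hdiv (hM _) (abs_nonneg _) (by positivity)
  have h1Gint : Integrable (fun ω => 1 - G ω) Q :=
    (integrable_const 1).sub hGint
  have hw1Gint : Integrable (w * fun ω => 1 - G ω) Q := by
    refine hint _ (hwmeas.mul (measurable_const.sub hGmeas)).aestronglyMeasurable
      ((1 / ε) * M * 2) ?_
    filter_upwards [hwb] with ω hωb
    calc |(w * fun ω => 1 - G ω) ω| = |w ω| * |1 - G ω| := abs_mul _ _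
      _ ≤ (1 / ε) * M * 2 := by
          refine mul_le_mul hωb ?_ (abs_nonneg _) (by positivity)
          have := hGb ω
          rcases hG01 ω with h | h <;> rw [h] <;> norm_num
  have hcond1G : Q[(fun ω => 1 - G ω)|MeasurableSpace.comap X inferInstance] =ᵐ[Q] fun ω => 1 - p ω := by
    have h1 : Q[(fun ω => (1:ℝ)) - G|MeasurableSpace.comap X inferInstance] =ᵐ[Q] Q[(fun ω => (1:ℝ))|MeasurableSpace.comap X inferInstance] - Q[G|MeasurableSpace.comap X inferInstance] :=
      condExp_sub (integrable_const 1) hGint _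
    have h2 : Q[(fun _ : Ω => (1:ℝ))|MeasurableSpace.comap X inferInstance] = fun _ => 1 := condExp_const hm 1
    filter_upwards [h1, hpver] with ω hω hpω
    have : (fun ω => 1 - G ω) = (fun ω : Ω => (1:ℝ)) - G := rfl
    rw [this, hω, h2]
    simp [hpω]
  have hB : ∫ ω, w ω * (1 - G ω) ∂Q = ∫ ω, w ω * (1 - p ω) ∂Q := by
    have h1 : Q[w * (fun ω => 1 - G ω)|MeasurableSpace.comap X inferInstance] =ᵐ[Q] w * Q[(fun ω => 1 - G ω)|MeasurableSpace.comap X inferInstance] :=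
      condExp_mul_of_stronglyMeasurable_left hwm.stronglyMeasurable hw1Gint h1Gint
    calc ∫ ω, w ω * (1 - G ω) ∂Q = ∫ ω, (w * fun ω => 1 - G ω) ω ∂Q := rfl
      _ = ∫ ω, (Q[w * fun ω => 1 - G ω|MeasurableSpace.comap X inferInstance]) ω ∂Q := (integral_condExp hm).symm
      _ = ∫ ω, w ω * (Q[(fun ω => 1 - G ω)|MeasurableSpace.comap X inferInstance]) ω ∂Q :=
          integral_congr_ae (h1.mono fun ω h => by simpa using h)
      _ = ∫ ω, w ω * (1 - p ω) ∂Q :=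
          integral_congr_ae (hcond1G.mono fun ω h => by dsimp only; rw [h])
  -- the identity under Q
  have hQeq : ∫ ω, G ω * fX ω ∂Q = ∫ ω, (p ω * C ω / (1 - p ω)) * fX ω ∂Q := by
    have e1 : ∫ ω, G ω * fX ω ∂Q = ∫ ω, fX ω * G ω ∂Q := by
      simp_rw [mul_comm]
    have e2 : ∫ ω, (p ω * C ω / (1 - p ω)) * fX ω ∂Q = ∫ ω, w ω * (1 - G ω) ∂Q := by
      refine integral_congr_ae ?_
      filter_upwards [hmemQ] with ω hωS
      have hCω : C ω = 1 - G ω := by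
        have : G ω + C ω = 1 := hωS
        linarith
      rw [hw]; rw [hCω]; ring
    have e3 : ∫ ω, w ω * (1 - p ω) ∂Q = ∫ ω, fX ω * p ω ∂Q := by
      refine integral_congr_ae ?_
      filter_upwards [hpQ] with ω ⟨h0, h1⟩
      have hne : 1 - p ω ≠ 0 := by linarith
      rw [hw]
      field_simp
    rw [e1, hA, e2, hB, e3]
  -- transfer P-integrals to Q-integrals
  have key : ∀ (g : Ω → ℝ), (∀ ω, ω ∉ S → g ω = 0) →
      ∫ ω, g ω ∂P = (P S).toReal * ∫ ω, g ω ∂Q := by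
    intro g hg
    have hPSne : (P S).toReal ≠ 0 := by
      simp [ENNReal.toReal_eq_zero_iff, hS0, measure_ne_top P S]
    rw [hQ, ProbabilityTheory.cond, integral_smul_measure,
      setIntegral_eq_integral_of_forall_compl_eq_zero hg, ENNReal.toReal_inv]
    rw [smul_eq_mul, ← mul_assoc, mul_inv_cancel₀ hPSne, one_mul]
  have kL : ∫ ω, G ω * fX ω ∂P = (P S).toReal * ∫ ω, G ω * fX ω ∂Q := by
    refine key _ fun ω hω => ?_
    rw [hGoff ω hω, zero_mul]
  have kR : ∫ ω, (p ω * C ω / (1 - p ω)) * fX ω ∂P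
      = (P S).toReal * ∫ ω, (p ω * C ω / (1 - p ω)) * fX ω ∂Q := by
    refine key _ fun ω hω => ?_
    rw [hCoff ω hω]; ring
  show ∫ ω, G ω * fX ω ∂P = ∫ ω, (p ω * C ω / (1 - p ω)) * fX ω ∂P
  rw [kL, kR, hQeq]
end

section
/- Under overlap, the expected odds-weighted control indicator equals the probability of group g: E[p_g(X) C / (1 − p_g(X))] = E[G_g]. (In the standard two-period, two-group DID setup this shows the weighted estimand reduces to Abadie's Lemma 3.1 representation of the ATT.) -/
open MeasureTheory ProbabilityTheory

/-- the expected odds-weighted control indicator equals `P(G_g = 1)`.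
Under overlap, `E[p_g(X) C / (1 − p_g(X))] = E[G_g]`. -/
theorem expected_odds_weight_eq_group_probability
    {Ω : Type*} [MeasurableSpace Ω] (P : Measure Ω) [IsProbabilityMeasure P]
    (k : ℕ) (X : Ω → (Fin k → ℝ)) (hXmeas : Measurable X)
    (G C : Ω → ℝ) (hGmeas : Measurable G) (hCmeas : Measurable C)
    -- indicator structure
    (hG01 : ∀ ω, G ω = 0 ∨ G ω = 1) (hC01 : ∀ ω, C ω = 0 ∨ C ω = 1)
    (hGC : ∀ ω, G ω + C ω ≤ 1)
    (hPg : 0 < P {ω | G ω = 1}) (hPC : 0 < P {ω | C ω = 1})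
    -- the generalized propensity score: a σ(X)-measurable version of E[G | X, G + C = 1]
    (p : Ω → ℝ)
    (hpmeas : Measurable[MeasurableSpace.comap X inferInstance] p)
    (hpver : p =ᵐ[P[|{ω | G ω + C ω = 1}]]
      (P[|{ω | G ω + C ω = 1}])[G | MeasurableSpace.comap X inferInstance])
    -- overlap
    (ε : ℝ) (hε : 0 < ε)
    (hoverlap : ∀ᵐ ω ∂P, 0 ≤ p ω ∧ p ω ≤ 1 - ε) :
    ∫ ω, p ω * C ω / (1 - p ω) ∂P = ∫ ω, G ω ∂P := by
  classical
  set S : Set Ω := {ω | G ω + C ω = 1} with hS_def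
  have hSmeas : MeasurableSet S := by
    have : S = (fun ω => G ω + C ω) ⁻¹' {1} := by
      ext ω; simp [hS_def]
    rw [this]
    exact (hGmeas.add hCmeas) (measurableSet_singleton 1)
  -- off S both indicators vanish
  have hCzero : ∀ ω, ω ∉ S → C ω = 0 := by
    intro ω hω
    rcases hC01 ω with h2 | h2
    · exact h2
    rcases hG01 ω with h1 | h1
    · exact absurd (by simp [hS_def, h1, h2]) hω
    · exact absurd (hGC ω) (by rw [h1, h2]; norm_num)
  have hGzero : ∀ ω, ω ∉ S → G ω = 0 := by
    intro ω hω
    rcases hG01 ω with h1 | h1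
    · exact h1
    rcases hC01 ω with h2 | h2
    · exact absurd (by simp [hS_def, h1, h2]) hω
    · exact absurd (hGC ω) (by rw [h1, h2]; norm_num)
  -- positive probability of S
  have hPS : P S ≠ 0 := by
    have hsub : {ω | G ω = 1} ⊆ S := by
      intro ω hω
      have h1 : G ω = 1 := hω
      have h2 : C ω = 0 := by
        rcases hC01 ω with h | h
        · exact h
        · exact absurd (hGC ω) (by rw [h1, h]; norm_num)
      simp [hS_def, h1, h2]
    exact fun h => absurd (le_antisymm (h ▸ measure_mono hsub) zero_le) (ne_of_gt hPg)
  have hm : MeasurableSpace.comap X inferInstance ≤ ‹MeasurableSpace Ω› := hXmeas.comap_le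
  set Q : Measure Ω := P[|S] with hQ_def
  haveI hQprob : IsProbabilityMeasure Q := cond_isProbabilityMeasure hPS
  have hQP : Q ≪ P := cond_absolutelyContinuous
  have hoverQ : ∀ᵐ ω ∂Q, 0 ≤ p ω ∧ p ω ≤ 1 - ε := hQP.ae_le hoverlap
  have hSQ : ∀ᵐ ω ∂Q, ω ∈ S := by
    rw [ae_iff]
    have h1 : {ω | ¬ ω ∈ S} = Sᶜ := rfl
    rw [h1, hQ_def, cond_apply hSmeas]
    simp
  have hp_meas : Measurable p := hpmeas.mono hm le_rfl
  set g : Ω → ℝ := fun ω => p ω / (1 - p ω) with hg_def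
  have hg_meas : Measurable g := hp_meas.div (measurable_const.sub hp_meas)
  have hg_sm : StronglyMeasurable[MeasurableSpace.comap X inferInstance] g :=
    (hpmeas.div (measurable_const.sub hpmeas)).stronglyMeasurable
  -- a.e. bounds under Q
  have hgb : ∀ᵐ ω ∂Q, |g ω| ≤ ε⁻¹ := by
    filter_upwards [hoverQ] with ω hω
    have h1 : ε ≤ 1 - p ω := by linarith [hω.2]
    have h2 : 0 ≤ g ω := div_nonneg hω.1 (by linarith)
    rw [abs_of_nonneg h2, hg_def]
    calc p ω / (1 - p ω) ≤ 1 / ε := by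
          apply div_le_div₀ zero_le_one (by linarith [hω.2, hε]) hε h1
      _ = ε⁻¹ := one_div ε
  have hGb : ∀ ω, |G ω| ≤ 1 := by
    intro ω; rcases hG01 ω with h | h <;> rw [h] <;> norm_num
  have hCb : ∀ ω, |C ω| ≤ 1 := by
    intro ω; rcases hC01 ω with h | h <;> rw [h] <;> norm_num
  have hpb : ∀ᵐ ω ∂Q, |p ω| ≤ 1 := by
    filter_upwards [hoverQ] with ω hω
    rw [abs_of_nonneg hω.1]; linarith [hω.2, hε]
  -- integrability under Q
  have int_of_bdd : ∀ (f : Ω → ℝ), Measurable f → ∀ (M : ℝ), (∀ᵐ ω ∂Q, |f ω| ≤ M) →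
      Integrable f Q := by
    intro f hf M hM
    exact ⟨hf.aestronglyMeasurable, HasFiniteIntegral.of_bounded
      (by simpa [Real.norm_eq_abs] using hM)⟩
  have Int_G : Integrable G Q := int_of_bdd G hGmeas 1 (ae_of_all _ hGb)
  have Int_g : Integrable g Q := int_of_bdd g hg_meas ε⁻¹ hgb
  have Int_gG : Integrable (fun ω => g ω * G ω) Q := by
    refine int_of_bdd _ (hg_meas.mul hGmeas) ε⁻¹ ?_
    filter_upwards [hgb] with ω hω
    calc |g ω * G ω| = |g ω| * |G ω| := abs_mul _ _
      _ ≤ ε⁻¹ * 1 := mul_le_mul hω (hGb ω) (abs_nonneg _) (by positivity)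
      _ = ε⁻¹ := mul_one _
  have Int_gp : Integrable (fun ω => g ω * p ω) Q := by
    refine int_of_bdd _ (hg_meas.mul hp_meas) ε⁻¹ ?_
    filter_upwards [hgb, hpb] with ω hω hω'
    calc |g ω * p ω| = |g ω| * |p ω| := abs_mul _ _
      _ ≤ ε⁻¹ * 1 := mul_le_mul hω hω' (abs_nonneg _) (by positivity)
      _ = ε⁻¹ := mul_one _
  haveI : SigmaFinite (Q.trim hm) := by
    have : IsFiniteMeasure (Q.trim hm) := isFiniteMeasure_trim hm
    infer_instance
  -- main computation under Q
  have key : ∫ ω, p ω * C ω / (1 - p ω) ∂Q = ∫ ω, G ω ∂Q := by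
    have h1 : ∫ ω, p ω * C ω / (1 - p ω) ∂Q = ∫ ω, g ω * C ω ∂Q :=
      integral_congr_ae (ae_of_all _ fun ω => mul_div_right_comm (p ω) (C ω) (1 - p ω))
    have h2 : ∫ ω, g ω * C ω ∂Q = ∫ ω, g ω * (1 - G ω) ∂Q := by
      apply integral_congr_ae
      filter_upwards [hSQ] with ω hω
      have : C ω = 1 - G ω := by
        have := hω; simp only [hS_def, Set.mem_setOf_eq] at this; linarith
      rw [this]
    have h4 : ∫ ω, g ω * G ω ∂Q = ∫ ω, g ω * p ω ∂Q := by
      calc ∫ ω, g ω * G ω ∂Q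
          = ∫ ω, (Q[fun ω => g ω * G ω|MeasurableSpace.comap X inferInstance]) ω ∂Q := (integral_condExp hm).symm
        _ = ∫ ω, (g ω * (Q[G|MeasurableSpace.comap X inferInstance]) ω) ∂Q :=
            integral_congr_ae (condExp_mul_of_stronglyMeasurable_left hg_sm Int_gG Int_G)
        _ = ∫ ω, g ω * p ω ∂Q := by
            apply integral_congr_ae
            filter_upwards [hpver] with ω hω
            rw [hω]
    have h5 : ∫ ω, (g ω - g ω * p ω) ∂Q = ∫ ω, p ω ∂Q := by
      apply integral_congr_ae
      filter_upwards [hoverQ] with ω hω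
      have hne : (1 : ℝ) - p ω ≠ 0 := by
        have : ε ≤ 1 - p ω := by linarith [hω.2]
        linarith [hε]
      have : g ω - g ω * p ω = g ω * (1 - p ω) := by ring
      rw [this, hg_def]
      exact div_mul_cancel₀ (p ω) hne
    have h6 : ∫ ω, p ω ∂Q = ∫ ω, G ω ∂Q := by
      rw [integral_congr_ae hpver, integral_condExp hm]
    calc ∫ ω, p ω * C ω / (1 - p ω) ∂Q
        = ∫ ω, g ω * (1 - G ω) ∂Q := by rw [h1, h2]
      _ = ∫ ω, (g ω - g ω * G ω) ∂Q :=
          integral_congr_ae (ae_of_all _ fun ω => by ring)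
      _ = ∫ ω, g ω ∂Q - ∫ ω, g ω * G ω ∂Q := integral_sub Int_g Int_gG
      _ = ∫ ω, g ω ∂Q - ∫ ω, g ω * p ω ∂Q := by rw [h4]
      _ = ∫ ω, (g ω - g ω * p ω) ∂Q := (integral_sub Int_g Int_gp).symm
      _ = ∫ ω, p ω ∂Q := h5
      _ = ∫ ω, G ω ∂Q := h6
  -- transfer back to P
  have hPSne : P S ≠ ⊤ := measure_ne_top P S
  have hlift : ∀ (f : Ω → ℝ), (∀ ω, ω ∉ S → f ω = 0) →
      ∫ ω, f ω ∂P = (P S).toReal * ∫ ω, f ω ∂Q := by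
    intro f hf
    have hQeq : Q = (P S)⁻¹ • P.restrict S := rfl
    rw [hQeq, integral_smul_measure, smul_eq_mul, ← mul_assoc]
    rw [← ENNReal.toReal_mul, ENNReal.mul_inv_cancel hPS hPSne, ENNReal.toReal_one, one_mul]
    rw [← setIntegral_eq_integral_of_forall_compl_eq_zero hf]
  have hLHS0 : ∀ ω, ω ∉ S → p ω * C ω / (1 - p ω) = 0 := by
    intro ω hω; rw [hCzero ω hω]; simp
  rw [hlift _ hLHS0, hlift G hGzero, key]
end

section
/- Under overlap, for any integrable real random variable Z, odds-of-propensity-score reweighting of the control group recovers the control-group conditional mean of Z averaged over the covariate distribution of group g: E[(p_g(X) C / (1 − p_g(X))) Z] / E[p_g(X) C / (1 − p_g(X))] = E[m(X) | G_g = 1], where m(X) is any version of E[Z | X, C = 1]. -/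
open MeasureTheory ProbabilityTheory

section OddsAux
variable {Ω : Type*} {m0 : MeasurableSpace Ω} {μ : Measure Ω} {s : Set Ω} {f : Ω → ℝ}

lemma oddsAux_cond_integral (μ : Measure Ω) (s : Set Ω) (f : Ω → ℝ) :
    ∫ ω, f ω ∂μ[|s] = (μ s).toReal⁻¹ * ∫ ω in s, f ω ∂μ := by
  rw [ProbabilityTheory.cond, integral_smul_measure, ENNReal.toReal_inv, smul_eq_mul]

lemma oddsAux_integrable_cond_iff (hs0 : μ s ≠ 0) (hs' : μ s ≠ ⊤) :
    Integrable f μ[|s] ↔ IntegrableOn f s μ := by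
  rw [ProbabilityTheory.cond,
    integrable_smul_measure (by simpa using hs') (by simpa using hs0)]
  rfl

lemma oddsAux_pullout {m : MeasurableSpace Ω} (hm : m ≤ m0) [IsFiniteMeasure μ]
    {f g : Ω → ℝ} (hf : StronglyMeasurable[m] f)
    (hfg : Integrable (fun ω => f ω * g ω) μ) (hg : Integrable g μ) :
    ∫ ω, f ω * g ω ∂μ = ∫ ω, f ω * (μ[g|m]) ω ∂μ := by
  have h2 := condExp_mul_of_stronglyMeasurable_left hf (by exact hfg) hg
  calc ∫ ω, f ω * g ω ∂μ = ∫ ω, (f * g) ω ∂μ := rfl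
    _ = ∫ ω, (μ[f * g|m]) ω ∂μ := (integral_condExp hm).symm
    _ = ∫ ω, (f * (μ[g|m])) ω ∂μ := integral_congr_ae h2
    _ = ∫ ω, f ω * (μ[g|m]) ω ∂μ := rfl

theorem oddsAux_main {Ω : Type*} (mΩ : MeasurableSpace Ω) {m0 : MeasurableSpace Ω}
    (P : Measure Ω) [IsProbabilityMeasure P] (hm : mΩ ≤ m0)
    (G C : Ω → ℝ) (hGmeas : Measurable G) (hCmeas : Measurable C)
    (hG01 : ∀ ω, G ω = 0 ∨ G ω = 1) (hC01 : ∀ ω, C ω = 0 ∨ C ω = 1)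
    (hGC : ∀ ω, G ω + C ω ≤ 1)
    (hPg : 0 < P {ω | G ω = 1}) (hPC : 0 < P {ω | C ω = 1})
    (p : Ω → ℝ) (hpmeas : Measurable[mΩ] p)
    (hpver : p =ᵐ[P[|{ω | G ω + C ω = 1}]] (P[|{ω | G ω + C ω = 1}])[G|mΩ])
    (ε : ℝ) (hε : 0 < ε) (hoverlap : ∀ᵐ ω ∂P, 0 ≤ p ω ∧ p ω ≤ 1 - ε)
    (Z : Ω → ℝ) (hZint : Integrable Z P)
    (mX : Ω → ℝ) (hmXMeasm : Measurable[mΩ] mX)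
    (hmver : mX =ᵐ[P[|{ω | C ω = 1}]] (P[|{ω | C ω = 1}])[Z|mΩ]) :
    (∫ ω, (p ω * C ω / (1 - p ω)) * Z ω ∂P) / (∫ ω, p ω * C ω / (1 - p ω) ∂P) =
      ∫ ω, mX ω ∂(P[|{ω | G ω = 1}]) := by
  set w : Ω → ℝ := fun ω => p ω / (1 - p ω) with hwdef
  set S : Set Ω := {ω | G ω + C ω = 1} with hSdef
  set Cs : Set Ω := {ω | C ω = 1} with hCsdef
  set Gs : Set Ω := {ω | G ω = 1} with hGsdef
  -- measurability of the sets
  have hSm : MeasurableSet S := (hGmeas.add hCmeas) (measurableSet_singleton 1)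
  have hCsm : MeasurableSet Cs := hCmeas (measurableSet_singleton 1)
  have hGsm : MeasurableSet Gs := hGmeas (measurableSet_singleton 1)
  -- inclusions
  have hCsS : Cs ⊆ S := by
    intro ω hω
    have hc : C ω = 1 := hω
    rcases hG01 ω with h | h
    · show G ω + C ω = 1; rw [h, hc]; ring
    · exfalso; have := hGC ω; rw [h, hc] at this; linarith
  have hGsS : Gs ⊆ S := by
    intro ω hω
    have hg : G ω = 1 := hω
    rcases hC01 ω with h | h
    · show G ω + C ω = 1; rw [h, hg]; ring
    · exfalso; have := hGC ω; rw [h, hg] at this; linarith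
  -- positivity / finiteness
  have hPGs0 : P Gs ≠ 0 := hPg.ne'
  have hPCs0 : P Cs ≠ 0 := hPC.ne'
  have hPS0 : P S ≠ 0 := fun h => hPCs0 (measure_mono_null hCsS h)
  have hPGs' : P Gs ≠ ⊤ := measure_ne_top P Gs
  have hPCs' : P Cs ≠ ⊤ := measure_ne_top P Cs
  have hPS' : P S ≠ ⊤ := measure_ne_top P S
  have hτS0 : (P S).toReal ≠ 0 := ENNReal.toReal_ne_zero.2 ⟨hPS0, hPS'⟩
  have hτC0 : (P Cs).toReal ≠ 0 := ENNReal.toReal_ne_zero.2 ⟨hPCs0, hPCs'⟩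
  have hτG0 : (P Gs).toReal ≠ 0 := ENNReal.toReal_ne_zero.2 ⟨hPGs0, hPGs'⟩
  haveI hprobS : IsProbabilityMeasure (P[|S]) := cond_isProbabilityMeasure hPS0
  haveI hprobC : IsProbabilityMeasure (P[|Cs]) := cond_isProbabilityMeasure hPCs0
  -- a.e. transfers
  have hacS : P[|S] ≪ P := cond_absolutelyContinuous
  have hacC : P[|Cs] ≪ P := cond_absolutelyContinuous
  have hovS : ∀ᵐ ω ∂P[|S], 0 ≤ p ω ∧ p ω ≤ 1 - ε := hacS.ae_le hoverlap
  -- measurability of functions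
  have hpMeas : Measurable p := hpmeas.mono hm le_rfl
  have hwMeasm : Measurable[mΩ] w := hpmeas.div (measurable_const.sub hpmeas)
  have hwMeas : Measurable w := hwMeasm.mono hm le_rfl
  have hmXMeas : Measurable mX := hmXMeasm.mono hm le_rfl
  -- bound on w
  have hwBound : ∀ᵐ ω ∂P, ‖w ω‖ ≤ (1 - ε) / ε := by
    filter_upwards [hoverlap] with ω hω
    obtain ⟨h0, h1⟩ := hω
    have h2 : ε ≤ 1 - p ω := by linarith
    have h3 : (0:ℝ) < 1 - p ω := lt_of_lt_of_le hε h2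
    show ‖p ω / (1 - p ω)‖ ≤ (1 - ε) / ε
    rw [Real.norm_eq_abs, abs_of_nonneg (div_nonneg h0 h3.le)]
    exact div_le_div₀ (by linarith) h1 hε h2
  -- G and C are bounded, hence integrable w.r.t. any finite measure
  have hGbd : ∀ ω, ‖G ω‖ ≤ 1 := by
    intro ω; rcases hG01 ω with h | h <;> simp [h]
  have hCbd : ∀ ω, ‖C ω‖ ≤ 1 := by
    intro ω; rcases hC01 ω with h | h <;> simp [h]
  have hGint : ∀ (μ : Measure Ω), IsFiniteMeasure μ → Integrable G μ := fun μ _ =>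
    (integrable_const (1:ℝ)).mono' hGmeas.aestronglyMeasurable (Filter.Eventually.of_forall hGbd)
  have hCint : ∀ (μ : Measure Ω), IsFiniteMeasure μ → Integrable C μ := fun μ _ =>
    (integrable_const (1:ℝ)).mono' hCmeas.aestronglyMeasurable (Filter.Eventually.of_forall hCbd)
  -- a.e. membership in S for the conditional measure on S
  have hSmem : ∀ᵐ ω ∂P[|S], ω ∈ S := by
    rw [ProbabilityTheory.cond]
    exact Measure.ae_smul_measure (ae_restrict_mem hSm) _
  have hCGae : C =ᵐ[P[|S]] fun ω => 1 - G ω := by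
    filter_upwards [hSmem] with ω hω
    have : G ω + C ω = 1 := hω
    linarith
  -- 1 - p is a version of E[C | X] under P[|S]
  have hq : (P[|S])[C|mΩ] =ᵐ[P[|S]] fun ω => 1 - p ω := by
    have h1 : (P[|S])[C|mΩ] =ᵐ[P[|S]] (P[|S])[fun ω => (1:ℝ) - G ω|mΩ] :=
      condExp_congr_ae hCGae
    have h2 : (P[|S])[fun ω => (1:ℝ) - G ω|mΩ]
        =ᵐ[P[|S]] (P[|S])[fun _ => (1:ℝ)|mΩ] - (P[|S])[G|mΩ] :=
      condExp_sub (integrable_const 1) (hGint _ inferInstance) mΩ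
    refine h1.trans (h2.trans ?_)
    have h3 : (P[|S])[fun _ => (1:ℝ)|mΩ] = fun _ => (1:ℝ) := condExp_const hm 1
    filter_upwards [hpver] with ω hω
    simp [h3, Pi.sub_apply, ← hω]
  -- indicator identities
  have hCsind : ∀ (f : Ω → ℝ), (fun ω => f ω * C ω) = Cs.indicator f := by
    intro f; funext ω
    rcases hC01 ω with h | h
    · have hω : ω ∉ Cs := by simp [hCsdef, h]
      simp [Set.indicator_of_notMem hω, h]
    · have hω : ω ∈ Cs := h
      simp [Set.indicator_of_mem hω, h]
  have hGsind : ∀ (f : Ω → ℝ), (fun ω => f ω * G ω) = Gs.indicator f := by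
    intro f; funext ω
    rcases hG01 ω with h | h
    · have hω : ω ∉ Gs := by simp [hGsdef, h]
      simp [Set.indicator_of_notMem hω, h]
    · have hω : ω ∈ Gs := h
      simp [Set.indicator_of_mem hω, h]
  -- integrability under P[|Cs]
  have hZintC : Integrable Z (P[|Cs]) :=
    (oddsAux_integrable_cond_iff hPCs0 hPCs').2 hZint.integrableOn
  have hwZintC : Integrable (fun ω => w ω * Z ω) (P[|Cs]) :=
    hZintC.bdd_mul hwMeas.aestronglyMeasurable (hacC.ae_le hwBound)
  have hmXintC : Integrable mX (P[|Cs]) := integrable_condExp.congr hmver.symm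
  have hwmXintC : Integrable (fun ω => w ω * mX ω) (P[|Cs]) :=
    hmXintC.bdd_mul hwMeas.aestronglyMeasurable (hacC.ae_le hwBound)
  have hwmXintOnCs : IntegrableOn (fun ω => w ω * mX ω) Cs P :=
    (oddsAux_integrable_cond_iff hPCs0 hPCs').1 hwmXintC
  have hmXintOnCs : IntegrableOn mX Cs P :=
    (oddsAux_integrable_cond_iff hPCs0 hPCs').1 hmXintC
  -- f integrable on Cs under P ⇒ f * C integrable under P[|S]
  have hindS : ∀ (f : Ω → ℝ), IntegrableOn f Cs P →
      Integrable (fun ω => f ω * C ω) (P[|S]) := by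
    intro f hf
    rw [hCsind f, oddsAux_integrable_cond_iff hPS0 hPS']
    rw [IntegrableOn, integrable_indicator_iff hCsm, IntegrableOn,
      Measure.restrict_restrict hCsm, Set.inter_eq_self_of_subset_left hCsS]
    exact hf
  -- relating integrals: ∫ f·C d(P[|S]) and ∫_{Cs} f dP, similarly for G
  have hSintC : ∀ (f : Ω → ℝ),
      ∫ ω, f ω * C ω ∂P[|S] = (P S).toReal⁻¹ * ∫ ω in Cs, f ω ∂P := by
    intro f
    rw [oddsAux_cond_integral]
    congr 1
    calc ∫ ω in S, f ω * C ω ∂P = ∫ ω in S, Cs.indicator f ω ∂P := by rw [hCsind f]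
      _ = ∫ ω in S ∩ Cs, f ω ∂P := by rw [setIntegral_indicator hCsm]
      _ = ∫ ω in Cs, f ω ∂P := by rw [Set.inter_eq_self_of_subset_right hCsS]
  have hSintG : ∀ (f : Ω → ℝ),
      ∫ ω, f ω * G ω ∂P[|S] = (P S).toReal⁻¹ * ∫ ω in Gs, f ω ∂P := by
    intro f
    rw [oddsAux_cond_integral]
    congr 1
    calc ∫ ω in S, f ω * G ω ∂P = ∫ ω in S, Gs.indicator f ω ∂P := by rw [hGsind f]
      _ = ∫ ω in S ∩ Gs, f ω ∂P := by rw [setIntegral_indicator hGsm]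
      _ = ∫ ω in Gs, f ω ∂P := by rw [Set.inter_eq_self_of_subset_right hGsS]
  -- pull-out identities under P[|S]
  have pulloutC : ∀ (f : Ω → ℝ), Measurable[mΩ] f →
      Integrable (fun ω => f ω * C ω) (P[|S]) →
      ∫ ω, f ω * C ω ∂P[|S] = ∫ ω, f ω * (1 - p ω) ∂P[|S] := by
    intro f hfm hfint
    rw [oddsAux_pullout hm hfm.stronglyMeasurable hfint (hCint _ inferInstance)]
    exact integral_congr_ae (by filter_upwards [hq] with ω h; rw [h])
  have pulloutG : ∀ (f : Ω → ℝ), Measurable[mΩ] f →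
      Integrable (fun ω => f ω * G ω) (P[|S]) →
      ∫ ω, f ω * G ω ∂P[|S] = ∫ ω, f ω * p ω ∂P[|S] := by
    intro f hfm hfint
    rw [oddsAux_pullout hm hfm.stronglyMeasurable hfint (hGint _ inferInstance)]
    refine integral_congr_ae ?_
    filter_upwards [hpver] with ω h; rw [h]
  -- mX is integrable under P[|S]
  have hmXCintS : Integrable (fun ω => mX ω * C ω) (P[|S]) := hindS mX hmXintOnCs
  have hmXq_int : Integrable (fun ω => mX ω * (1 - p ω)) (P[|S]) := by
    have h2 := condExp_mul_of_stronglyMeasurable_left hmXMeasm.stronglyMeasurable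
      (by exact hmXCintS) (hCint _ inferInstance)
    refine integrable_condExp.congr (h2.trans ?_)
    filter_upwards [hq] with ω h
    simp only [Pi.mul_apply, h]
  have hmXintS : Integrable mX (P[|S]) := by
    refine Integrable.mono' ((hmXq_int.abs).const_mul ε⁻¹)
      hmXMeas.aestronglyMeasurable ?_
    filter_upwards [hovS] with ω hω
    obtain ⟨h0, h1⟩ := hω
    have h2 : ε ≤ 1 - p ω := by linarith
    rw [Real.norm_eq_abs]
    have habs : |mX ω * (1 - p ω)| = |mX ω| * (1 - p ω) := by
      rw [abs_mul, abs_of_nonneg (by linarith : (0:ℝ) ≤ 1 - p ω)]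
    rw [habs]
    calc |mX ω| = ε⁻¹ * (|mX ω| * ε) := by field_simp
      _ ≤ ε⁻¹ * (|mX ω| * (1 - p ω)) := by
          gcongr
  have hmXGintS : Integrable (fun ω => mX ω * G ω) (P[|S]) := by
    have := hmXintS.bdd_mul hGmeas.aestronglyMeasurable (Filter.Eventually.of_forall hGbd)
    exact this.congr (Filter.EventuallyEq.of_eq (funext fun ω => mul_comm _ _))
  -- transfer between P and P[|Cs] integrals
  have hcondC : ∀ (f : Ω → ℝ),
      ∫ ω in Cs, f ω ∂P = (P Cs).toReal * ∫ ω, f ω ∂P[|Cs] := by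
    intro f
    rw [oddsAux_cond_integral, ← mul_assoc, mul_inv_cancel₀ hτC0, one_mul]
  -- key step under P[|Cs] : replace Z by mX
  have key1 : ∫ ω, w ω * Z ω ∂P[|Cs] = ∫ ω, w ω * mX ω ∂P[|Cs] := by
    rw [oddsAux_pullout hm hwMeasm.stronglyMeasurable hwZintC hZintC]
    refine integral_congr_ae ?_
    filter_upwards [hmver] with ω h; rw [h]
  -- a.e. simplification : w * (1 - p) = p
  have hwq : ∀ᵐ ω ∂P[|S], w ω * (1 - p ω) = p ω := by
    filter_upwards [hovS] with ω hω
    obtain ⟨h0, h1⟩ := hω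
    have h3 : (1:ℝ) - p ω ≠ 0 := by intro h; nlinarith
    show p ω / (1 - p ω) * (1 - p ω) = p ω
    field_simp
  -- numerator
  have hNum : (∫ ω, (p ω * C ω / (1 - p ω)) * Z ω ∂P) = ∫ ω in Gs, mX ω ∂P := by
    have e0 : (fun ω => (p ω * C ω / (1 - p ω)) * Z ω)
        = Cs.indicator (fun ω => w ω * Z ω) := by
      rw [← hCsind (fun ω => w ω * Z ω)]
      funext ω
      show p ω * C ω / (1 - p ω) * Z ω = w ω * Z ω * C ω
      show p ω * C ω / (1 - p ω) * Z ω = p ω / (1 - p ω) * Z ω * C ω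
      ring
    rw [e0, integral_indicator hCsm]
    rw [hcondC, key1, ← hcondC]
    -- now : ∫_{Cs} w·mX dP = ∫_{Gs} mX dP
    have e1 : ∫ ω in Cs, w ω * mX ω ∂P
        = (P S).toReal * ∫ ω, (w ω * mX ω) * C ω ∂P[|S] := by
      rw [hSintC (fun ω => w ω * mX ω), ← mul_assoc, mul_inv_cancel₀ hτS0, one_mul]
    rw [e1, pulloutC (fun ω => w ω * mX ω) (hwMeasm.mul hmXMeasm)
      (hindS (fun ω => w ω * mX ω) hwmXintOnCs)]
    have e2 : ∫ ω, (w ω * mX ω) * (1 - p ω) ∂P[|S] = ∫ ω, mX ω * G ω ∂P[|S] := by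
      rw [pulloutG mX hmXMeasm hmXGintS]
      refine integral_congr_ae ?_
      filter_upwards [hwq] with ω h
      calc w ω * mX ω * (1 - p ω) = mX ω * (w ω * (1 - p ω)) := by ring
        _ = mX ω * p ω := by rw [h]
    rw [e2, hSintG mX, ← mul_assoc, mul_inv_cancel₀ hτS0, one_mul]
  -- denominator
  have hDen : (∫ ω, p ω * C ω / (1 - p ω) ∂P) = (P Gs).toReal := by
    have e0 : (fun ω => p ω * C ω / (1 - p ω)) = Cs.indicator w := by
      rw [← hCsind w]
      funext ω
      show p ω * C ω / (1 - p ω) = p ω / (1 - p ω) * C ω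
      ring
    rw [e0, integral_indicator hCsm]
    have e1 : ∫ ω in Cs, w ω ∂P = (P S).toReal * ∫ ω, w ω * C ω ∂P[|S] := by
      rw [hSintC w, ← mul_assoc, mul_inv_cancel₀ hτS0, one_mul]
    have hwCintS : Integrable (fun ω => w ω * C ω) (P[|S]) :=
      (hCint _ inferInstance).bdd_mul hwMeas.aestronglyMeasurable (hacS.ae_le hwBound)
    rw [e1, pulloutC w hwMeasm hwCintS]
    have e2 : ∫ ω, w ω * (1 - p ω) ∂P[|S] = ∫ ω, G ω ∂P[|S] := by
      have e3 : ∫ ω, w ω * (1 - p ω) ∂P[|S] = ∫ ω, p ω ∂P[|S] :=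
        integral_congr_ae hwq
      rw [e3, integral_congr_ae hpver, integral_condExp hm]
    rw [e2]
    have e4 : ∫ ω, G ω ∂P[|S] = ∫ ω, (1:ℝ) * G ω ∂P[|S] := by simp
    rw [e4, hSintG (fun _ => (1:ℝ)), ← mul_assoc, mul_inv_cancel₀ hτS0, one_mul]
    simp [measureReal_def]
  rw [hNum, hDen, oddsAux_cond_integral P Gs mX, div_eq_inv_mul]

end OddsAux

/-- odds-of-propensity-score reweighting of the control group.
Under overlap, for any integrable real random variable `Z`,
`E[(p_g(X) C / (1 − p_g(X))) Z] / E[p_g(X) C / (1 − p_g(X))] = E[m(X) | G_g = 1]`,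
where `m(X)` is any version of `E[Z | X, C = 1]`. -/
theorem odds_reweighting_recovers_control_conditional_mean
    {Ω : Type*} [MeasurableSpace Ω] (P : Measure Ω) [IsProbabilityMeasure P]
    (k : ℕ) (X : Ω → (Fin k → ℝ)) (hXmeas : Measurable X)
    (G C : Ω → ℝ) (hGmeas : Measurable G) (hCmeas : Measurable C)
    -- indicator structure
    (hG01 : ∀ ω, G ω = 0 ∨ G ω = 1) (hC01 : ∀ ω, C ω = 0 ∨ C ω = 1)
    (hGC : ∀ ω, G ω + C ω ≤ 1)
    (hPg : 0 < P {ω | G ω = 1}) (hPC : 0 < P {ω | C ω = 1})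
    -- the generalized propensity score: a σ(X)-measurable version of E[G | X, G + C = 1]
    (p : Ω → ℝ)
    (hpmeas : Measurable[MeasurableSpace.comap X inferInstance] p)
    (hpver : p =ᵐ[P[|{ω | G ω + C ω = 1}]]
      (P[|{ω | G ω + C ω = 1}])[G | MeasurableSpace.comap X inferInstance])
    -- overlap
    (ε : ℝ) (hε : 0 < ε)
    (hoverlap : ∀ᵐ ω ∂P, 0 ≤ p ω ∧ p ω ≤ 1 - ε)
    -- an integrable random variable and a version m of E[Z | X, C = 1]
    (Z : Ω → ℝ) (hZmeas : Measurable Z) (hZint : Integrable Z P)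
    (m : (Fin k → ℝ) → ℝ) (hmmeas : Measurable m)
    (hmver : (fun ω => m (X ω)) =ᵐ[P[|{ω | C ω = 1}]]
      (P[|{ω | C ω = 1}])[Z | MeasurableSpace.comap X inferInstance]) :
    (∫ ω, (p ω * C ω / (1 - p ω)) * Z ω ∂P) / (∫ ω, p ω * C ω / (1 - p ω) ∂P) =
      ∫ ω, m (X ω) ∂(P[|{ω | G ω = 1}]) := by
  exact oddsAux_main (MeasurableSpace.comap X inferInstance) P hXmeas.comap_le
    G C hGmeas hCmeas hG01 hC01 hGC hPg hPC p hpmeas hpver ε hε hoverlap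
    Z hZint (fun ω => m (X ω))
    (hmmeas.comp (Measurable.of_comap_le le_rfl)) hmver
end

section
/- Under overlap, for 2 ≤ t < g ≤ T, the conditional pre-trends null hypothesis E[Y_t − Y_{t−1} | X, G_g = 1] = E[Y_t − Y_{t−1} | X, C = 1] (P(· | G_g = 1)-a.s.) holds if and only if the weighted conditional moment restriction E[(w_g^G − w_g^C)(Y_t − Y_{t−1}) | σ(X)] = 0 holds P-a.s., where the latter conditional expectation is taken under the full measure P. -/
open MeasureTheory ProbabilityTheory

open Filter Set
open scoped ENNReal



section DoobDynkin

variable {Ω β : Type*} [MeasurableSpace β]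

/-- Doob–Dynkin-type factorization for real-valued comap-measurable functions. -/
lemma exists_factor {X : Ω → β} {h : Ω → ℝ}
    (hh : Measurable[MeasurableSpace.comap X inferInstance] h) :
    ∃ m : β → ℝ, Measurable m ∧ ∀ ω, m (X ω) = h ω := by
  classical
  have harct : Measurable[MeasurableSpace.comap X inferInstance]
      fun ω => Real.arctan (h ω) := Real.measurable_arctan.comp hh
  have hS : ∀ q : ℚ, ∃ B : Set β, MeasurableSet B ∧
      X ⁻¹' B = (fun ω => Real.arctan (h ω)) ⁻¹' (Set.Iio (q : ℝ)) := by
    intro q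
    exact MeasurableSpace.measurableSet_comap.mp (harct (measurableSet_Iio (a := (q : ℝ))))
  choose B hBmeas hBeq using hS
  set F : ℚ → β → ℝ := fun q x => if x ∈ B q then max (q : ℝ) (-2) else 2 with hF
  have hFmeas : ∀ q, Measurable (F q) := fun q =>
    Measurable.ite (hBmeas q) measurable_const measurable_const
  set m' : β → ℝ := fun x => ⨅ q : ℚ, F q x with hm'
  have hm'meas : Measurable m' := Measurable.iInf hFmeas
  have htan : Measurable Real.tan := by
    have : Real.tan = fun x => Real.sin x / Real.cos x := funext fun x => Real.tan_eq_sin_div_cos x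
    rw [this]; exact Real.measurable_sin.div Real.measurable_cos
  refine ⟨fun x => Real.tan (m' x), htan.comp hm'meas, fun ω => ?_⟩
  have hval : m' (X ω) = Real.arctan (h ω) := by
    set r := Real.arctan (h ω) with hr
    have hpi : Real.pi < 4 := by
      have := Real.pi_lt_d2; linarith
    have hr2 : r < 2 := by
      have := Real.arctan_lt_pi_div_two (h ω); rw [← hr] at this; linarith
    have hrm2 : -2 < r := by
      have := Real.neg_pi_div_two_lt_arctan (h ω); rw [← hr] at this; linarith
    have hmem : ∀ q : ℚ, X ω ∈ B q ↔ r < (q : ℝ) := by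
      intro q
      have : ω ∈ X ⁻¹' B q ↔ ω ∈ (fun ω => Real.arctan (h ω)) ⁻¹' (Set.Iio (q : ℝ)) := by
        rw [hBeq q]
      simpa [hr] using this
    have hFval : ∀ q : ℚ, F q (X ω) = if r < (q : ℝ) then max (q : ℝ) (-2) else 2 := by
      intro q
      by_cases hq : r < (q : ℝ)
      · rw [hF]; simp only [if_pos ((hmem q).mpr hq), if_pos hq]
      · rw [hF]; simp only [if_neg (fun c => hq ((hmem q).mp c)), if_neg hq]
    have hbdd : BddBelow (Set.range fun q : ℚ => F q (X ω)) := by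
      refine ⟨-2, ?_⟩
      rintro x ⟨q, rfl⟩
      show -2 ≤ F q (X ω)
      rw [hFval q]
      by_cases hq : r < (q : ℝ)
      · rw [if_pos hq]; exact le_max_right _ _
      · rw [if_neg hq]; norm_num
    refine le_antisymm ?_ ?_
    · refine le_of_forall_pos_le_add fun δ hδ => ?_
      obtain ⟨q, hq1, hq2⟩ := exists_rat_btwn (lt_add_of_pos_right r hδ)
      refine le_trans (ciInf_le hbdd q) ?_
      rw [hFval q, if_pos hq1]
      have : max (q : ℝ) (-2) = (q : ℝ) := max_eq_left (by linarith)
      rw [this]; linarith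
    · refine le_ciInf fun q => ?_
      rw [hFval q]
      by_cases hq : r < (q : ℝ)
      · rw [if_pos hq]; exact le_trans (le_of_lt hq) (le_max_left _ _)
      · rw [if_neg hq]; linarith
  show Real.tan (m' (X ω)) = h ω
  rw [hval, Real.tan_arctan]

end DoobDynkin

open scoped ENNReal


section AB

variable {Ω : Type*} {m : MeasurableSpace Ω} [mΩ : MeasurableSpace Ω]

lemma chi_integrable (P : Measure Ω) [IsFiniteMeasure P] {χ : Ω → ℝ}
    (hχm : Measurable χ) (hχ0 : ∀ ω, 0 ≤ χ ω) (hχ1 : ∀ ω, χ ω ≤ 1) :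
    Integrable χ P := by
  refine Integrable.mono' (integrable_const (1 : ℝ)) hχm.aestronglyMeasurable ?_
  exact Filter.Eventually.of_forall fun ω => by
    rw [Real.norm_eq_abs, abs_of_nonneg (hχ0 ω)]; exact hχ1 ω

/-- The `P`-densities `χ` and `E[χ|m]` induce the same measure on `m`. -/
lemma trim_withDensity_condexp_eq (hm : m ≤ mΩ) (P : Measure Ω) [IsFiniteMeasure P]
    {χ : Ω → ℝ} (hχm : Measurable χ) (hχ0 : ∀ ω, 0 ≤ χ ω) (hχ1 : ∀ ω, χ ω ≤ 1) :
    (P.withDensity fun ω => ENNReal.ofReal (χ ω)).trim hm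
      = (P.withDensity fun ω => ENNReal.ofReal ((P[χ|m]) ω)).trim hm := by
  have hχint : Integrable χ P := chi_integrable P hχm hχ0 hχ1
  refine @Measure.ext Ω m _ _ fun S hS => ?_
  rw [trim_measurableSet_eq hm hS, trim_measurableSet_eq hm hS,
    withDensity_apply _ (hm S hS), withDensity_apply _ (hm S hS),
    ← ofReal_integral_eq_lintegral_ofReal hχint.restrict
      (ae_restrict_of_ae (Filter.Eventually.of_forall hχ0)),
    ← ofReal_integral_eq_lintegral_ofReal integrable_condExp.restrict
      (ae_restrict_of_ae (condExp_nonneg (Filter.Eventually.of_forall hχ0))),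
    setIntegral_condExp hm hχint hS]

/-- Transfer integrability and integrals between multiplying by `χ` and by `E[χ|m]`. -/
lemma integral_mul_condexp_eq (hm : m ≤ mΩ) (P : Measure Ω) [IsFiniteMeasure P]
    {χ : Ω → ℝ} (hχm : Measurable χ) (hχ0 : ∀ ω, 0 ≤ χ ω) (hχ1 : ∀ ω, χ ω ≤ 1)
    {f : Ω → ℝ} (hf : StronglyMeasurable[m] f)
    (hint : Integrable (fun ω => f ω * χ ω) P) :
    Integrable (fun ω => f ω * (P[χ|m]) ω) P ∧
      ∫ ω, f ω * (P[χ|m]) ω ∂P = ∫ ω, f ω * χ ω ∂P := by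
  set c : Ω → ℝ := P[χ|m] with hc
  have hcm : Measurable c := stronglyMeasurable_condExp.measurable.mono hm le_rfl
  have hc0 : ∀ᵐ ω ∂P, 0 ≤ c ω := condExp_nonneg (Filter.Eventually.of_forall hχ0)
  set ν₁ : Measure Ω := P.withDensity fun ω => ENNReal.ofReal (χ ω) with hν₁
  set ν₂ : Measure Ω := P.withDensity fun ω => ENNReal.ofReal (c ω) with hν₂
  have hν : ν₁.trim hm = ν₂.trim hm := trim_withDensity_condexp_eq hm P hχm hχ0 hχ1
  have hd₁ : Measurable fun ω => ENNReal.ofReal (χ ω) := hχm.ennreal_ofReal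
  have hd₂ : Measurable fun ω => ENNReal.ofReal (c ω) := hcm.ennreal_ofReal
  have hlt₁ : ∀ᵐ ω ∂P, ENNReal.ofReal (χ ω) < ∞ :=
    Filter.Eventually.of_forall fun ω => ENNReal.ofReal_lt_top
  have hlt₂ : ∀ᵐ ω ∂P, ENNReal.ofReal (c ω) < ∞ :=
    Filter.Eventually.of_forall fun ω => ENNReal.ofReal_lt_top
  -- integrability transfer
  have h1 : Integrable f ν₁ := by
    rw [hν₁, integrable_withDensity_iff hd₁ hlt₁]
    refine hint.congr (Filter.Eventually.of_forall fun ω => ?_)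
    show f ω * χ ω = f ω * (ENNReal.ofReal (χ ω)).toReal
    rw [ENNReal.toReal_ofReal (hχ0 ω)]
  have h2 : Integrable f (ν₁.trim hm) := h1.trim hm hf
  rw [hν] at h2
  have h3 : Integrable f ν₂ := integrable_of_integrable_trim hm h2
  have h4 : Integrable (fun ω => f ω * c ω) P := by
    rw [hν₂, integrable_withDensity_iff hd₂ hlt₂] at h3
    refine h3.congr ?_
    filter_upwards [hc0] with ω h0
    show f ω * (ENNReal.ofReal (c ω)).toReal = f ω * c ω
    rw [ENNReal.toReal_ofReal h0]
  refine ⟨h4, ?_⟩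
  -- integral transfer
  have e₁ : ∫ ω, f ω * χ ω ∂P = ∫ ω, f ω ∂ν₁ := by
    have : ν₁ = P.withDensity fun ω => ((χ ω).toNNReal : ℝ≥0∞) := rfl
    rw [this, integral_withDensity_eq_integral_smul hχm.real_toNNReal f]
    refine integral_congr_ae (Filter.Eventually.of_forall fun ω => ?_)
    show f ω * χ ω = (χ ω).toNNReal • f ω
    rw [NNReal.smul_def, smul_eq_mul, Real.coe_toNNReal _ (hχ0 ω), mul_comm]
  have e₂ : ∫ ω, f ω * c ω ∂P = ∫ ω, f ω ∂ν₂ := by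
    have : ν₂ = P.withDensity fun ω => ((c ω).toNNReal : ℝ≥0∞) := rfl
    rw [this, integral_withDensity_eq_integral_smul hcm.real_toNNReal f]
    refine integral_congr_ae ?_
    filter_upwards [hc0] with ω h0
    show f ω * c ω = (c ω).toNNReal • f ω
    rw [NNReal.smul_def, smul_eq_mul, Real.coe_toNNReal _ h0, mul_comm]
  rw [e₁, e₂, integral_trim hm hf, integral_trim hm hf, hν]

lemma chi_props {χ : Ω → ℝ} {A : Set Ω} (hA : MeasurableSet A)
    (hχA : ∀ ω, χ ω = A.indicator (fun _ => (1:ℝ)) ω) :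
    Measurable χ ∧ (∀ ω, 0 ≤ χ ω) ∧ (∀ ω, χ ω ≤ 1) := by
  classical
  have hind : χ = A.indicator (fun _ => (1:ℝ)) := funext fun ω => hχA ω
  refine ⟨by rw [hind]; exact measurable_const.indicator hA, fun ω => ?_, fun ω => ?_⟩ <;>
    · rw [hχA ω, Set.indicator_apply]; split <;> norm_num

/-- Key bridging identity: `E_{P[|A]}[Z|m] * E_P[χ_A|m] = E_P[χ_A Z|m]` P-a.e. -/
lemma condexp_cond_mul (hm : m ≤ mΩ) (P : Measure Ω) [IsProbabilityMeasure P]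
    {χ : Ω → ℝ} {A : Set Ω} (hA : MeasurableSet A)
    (hχA : ∀ ω, χ ω = A.indicator (fun _ => (1:ℝ)) ω) (hPA : P A ≠ 0)
    {Z : Ω → ℝ} (hZ : Integrable Z P) :
    (fun ω => ((P[|A])[Z|m]) ω * (P[χ|m]) ω) =ᵐ[P] P[fun ω => χ ω * Z ω|m] := by
  classical
  obtain ⟨hχm, hχ0, hχ1⟩ := chi_props hA hχA
  haveI : IsProbabilityMeasure (P[|A]) := cond_isProbabilityMeasure hPA
  set k : Ω → ℝ := (P[|A])[Z|m] with hk
  have hkSM : StronglyMeasurable[m] k := stronglyMeasurable_condExp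
  have hZQ : Integrable Z (P[|A]) := by
    rw [ProbabilityTheory.cond]
    exact (hZ.restrict).smul_measure (ENNReal.inv_ne_top.mpr hPA)
  have hrA : P A • P[|A] = P.restrict A := by
    rw [ProbabilityTheory.cond, smul_smul,
      ENNReal.mul_inv_cancel hPA (measure_ne_top P A), one_smul]
  have hkR : Integrable k (P.restrict A) := by
    rw [← hrA]; exact integrable_condExp.smul_measure (measure_ne_top P A)
  have hkχ : Integrable (fun ω => k ω * χ ω) P := by
    have : (fun ω => k ω * χ ω) = A.indicator k := funext fun ω => by
      rw [hχA ω, Set.indicator_apply, Set.indicator_apply]; split <;> simp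
    rw [this]
    exact (integrable_indicator_iff hA).mpr hkR
  -- set-integral transfer
  have key : ∀ (S : Set Ω), MeasurableSet S → ∀ u : Ω → ℝ, Integrable u (P.restrict A) →
      ∫ ω in S, u ω * χ ω ∂P = (P A).toReal • ∫ ω in S, u ω ∂(P[|A]) := by
    intro S hS u _
    have e1 : ∀ ω, u ω * χ ω = A.indicator u ω := fun ω => by
      rw [hχA ω, Set.indicator_apply, Set.indicator_apply]; split <;> simp
    rw [setIntegral_congr_fun hS (fun ω _ => e1 ω), setIntegral_indicator hA,
      ← Measure.restrict_restrict hS, ← hrA, Measure.restrict_smul, integral_smul_measure]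
  refine (ae_eq_condExp_of_forall_setIntegral_eq (μ := P) (f := fun ω => χ ω * Z ω)
    (g := fun ω => k ω * (P[χ|m]) ω) hm ?_ ?_ ?_ ?_)
  · -- Integrable (χ Z)
    refine hZ.mono (hχm.aestronglyMeasurable.mul hZ.1) ?_
    refine Filter.Eventually.of_forall fun ω => ?_
    rw [Real.norm_eq_abs, Real.norm_eq_abs, abs_mul, abs_of_nonneg (hχ0 ω)]
    nlinarith [abs_nonneg (Z ω), hχ0 ω, hχ1 ω]
  · intro s _ _
    exact (integral_mul_condexp_eq hm P hχm hχ0 hχ1 hkSM hkχ).1.integrableOn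
  · intro S hS _
    have hSm : MeasurableSet S := hm S hS
    have hSk : StronglyMeasurable[m] (S.indicator k) := hkSM.indicator hS
    have hSkχ : Integrable (fun ω => S.indicator k ω * χ ω) P := by
      have : (fun ω => S.indicator k ω * χ ω) = S.indicator (fun ω => k ω * χ ω) :=
        funext fun ω => by
          by_cases hω : ω ∈ S <;>
            simp [Set.indicator_of_mem, Set.indicator_of_notMem, hω]
      rw [this]; exact hkχ.indicator hSm
    have hB := integral_mul_condexp_eq hm P hχm hχ0 hχ1 hSk hSkχ
    have e1 : ∫ ω in S, k ω * (P[χ|m]) ω ∂P = ∫ ω, S.indicator k ω * (P[χ|m]) ω ∂P := by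
      rw [← integral_indicator hSm]
      refine integral_congr_ae (Filter.Eventually.of_forall fun ω => ?_)
      by_cases hω : ω ∈ S <;>
        simp [Set.indicator_of_mem, Set.indicator_of_notMem, hω]
    have e2 : ∫ ω, S.indicator k ω * χ ω ∂P = ∫ ω in S, k ω * χ ω ∂P := by
      rw [← integral_indicator hSm]
      refine integral_congr_ae (Filter.Eventually.of_forall fun ω => ?_)
      by_cases hω : ω ∈ S <;>
        simp [Set.indicator_of_mem, Set.indicator_of_notMem, hω]
    rw [e1, hB.2, e2, key S hSm k hkR, setIntegral_condExp hm hZQ hS,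
      ← key S hSm Z hZ.restrict]
    refine setIntegral_congr_fun hSm fun ω _ => mul_comm _ _
  · exact ((hkSM.mul stronglyMeasurable_condExp).aestronglyMeasurable)

/-- `h` is a version of the conditional-measure conditional expectation iff
`h * E[χ_A|m]` is a version of `E[χ_A Z|m]`. -/
lemma cond_condexp_ae_eq_iff (hm : m ≤ mΩ) (P : Measure Ω) [IsProbabilityMeasure P]
    {χ : Ω → ℝ} {A : Set Ω} (hA : MeasurableSet A)
    (hχA : ∀ ω, χ ω = A.indicator (fun _ => (1:ℝ)) ω) (hPA : P A ≠ 0)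
    {Z : Ω → ℝ} (hZ : Integrable Z P)
    {h : Ω → ℝ} (hh : Measurable[m] h) :
    h =ᵐ[P[|A]] (P[|A])[Z|m] ↔
      (fun ω => h ω * (P[χ|m]) ω) =ᵐ[P] P[fun ω => χ ω * Z ω|m] := by
  classical
  obtain ⟨hχm, hχ0, hχ1⟩ := chi_props hA hχA
  set k : Ω → ℝ := (P[|A])[Z|m] with hkdef
  set c : Ω → ℝ := P[χ|m] with hcdef
  have hc0 : ∀ᵐ ω ∂P, 0 ≤ c ω := condExp_nonneg (Filter.Eventually.of_forall hχ0)
  have hL1 : (fun ω => k ω * c ω) =ᵐ[P] P[fun ω => χ ω * Z ω|m] :=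
    condexp_cond_mul hm P hA hχA hPA hZ
  have hkm : Measurable[m] k := stronglyMeasurable_condExp.measurable
  set N : Set Ω := {ω | ¬ h ω = k ω} with hNdef
  have hNm : MeasurableSet[m] N := (measurableSet_eq_fun hh hkm).compl
  have hN : MeasurableSet N := hm N hNm
  have hSM : StronglyMeasurable[m] (N.indicator fun _ => (1:ℝ)) :=
    stronglyMeasurable_const.indicator hNm
  have hpoint : ∀ ω, N.indicator (fun _ => (1:ℝ)) ω * χ ω
      = (A ∩ N).indicator (fun _ => (1:ℝ)) ω := by
    intro ω
    rw [hχA ω]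
    by_cases h1 : ω ∈ N <;> by_cases h2 : ω ∈ A <;>
      simp [Set.indicator_apply, h1, h2, Set.mem_inter_iff]
  have hIntχ : Integrable (fun ω => N.indicator (fun _ => (1:ℝ)) ω * χ ω) P := by
    rw [funext hpoint]
    exact (integrable_const (1:ℝ)).indicator (hA.inter hN)
  have hB := integral_mul_condexp_eq hm P hχm hχ0 hχ1 hSM hIntχ
  have hIχval : ∫ ω, N.indicator (fun _ => (1:ℝ)) ω * χ ω ∂P = (P (A ∩ N)).toReal := by
    rw [funext hpoint]
    exact integral_indicator_one (hA.inter hN)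
  have hcondN : (P[|A]) N = (P A)⁻¹ * P (A ∩ N) := cond_apply hA P N
  have hPAinv : (P A)⁻¹ ≠ 0 := ENNReal.inv_ne_zero.mpr (measure_ne_top P A)
  constructor
  · intro hyp
    have hQN : (P[|A]) N = 0 := ae_iff.mp hyp
    have hPAN : P (A ∩ N) = 0 := by
      rcases mul_eq_zero.mp (hcondN ▸ hQN) with h'|h'
      · exact absurd h' hPAinv
      · exact h'
    have hIc0 : ∫ ω, N.indicator (fun _ => (1:ℝ)) ω * c ω ∂P = 0 := by
      rw [hB.2, hIχval, hPAN, ENNReal.toReal_zero]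
    have hnn : 0 ≤ᵐ[P] fun ω => N.indicator (fun _ => (1:ℝ)) ω * c ω := by
      filter_upwards [hc0] with ω h0
      by_cases h1 : ω ∈ N <;>
        simp [Set.indicator_of_mem, Set.indicator_of_notMem, h1, h0]
    have hzero : (fun ω => N.indicator (fun _ => (1:ℝ)) ω * c ω) =ᵐ[P] 0 :=
      (integral_eq_zero_iff_of_nonneg_ae hnn hB.1).mp hIc0
    refine EventuallyEq.trans ?_ hL1
    filter_upwards [hzero] with ω hω
    by_cases h1 : ω ∈ N
    · have : c ω = 0 := by
        rw [Set.indicator_of_mem h1] at hω; simpa using hω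
      simp [this]
    · have : h ω = k ω := not_not.mp h1
      rw [this]
  · intro hyp
    have hyp' : (fun ω => h ω * c ω) =ᵐ[P] fun ω => k ω * c ω := hyp.trans hL1.symm
    have hc0N : ∀ᵐ ω ∂P, ω ∈ N → c ω = 0 := by
      filter_upwards [hyp'] with ω hω hN'
      rcases mul_eq_mul_right_iff.mp hω with h'|h'
      · exact absurd h' hN'
      · exact h'
    have hIc0 : ∫ ω, N.indicator (fun _ => (1:ℝ)) ω * c ω ∂P = 0 := by
      have : (fun ω => N.indicator (fun _ => (1:ℝ)) ω * c ω) =ᵐ[P] 0 := by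
        filter_upwards [hc0N] with ω hω
        by_cases h1 : ω ∈ N
        · simp [Set.indicator_of_mem, h1, hω h1]
        · simp [Set.indicator_of_notMem, h1]
      rw [integral_congr_ae this]; simp
    have htr : (P (A ∩ N)).toReal = 0 := by
      rw [← hIχval, ← hB.2, hIc0]
    have hPAN : P (A ∩ N) = 0 :=
      ((ENNReal.toReal_eq_zero_iff _).mp htr).resolve_right
        (fun hc => (measure_ne_top P _) hc)
    have hQN : (P[|A]) N = 0 := by
      rw [hcondN, hPAN, mul_zero]
    exact (ae_iff.mpr hQN)

end AB

/-- equivalence of the conditional pre-trends null and the weighted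
conditional moment restriction.  Under overlap, for `2 ≤ t < g ≤ T`, the null
`E[Y_t − Y_{t−1} | X, G_g = 1] = E[Y_t − Y_{t−1} | X, C = 1]` (`P(·|G_g=1)`-a.s.)
holds if and only if `E[(w_g^G − w_g^C)(Y_t − Y_{t−1}) | σ(X)] = 0` `P`-a.s. -/
theorem pretrends_iff_weighted_conditional_moment
    {Ω : Type*} [MeasurableSpace Ω] (P : Measure Ω) [IsProbabilityMeasure P]
    (k T : ℕ) (hT : 2 ≤ T)
    -- observed outcomes, covariates, group/control indicators
    (Y : ℕ → Ω → ℝ) (X : Ω → (Fin k → ℝ)) (G : ℕ → Ω → ℝ) (C : Ω → ℝ)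
    -- measurability and integrability
    (hYmeas : ∀ s, Measurable (Y s)) (hYint : ∀ s, Integrable (Y s) P)
    (hXmeas : Measurable X) (hGmeas : ∀ g, Measurable (G g)) (hCmeas : Measurable C)
    -- indicator structure
    (hG01 : ∀ g ω, G g ω = 0 ∨ G g ω = 1)
    (hC01 : ∀ ω, C ω = 0 ∨ C ω = 1)
    (hsum : ∀ ω, (∑ g ∈ Finset.Icc 2 T, G g ω) + C ω = 1)
    -- the pair (g, t): a pre-treatment period, 2 ≤ t < g ≤ T
    (g t : ℕ) (ht : 2 ≤ t) (htg : t < g) (hgT : g ≤ T)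
    (hPg : 0 < P {ω | G g ω = 1}) (hPC : 0 < P {ω | C ω = 1})
    -- the generalized propensity score: a σ(X)-measurable version of E[G_g | X, G_g + C = 1]
    (p : Ω → ℝ)
    (hpmeas : Measurable[MeasurableSpace.comap X inferInstance] p)
    (hpver : p =ᵐ[P[|{ω | G g ω + C ω = 1}]]
      (P[|{ω | G g ω + C ω = 1}])[G g | MeasurableSpace.comap X inferInstance])
    -- overlap
    (ε : ℝ) (hε : 0 < ε)
    (hoverlap : ∀ᵐ ω ∂P, 0 ≤ p ω ∧ p ω ≤ 1 - ε) :
    -- the conditional pre-trends null hypothesis: there is a common version of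
    -- E[Y_t − Y_{t−1} | X, G_g = 1] and E[Y_t − Y_{t−1} | X, C = 1]
    (∃ m : (Fin k → ℝ) → ℝ, Measurable m ∧
      (fun ω => m (X ω)) =ᵐ[P[|{ω | G g ω = 1}]]
        (P[|{ω | G g ω = 1}])[fun ω => Y t ω - Y (t - 1) ω |
          MeasurableSpace.comap X inferInstance] ∧
      (fun ω => m (X ω)) =ᵐ[P[|{ω | C ω = 1}]]
        (P[|{ω | C ω = 1}])[fun ω => Y t ω - Y (t - 1) ω |
          MeasurableSpace.comap X inferInstance])
    ↔
    -- the weighted conditional moment restriction under the full measure P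
    (P[fun ω =>
        (G g ω / (∫ ω', G g ω' ∂P) -
          (p ω * C ω / (1 - p ω)) / (∫ ω', p ω' * C ω' / (1 - p ω') ∂P)) *
        (Y t ω - Y (t - 1) ω) |
      MeasurableSpace.comap X inferInstance]) =ᵐ[P] 0 := by
  classical
  have hm : MeasurableSpace.comap X inferInstance ≤ ‹MeasurableSpace Ω› := hXmeas.comap_le
  set Z : Ω → ℝ := fun ω => Y t ω - Y (t - 1) ω with hZdef
  have hZmeas : Measurable Z := (hYmeas t).sub (hYmeas (t - 1))
  have hZint : Integrable Z P := (hYint t).sub (hYint (t - 1))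
  have hg2 : 2 ≤ g := le_trans ht (le_of_lt htg)
  -- no unit is both in group g and control
  have hGC : ∀ ω, ¬(G g ω = 1 ∧ C ω = 1) := by
    rintro ω ⟨h1, h2⟩
    have hnn : ∀ i ∈ Finset.Icc 2 T, 0 ≤ G i ω := fun i _ => by
      rcases hG01 i ω with h | h <;> rw [h] <;> norm_num
    have hmem : g ∈ Finset.Icc 2 T := Finset.mem_Icc.mpr ⟨hg2, hgT⟩
    have hle : G g ω ≤ ∑ i ∈ Finset.Icc 2 T, G i ω := Finset.single_le_sum hnn hmem
    have h3 := hsum ω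
    rw [h1] at hle; rw [h2] at h3
    linarith
  set Ag : Set Ω := {ω | G g ω = 1} with hAgdef
  set Ac : Set Ω := {ω | C ω = 1} with hAcdef
  set D : Set Ω := {ω | G g ω + C ω = 1} with hDdef
  have hAg : MeasurableSet Ag := hGmeas g (measurableSet_singleton 1)
  have hAc : MeasurableSet Ac := hCmeas (measurableSet_singleton 1)
  have hD : MeasurableSet D := ((hGmeas g).add hCmeas) (measurableSet_singleton 1)
  -- indicator descriptions
  have hχAg : ∀ ω, G g ω = Ag.indicator (fun _ => (1:ℝ)) ω := by
    intro ω
    rcases hG01 g ω with h | h <;>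
      simp [Set.indicator_apply, hAgdef, Set.mem_setOf_eq, h]
  have hχAc : ∀ ω, C ω = Ac.indicator (fun _ => (1:ℝ)) ω := by
    intro ω
    rcases hC01 ω with h | h <;>
      simp [Set.indicator_apply, hAcdef, Set.mem_setOf_eq, h]
  have hχD : ∀ ω, G g ω + C ω = D.indicator (fun _ => (1:ℝ)) ω := by
    intro ω
    rcases hG01 g ω with h1 | h1 <;> rcases hC01 ω with h2 | h2 <;>
      simp [Set.indicator_apply, hDdef, Set.mem_setOf_eq, h1, h2]
    exact absurd ⟨h1, h2⟩ (hGC ω)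
  -- positivity
  have hPAg : P Ag ≠ 0 := hPg.ne'
  have hPAc : P Ac ≠ 0 := hPC.ne'
  have hAgD : Ag ⊆ D := by
    intro ω hω
    have h1 : G g ω = 1 := hω
    have h2 : C ω = 0 := by
      rcases hC01 ω with h | h
      · exact h
      · exact absurd ⟨h1, h⟩ (hGC ω)
    show G g ω + C ω = 1
    rw [h1, h2]; norm_num
  have hPD : P D ≠ 0 := fun h0 => hPAg (measure_mono_null hAgD h0)
  -- integrability of indicators
  have hG0 : ∀ ω, 0 ≤ G g ω := fun ω => by
    rcases hG01 g ω with h | h <;> rw [h] <;> norm_num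
  have hG1 : ∀ ω, G g ω ≤ 1 := fun ω => by
    rcases hG01 g ω with h | h <;> rw [h] <;> norm_num
  have hC0 : ∀ ω, 0 ≤ C ω := fun ω => by
    rcases hC01 ω with h | h <;> rw [h] <;> norm_num
  have hC1 : ∀ ω, C ω ≤ 1 := fun ω => by
    rcases hC01 ω with h | h <;> rw [h] <;> norm_num
  have hGint : Integrable (G g) P := chi_integrable P (hGmeas g) hG0 hG1
  have hCint : Integrable C P := chi_integrable P hCmeas hC0 hC1
  -- step 1 : p * E[1_D|(MeasurableSpace.comap X inferInstance)] = E[G g|(MeasurableSpace.comap X inferInstance)] a.e.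
  have hstep1 : (fun ω => p ω * (P[fun ω => G g ω + C ω|(MeasurableSpace.comap X inferInstance)]) ω) =ᵐ[P] P[G g|(MeasurableSpace.comap X inferInstance)] := by
    have h2 := (cond_condexp_ae_eq_iff hm P hD hχD hPD hGint hpmeas).mp hpver
    have h3 : (fun ω => (G g ω + C ω) * G g ω) = G g := funext fun ω => by
      rcases hG01 g ω with h1 | h1
      · rw [h1]; ring
      · have hc2 : C ω = 0 := by
          rcases hC01 ω with h | h
          · exact h
          · exact absurd ⟨h1, h⟩ (hGC ω)
        rw [h1, hc2]; ring
    rw [h3] at h2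
    exact h2
  have hsum_cond : P[fun ω => G g ω + C ω|(MeasurableSpace.comap X inferInstance)] =ᵐ[P] P[G g|(MeasurableSpace.comap X inferInstance)] + P[C|(MeasurableSpace.comap X inferInstance)] :=
    condExp_add hGint hCint _
  -- overlap consequences
  haveI : (MeasureTheory.ae P).NeBot := ae_neBot.mpr (IsProbabilityMeasure.ne_zero P)
  have hε1 : ε ≤ 1 := by
    by_contra hc
    obtain ⟨ω, h0, h1⟩ := hoverlap.exists
    linarith
  set φ : Ω → ℝ := fun ω => p ω / (1 - p ω) with hφdef
  have hφmX : Measurable[(MeasurableSpace.comap X inferInstance)] φ := hpmeas.div (measurable_const.sub hpmeas)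
  have hφSM : StronglyMeasurable[(MeasurableSpace.comap X inferInstance)] φ := hφmX.stronglyMeasurable
  have hφm : Measurable φ := hφmX.mono hm le_rfl
  have hpm : Measurable p := hpmeas.mono hm le_rfl
  have hφbd : ∀ᵐ ω ∂P, 0 ≤ φ ω ∧ φ ω ≤ (1 - ε) / ε := by
    filter_upwards [hoverlap] with ω h
    obtain ⟨h0, h1⟩ := h
    have h1p : ε ≤ 1 - p ω := by linarith
    constructor
    · exact div_nonneg h0 (by linarith)
    · exact div_le_div₀ (by linarith) h1 hε h1p
  -- integrable products
  have hCZint : Integrable (fun ω => C ω * Z ω) P := by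
    refine hZint.mono (hCmeas.aestronglyMeasurable.mul hZmeas.aestronglyMeasurable) ?_
    refine Filter.Eventually.of_forall fun ω => ?_
    rw [Real.norm_eq_abs, Real.norm_eq_abs, abs_mul, abs_of_nonneg (hC0 ω)]
    nlinarith [abs_nonneg (Z ω), hC0 ω, hC1 ω]
  have hGZint : Integrable (fun ω => G g ω * Z ω) P := by
    refine hZint.mono ((hGmeas g).aestronglyMeasurable.mul hZmeas.aestronglyMeasurable) ?_
    refine Filter.Eventually.of_forall fun ω => ?_
    rw [Real.norm_eq_abs, Real.norm_eq_abs, abs_mul, abs_of_nonneg (hG0 ω)]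
    nlinarith [abs_nonneg (Z ω), hG0 ω, hG1 ω]
  have hφCZint : Integrable (fun ω => φ ω * (C ω * Z ω)) P := by
    refine Integrable.mono' (hZint.abs.const_mul ((1 - ε) / ε))
      (hφm.aestronglyMeasurable.mul (hCmeas.aestronglyMeasurable.mul
        hZmeas.aestronglyMeasurable)) ?_
    filter_upwards [hφbd] with ω hb
    obtain ⟨hb0, hb1⟩ := hb
    rw [Real.norm_eq_abs, abs_mul, abs_mul, abs_of_nonneg hb0, abs_of_nonneg (hC0 ω)]
    have h1 : |Z ω| * C ω ≤ |Z ω| := by nlinarith [abs_nonneg (Z ω), hC0 ω, hC1 ω]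
    nlinarith [abs_nonneg (Z ω), hC0 ω, hC1 ω]
  have hφCint : Integrable (fun ω => φ ω * C ω) P := by
    refine Integrable.mono' (integrable_const ((1 - ε) / ε))
      (hφm.aestronglyMeasurable.mul hCmeas.aestronglyMeasurable) ?_
    filter_upwards [hφbd] with ω hb
    obtain ⟨hb0, hb1⟩ := hb
    rw [Real.norm_eq_abs, abs_mul, abs_of_nonneg hb0, abs_of_nonneg (hC0 ω)]
    nlinarith [hC0 ω, hC1 ω]
  -- the common a.e. pointwise computation: c = (1-p) d, a = p d
  have hptwise : ∀ᵐ ω ∂P, (P[C|(MeasurableSpace.comap X inferInstance)]) ω = (1 - p ω) * (P[fun ω => G g ω + C ω|(MeasurableSpace.comap X inferInstance)]) ω ∧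
      (P[G g|(MeasurableSpace.comap X inferInstance)]) ω = p ω * (P[fun ω => G g ω + C ω|(MeasurableSpace.comap X inferInstance)]) ω ∧ ε ≤ 1 - p ω := by
    filter_upwards [hstep1, hsum_cond, hoverlap] with ω h1 h2 h3
    obtain ⟨h30, h31⟩ := h3
    have h2' : (P[fun ω => G g ω + C ω|(MeasurableSpace.comap X inferInstance)]) ω = (P[G g|(MeasurableSpace.comap X inferInstance)]) ω + (P[C|(MeasurableSpace.comap X inferInstance)]) ω := h2
    refine ⟨?_, h1.symm, by linarith⟩
    have hr : (1 - p ω) * (P[fun ω => G g ω + C ω|(MeasurableSpace.comap X inferInstance)]) ω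
        = (P[fun ω => G g ω + C ω|(MeasurableSpace.comap X inferInstance)]) ω
          - p ω * (P[fun ω => G g ω + C ω|(MeasurableSpace.comap X inferInstance)]) ω := by
      ring
    rw [hr]
    linarith
  -- β = α
  have hβα : ∫ ω, p ω * C ω / (1 - p ω) ∂P = ∫ ω, G g ω ∂P := by
    have hVφ : (fun ω => p ω * C ω / (1 - p ω)) = fun ω => φ ω * C ω := funext fun ω => by
      rw [hφdef]; ring
    rw [hVφ]
    have hB := integral_mul_condexp_eq hm P hCmeas hC0 hC1 hφSM hφCint
    rw [← hB.2]
    have heq : (fun ω => φ ω * (P[C|(MeasurableSpace.comap X inferInstance)]) ω) =ᵐ[P] P[G g|(MeasurableSpace.comap X inferInstance)] := by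
      filter_upwards [hptwise] with ω h
      obtain ⟨hc, ha, hep⟩ := h
      have h1p : 1 - p ω ≠ 0 := by linarith
      rw [hc, ha, hφdef]
      field_simp
    rw [integral_congr_ae heq, integral_condExp hm]
  set α : ℝ := ∫ ω, G g ω ∂P with hαdef
  have hαval : α = (P Ag).toReal := by
    rw [hαdef, integral_congr_ae (Filter.Eventually.of_forall hχAg)]
    exact integral_indicator_one hAg
  have hαpos : 0 < α := by
    rw [hαval]
    exact ENNReal.toReal_pos hPAg (measure_ne_top P Ag)
  rw [hβα]
  -- decompose the weighted moment condexp
  set eg : Ω → ℝ := P[fun ω => G g ω * Z ω|(MeasurableSpace.comap X inferInstance)] with hegdef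
  set ec : Ω → ℝ := P[fun ω => C ω * Z ω|(MeasurableSpace.comap X inferInstance)] with hecdef
  have hW1 : (fun ω => (G g ω / α - p ω * C ω / (1 - p ω) / α) * Z ω)
      = ((α⁻¹ : ℝ) • fun ω => G g ω * Z ω) - (α⁻¹ : ℝ) • fun ω => φ ω * (C ω * Z ω) :=
    funext fun ω => by
      simp only [Pi.sub_apply, Pi.smul_apply, smul_eq_mul]
      rw [hφdef]; ring
  have h4 : (P[fun ω => φ ω * (C ω * Z ω)|(MeasurableSpace.comap X inferInstance)]) =ᵐ[P] fun ω => φ ω * ec ω := by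
    have h4' := condExp_mul_of_stronglyMeasurable_left (μ := P) (f := φ)
      (g := fun ω => C ω * Z ω) hφSM hφCZint hCZint
    exact h4'
  have h2' : (P[(α⁻¹ : ℝ) • fun ω => G g ω * Z ω|(MeasurableSpace.comap X inferInstance)]) =ᵐ[P] fun ω => α⁻¹ * eg ω := by
    refine (condExp_smul (m := (MeasurableSpace.comap X inferInstance)) (μ := P) (α⁻¹ : ℝ) (fun ω => G g ω * Z ω)).trans ?_
    exact Filter.Eventually.of_forall fun ω => by
      simp only [Pi.smul_apply, smul_eq_mul, hegdef]
  have h3' : (P[(α⁻¹ : ℝ) • fun ω => φ ω * (C ω * Z ω)|(MeasurableSpace.comap X inferInstance)])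
      =ᵐ[P] fun ω => α⁻¹ * (φ ω * ec ω) := by
    refine (condExp_smul (m := (MeasurableSpace.comap X inferInstance)) (μ := P) (α⁻¹ : ℝ) (fun ω => φ ω * (C ω * Z ω))).trans ?_
    filter_upwards [h4] with ω e4
    show α⁻¹ • (P[fun ω => φ ω * (C ω * Z ω)|(MeasurableSpace.comap X inferInstance)]) ω = α⁻¹ * (φ ω * ec ω)
    rw [e4]; simp [smul_eq_mul]
  have hchain : (P[fun ω => (G g ω / α - p ω * C ω / (1 - p ω) / α) * Z ω|(MeasurableSpace.comap X inferInstance)])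
      =ᵐ[P] fun ω => α⁻¹ * eg ω - α⁻¹ * (φ ω * ec ω) := by
    rw [hW1]
    refine (condExp_sub (m := (MeasurableSpace.comap X inferInstance)) (μ := P) (hGZint.smul (α⁻¹ : ℝ))
      (hφCZint.smul (α⁻¹ : ℝ))).trans ?_
    filter_upwards [h2', h3'] with ω e2 e3
    show (P[(α⁻¹ : ℝ) • fun ω => G g ω * Z ω|(MeasurableSpace.comap X inferInstance)]) ω
        - (P[(α⁻¹ : ℝ) • fun ω => φ ω * (C ω * Z ω)|(MeasurableSpace.comap X inferInstance)]) ω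
        = α⁻¹ * eg ω - α⁻¹ * (φ ω * ec ω)
    rw [e2, e3]
  -- the weighted moment restriction is equivalent to eg = φ * ec a.e.
  have hiff : ((P[fun ω => (G g ω / α - p ω * C ω / (1 - p ω) / α) * Z ω|(MeasurableSpace.comap X inferInstance)]) =ᵐ[P] 0)
      ↔ (eg =ᵐ[P] fun ω => φ ω * ec ω) := by
    constructor
    · intro hyp
      have := hchain.symm.trans hyp
      filter_upwards [this] with ω hω
      have hω' : α⁻¹ * eg ω - α⁻¹ * (φ ω * ec ω) = 0 := hω
      have hα' : α⁻¹ ≠ 0 := inv_ne_zero hαpos.ne'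
      have : α⁻¹ * (eg ω - φ ω * ec ω) = 0 := by ring_nf; ring_nf at hω'; linarith
      have h0 := (mul_eq_zero.mp this).resolve_left hα'
      linarith
    · intro hyp
      refine hchain.trans ?_
      filter_upwards [hyp] with ω hω
      show α⁻¹ * eg ω - α⁻¹ * (φ ω * ec ω) = 0
      rw [hω]; ring
  rw [hiff]
  -- translate the null via the bridging lemma
  have hLg : ∀ h : Ω → ℝ, Measurable[(MeasurableSpace.comap X inferInstance)] h →
      ((h =ᵐ[P[|Ag]] (P[|Ag])[Z|(MeasurableSpace.comap X inferInstance)]) ↔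
        ((fun ω => h ω * (P[G g|(MeasurableSpace.comap X inferInstance)]) ω) =ᵐ[P] eg)) := by
    intro h hh
    have := cond_condexp_ae_eq_iff hm P hAg hχAg hPAg hZint hh
    rwa [show P[fun ω => G g ω * Z ω|(MeasurableSpace.comap X inferInstance)] = eg from rfl] at this
  have hLc : ∀ h : Ω → ℝ, Measurable[(MeasurableSpace.comap X inferInstance)] h →
      ((h =ᵐ[P[|Ac]] (P[|Ac])[Z|(MeasurableSpace.comap X inferInstance)]) ↔
        ((fun ω => h ω * (P[C|(MeasurableSpace.comap X inferInstance)]) ω) =ᵐ[P] ec)) := by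
    intro h hh
    have := cond_condexp_ae_eq_iff hm P hAc hχAc hPAc hZint hh
    rwa [show P[fun ω => C ω * Z ω|(MeasurableSpace.comap X inferInstance)] = ec from rfl] at this
  constructor
  · rintro ⟨mf, hmf, hmg, hmc⟩
    have hXm : Measurable[(MeasurableSpace.comap X inferInstance)] fun ω => mf (X ω) := fun s hs => ⟨mf ⁻¹' s, hmf hs, rfl⟩
    have hga := (hLg _ hXm).mp hmg
    have hca := (hLc _ hXm).mp hmc
    filter_upwards [hga, hca, hptwise] with ω h1 h2 h3
    obtain ⟨hc, ha, hep⟩ := h3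
    have h1p : 1 - p ω ≠ 0 := by linarith
    -- eg ω = mf (X ω) * a ω, ec ω = mf (X ω) * c ω
    rw [← h1, ← h2, ha, hc, hφdef]
    field_simp
  · intro hyp
    set h : Ω → ℝ := fun ω => ec ω / (P[C|(MeasurableSpace.comap X inferInstance)]) ω with hhdef
    have hhm : Measurable[(MeasurableSpace.comap X inferInstance)] h :=
      (stronglyMeasurable_condExp.measurable).div (stronglyMeasurable_condExp.measurable)
    obtain ⟨mf, hmf, hfac⟩ := exists_factor hhm
    have hcm0 : ∀ᵐ ω ∂P, (P[C|(MeasurableSpace.comap X inferInstance)]) ω = 0 → ec ω = 0 := by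
      set S : Set Ω := {ω | (P[C|(MeasurableSpace.comap X inferInstance)]) ω = 0} with hSdef
      have hSmX : MeasurableSet[(MeasurableSpace.comap X inferInstance)] S :=
        stronglyMeasurable_condExp.measurable (measurableSet_singleton 0)
      have hS : MeasurableSet S := hm S hSmX
      have hSM' : StronglyMeasurable[(MeasurableSpace.comap X inferInstance)] (S.indicator fun _ => (1:ℝ)) :=
        stronglyMeasurable_const.indicator hSmX
      have hintSC : Integrable (fun ω => S.indicator (fun _ => (1:ℝ)) ω * C ω) P := by
        refine Integrable.mono' (integrable_const (1:ℝ))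
          (((measurable_const.indicator hS).mul hCmeas).aestronglyMeasurable) ?_
        refine Filter.Eventually.of_forall fun ω => ?_
        by_cases h1 : ω ∈ S <;>
          simp [Set.indicator_of_mem, Set.indicator_of_notMem, h1, abs_of_nonneg (hC0 ω),
            hC1 ω]
      have hB := integral_mul_condexp_eq hm P hCmeas hC0 hC1 hSM' hintSC
      have hIc0 : ∫ ω, S.indicator (fun _ => (1:ℝ)) ω * (P[C|(MeasurableSpace.comap X inferInstance)]) ω ∂P = 0 := by
        have hzz : (fun ω => S.indicator (fun _ => (1:ℝ)) ω * (P[C|(MeasurableSpace.comap X inferInstance)]) ω)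
            = fun _ => (0:ℝ) := funext fun ω => by
          by_cases h1 : ω ∈ S
          · have : (P[C|(MeasurableSpace.comap X inferInstance)]) ω = 0 := h1
            simp [this]
          · simp [Set.indicator_of_notMem, h1]
        rw [hzz]; simp
      have hICzero : ∫ ω, S.indicator (fun _ => (1:ℝ)) ω * C ω ∂P = 0 := by
        rw [← hB.2]; exact hIc0
      have hCzero : (fun ω => S.indicator (fun _ => (1:ℝ)) ω * C ω) =ᵐ[P] 0 := by
        refine (integral_eq_zero_iff_of_nonneg_ae ?_ hintSC).mp hICzero
        refine Filter.Eventually.of_forall fun ω => ?_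
        by_cases h1 : ω ∈ S <;>
          simp [Set.indicator_of_mem, Set.indicator_of_notMem, h1, hC0 ω]
      -- hence 1_S * (C*Z) = 0 a.e., so 1_S * ec = 0 a.e.
      have hintSCZ : Integrable (fun ω => S.indicator (fun _ => (1:ℝ)) ω * (C ω * Z ω)) P := by
        refine hCZint.mono (((measurable_const.indicator hS).mul
          (hCmeas.mul hZmeas)).aestronglyMeasurable) ?_
        refine Filter.Eventually.of_forall fun ω => ?_
        by_cases h1 : ω ∈ S
        · simp [Set.indicator_of_mem, h1]
        · rw [Set.indicator_of_notMem h1]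
          simp only [zero_mul, norm_zero]
          positivity
      have hpull := condExp_mul_of_stronglyMeasurable_left (μ := P)
        (f := S.indicator fun _ => (1:ℝ)) (g := fun ω => C ω * Z ω) hSM' hintSCZ hCZint
      have hzero2 : (fun ω => S.indicator (fun _ => (1:ℝ)) ω * (C ω * Z ω)) =ᵐ[P] 0 := by
        filter_upwards [hCzero] with ω hω
        by_cases h1 : ω ∈ S
        · have : C ω = 0 := by
            rw [Set.indicator_of_mem h1] at hω
            simpa using hω
          simp [this]
        · simp [Set.indicator_of_notMem, h1]
      have hzero3 : (P[fun ω => S.indicator (fun _ => (1:ℝ)) ω * (C ω * Z ω)|(MeasurableSpace.comap X inferInstance)]) =ᵐ[P] 0 := by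
        refine (condExp_congr_ae hzero2).trans ?_
        rw [condExp_zero]
      have hfinal : (fun ω => S.indicator (fun _ => (1:ℝ)) ω * ec ω) =ᵐ[P] 0 := by
        refine EventuallyEq.trans ?_ (hpull.symm.trans hzero3)
        exact Filter.Eventually.of_forall fun ω => rfl
      filter_upwards [hfinal] with ω hω h0
      have h1 : ω ∈ S := h0
      rw [Set.indicator_of_mem h1] at hω
      simpa using hω
    -- h * c = ec a.e., h * a = eg a.e.
    have hi : (fun ω => h ω * (P[C|(MeasurableSpace.comap X inferInstance)]) ω) =ᵐ[P] ec := by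
      filter_upwards [hcm0] with ω h0
      by_cases h1 : (P[C|(MeasurableSpace.comap X inferInstance)]) ω = 0
      · rw [hhdef]
        simp only [h1, mul_zero]
        exact (h0 h1).symm
      · rw [hhdef]
        exact div_mul_cancel₀ _ h1
    have hii : (fun ω => h ω * (P[G g|(MeasurableSpace.comap X inferInstance)]) ω) =ᵐ[P] eg := by
      filter_upwards [hyp, hi, hptwise] with ω h1 h2 h3
      obtain ⟨hc, ha, hep⟩ := h3
      have h1p : 1 - p ω ≠ 0 := by linarith
      -- eg ω = φ ω * ec ω = φ ω * (h ω * c ω) = h ω * (p ω * d ω) = h ω * a ω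
      rw [h1, ← h2, ha, hc, hφdef]
      field_simp
    have hfuneq : (fun ω => mf (X ω)) = h := funext hfac
    refine ⟨mf, hmf, ?_, ?_⟩
    · rw [hfuneq]
      exact (hLg h hhm).mpr hii
    · rw [hfuneq]
      exact (hLc h hhm).mpr hi
end

section
/- Suppose the augmented conditional parallel trends assumption holds for the pair (g,t) with 2 ≤ t < g ≤ T, together with overlap. Then the placebo (pre-treatment) weighted DID estimand is zero: E[(w_g^G − w_g^C)(Y_t − Y_{t−1})] = 0, and more generally E[(w_g^G − w_g^C) 1{X ≤ u} (Y_t − Y_{t−1})] = 0 for every u ∈ ℝ^k. -/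
open MeasureTheory ProbabilityTheory
open scoped Classical

namespace PlaceboAux

variable {Ω : Type*} [MeasurableSpace Ω] {μ : Measure Ω}

lemma integral_cond_eq (s : Set Ω) (h : Ω → ℝ) :
    ∫ ω, h ω ∂(μ[|s]) = (μ s).toReal⁻¹ * ∫ ω in s, h ω ∂μ := by
  rw [ProbabilityTheory.cond, integral_smul_measure, ENNReal.toReal_inv, smul_eq_mul]

lemma setIntegral_eq_cond (s : Set Ω) (hs0 : μ s ≠ 0) (hst : μ s ≠ ⊤) (h : Ω → ℝ) :
    ∫ ω in s, h ω ∂μ = (μ s).toReal * ∫ ω, h ω ∂(μ[|s]) := by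
  rw [integral_cond_eq, ← mul_assoc, mul_inv_cancel₀ (ENNReal.toReal_ne_zero.2 ⟨hs0, hst⟩),
    one_mul]

lemma integrable_cond_of_integrable (s : Set Ω) (hs0 : μ s ≠ 0) {h : Ω → ℝ}
    (hh : Integrable h μ) : Integrable h (μ[|s]) := by
  have : Integrable h (μ.restrict s) := hh.restrict
  exact this.smul_measure (ENNReal.inv_ne_top.2 hs0)

lemma integrableOn_of_integrable_cond (s : Set Ω) (hs0 : μ s ≠ 0) (hst : μ s ≠ ⊤) {h : Ω → ℝ}
    (hh : Integrable h (μ[|s])) : IntegrableOn h s μ := by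
  rw [ProbabilityTheory.cond] at hh
  exact (integrable_smul_measure (ENNReal.inv_ne_zero.2 hst) (ENNReal.inv_ne_top.2 hs0)).1 hh

omit [MeasurableSpace Ω] in
lemma pullout {m0 : MeasurableSpace Ω} (μ : Measure Ω) [IsProbabilityMeasure μ]
    {𝔪 : MeasurableSpace Ω} (h𝔪 : 𝔪 ≤ m0)
    {r h : Ω → ℝ} (hr : Measurable[𝔪] r)
    (hrh : Integrable (fun ω => r ω * h ω) μ) (hh : Integrable h μ) :
    ∫ ω, r ω * h ω ∂μ = ∫ ω, r ω * (μ[h|𝔪]) ω ∂μ := by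
  have hmul : μ[r * h|𝔪] =ᵐ[μ] r * μ[h|𝔪] :=
    condExp_mul_of_stronglyMeasurable_left hr.stronglyMeasurable hrh hh
  calc ∫ ω, r ω * h ω ∂μ = ∫ ω, (μ[r * h|𝔪]) ω ∂μ := (integral_condExp (μ := μ) h𝔪).symm
    _ = ∫ ω, (r * μ[h|𝔪]) ω ∂μ := integral_congr_ae hmul
    _ = ∫ ω, r ω * (μ[h|𝔪]) ω ∂μ := rfl

end PlaceboAux

open PlaceboAux

/-- placebo pre-treatment moments vanish under the augmented
conditional parallel trends assumption.  For `2 ≤ t < g ≤ T`, under augmented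
conditional parallel trends for `(g,t)` together with overlap,
`E[(w_g^G − w_g^C)(Y_t − Y_{t−1})] = 0` and, more generally,
`E[(w_g^G − w_g^C) 1{X ≤ u} (Y_t − Y_{t−1})] = 0` for every `u ∈ ℝ^k`. -/
theorem placebo_moments_vanish
    {Ω : Type*} [MeasurableSpace Ω] (P : Measure Ω) [IsProbabilityMeasure P]
    (k T : ℕ) (hT : 2 ≤ T)
    -- potential outcomes, observed outcomes, covariates, group/control indicators
    (Y0 Y1 Y : ℕ → Ω → ℝ) (X : Ω → (Fin k → ℝ)) (G : ℕ → Ω → ℝ) (C : Ω → ℝ)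
    -- measurability and integrability
    (hY0meas : ∀ s, Measurable (Y0 s)) (hY1meas : ∀ s, Measurable (Y1 s))
    (hY0int : ∀ s, Integrable (Y0 s) P) (hY1int : ∀ s, Integrable (Y1 s) P)
    (hXmeas : Measurable X) (hGmeas : ∀ g, Measurable (G g)) (hCmeas : Measurable C)
    -- indicator structure
    (hG01 : ∀ g ω, G g ω = 0 ∨ G g ω = 1)
    (hC01 : ∀ ω, C ω = 0 ∨ C ω = 1)
    (hsum : ∀ ω, (∑ g ∈ Finset.Icc 2 T, G g ω) + C ω = 1)
    -- observed outcomes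
    (hobs : ∀ s ω, Y s ω =
      if ∃ g', 2 ≤ g' ∧ g' ≤ s ∧ G g' ω = 1 then Y1 s ω else Y0 s ω)
    -- the pair (g, t): a pre-treatment period, 2 ≤ t < g ≤ T
    (g t : ℕ) (ht : 2 ≤ t) (htg : t < g) (hgT : g ≤ T)
    (hPg : 0 < P {ω | G g ω = 1}) (hPC : 0 < P {ω | C ω = 1})
    -- the generalized propensity score: a σ(X)-measurable version of E[G_g | X, G_g + C = 1]
    (p : Ω → ℝ)
    (hpmeas : Measurable[MeasurableSpace.comap X inferInstance] p)
    (hpver : p =ᵐ[P[|{ω | G g ω + C ω = 1}]]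
      (P[|{ω | G g ω + C ω = 1}])[G g | MeasurableSpace.comap X inferInstance])
    -- overlap
    (ε : ℝ) (hε : 0 < ε)
    (hoverlap : ∀ᵐ ω ∂P, 0 ≤ p ω ∧ p ω ≤ 1 - ε)
    -- augmented conditional parallel trends for the pair (g, t)
    (m : (Fin k → ℝ) → ℝ) (hmmeas : Measurable m)
    (hmG : (fun ω => m (X ω)) =ᵐ[P[|{ω | G g ω = 1}]]
      (P[|{ω | G g ω = 1}])[fun ω => Y0 t ω - Y0 (t - 1) ω |
        MeasurableSpace.comap X inferInstance])
    (hmC : (fun ω => m (X ω)) =ᵐ[P[|{ω | C ω = 1}]]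
      (P[|{ω | C ω = 1}])[fun ω => Y0 t ω - Y0 (t - 1) ω |
        MeasurableSpace.comap X inferInstance]) :
    -- conclusion: the placebo weighted DID estimand is zero, pointwise in u as well
    (∫ ω,
        (G g ω / (∫ ω', G g ω' ∂P) -
          (p ω * C ω / (1 - p ω)) / (∫ ω', p ω' * C ω' / (1 - p ω') ∂P)) *
        (Y t ω - Y (t - 1) ω) ∂P = 0) ∧
    (∀ u : Fin k → ℝ,
      ∫ ω,
        (G g ω / (∫ ω', G g ω' ∂P) -
          (p ω * C ω / (1 - p ω)) / (∫ ω', p ω' * C ω' / (1 - p ω') ∂P)) *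
        (if ∀ j, X ω j ≤ u j then (1 : ℝ) else 0) * (Y t ω - Y (t - 1) ω) ∂P = 0) := by
  classical
  have h𝔪le : MeasurableSpace.comap X inferInstance ≤ ‹MeasurableSpace Ω› := hXmeas.comap_le
  have hXm : Measurable[MeasurableSpace.comap X inferInstance] X := measurable_iff_comap_le.2 le_rfl
  have hpM : Measurable p := hpmeas.mono h𝔪le le_rfl
  set D : Set Ω := {ω | G g ω + C ω = 1} with hDdef
  set G1 : Set Ω := {ω | G g ω = 1} with hG1def
  set C1 : Set Ω := {ω | C ω = 1} with hC1def
  have hG1m : MeasurableSet G1 := hGmeas g (measurableSet_singleton 1)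
  have hC1m : MeasurableSet C1 := hCmeas (measurableSet_singleton 1)
  have hDm : MeasurableSet D := ((hGmeas g).add hCmeas) (measurableSet_singleton 1)
  have hGnn : ∀ g' ω, (0:ℝ) ≤ G g' ω := fun g' ω => by rcases hG01 g' ω with h | h <;> simp [h]
  have hCnn : ∀ ω, (0:ℝ) ≤ C ω := fun ω => by rcases hC01 ω with h | h <;> simp [h]
  have hgIcc : g ∈ Finset.Icc 2 T := Finset.mem_Icc.2 ⟨le_trans ht htg.le, hgT⟩
  have htT : t ≤ T := le_trans htg.le hgT
  have hGone : ∀ ω, G g ω = 1 → C ω = 0 ∧ ∀ g' ∈ Finset.Icc 2 T, g' ≠ g → G g' ω = 0 := by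
    intro ω hω
    have hsum' := hsum ω
    have herase : G g ω + ∑ g' ∈ (Finset.Icc 2 T).erase g, G g' ω
        = ∑ g' ∈ Finset.Icc 2 T, G g' ω := Finset.add_sum_erase _ (fun i => G i ω) hgIcc
    have hrest : 0 ≤ ∑ g' ∈ (Finset.Icc 2 T).erase g, G g' ω :=
      Finset.sum_nonneg fun i _ => hGnn i ω
    have hR : ∑ g' ∈ (Finset.Icc 2 T).erase g, G g' ω = 0 ∧ C ω = 0 := by
      constructor <;> linarith [hCnn ω]
    refine ⟨hR.2, fun g' hg' hne => ?_⟩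
    exact (Finset.sum_eq_zero_iff_of_nonneg (fun i _ => hGnn i ω)).1 hR.1 g'
      (Finset.mem_erase.2 ⟨hne, hg'⟩)
  have hCone : ∀ ω, C ω = 1 → ∀ g' ∈ Finset.Icc 2 T, G g' ω = 0 := by
    intro ω hω g' hg'
    have hsum' := hsum ω
    have hS : ∑ g'' ∈ Finset.Icc 2 T, G g'' ω = 0 := by linarith
    exact (Finset.sum_eq_zero_iff_of_nonneg fun i _ => hGnn i ω).1 hS g' hg'
  have hDunion : ∀ ω, ω ∈ D ↔ (G g ω = 1 ∨ C ω = 1) := by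
    intro ω
    simp only [hDdef, Set.mem_setOf_eq]
    constructor
    · intro h
      rcases hG01 g ω with h0 | h1
      · rcases hC01 ω with hc0 | hc1
        · rw [h0, hc0] at h; norm_num at h
        · exact Or.inr hc1
      · exact Or.inl h1
    · rintro (h | h)
      · rw [h, (hGone ω h).1]; norm_num
      · rw [h, hCone ω h g hgIcc]; norm_num
  have hGoff : ∀ ω, ω ∉ D → G g ω = 0 := by
    intro ω h
    rcases hG01 g ω with h0 | h1
    · exact h0
    · exact absurd ((hDunion ω).2 (Or.inl h1)) h
  have hCoff : ∀ ω, ω ∉ D → C ω = 0 := by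
    intro ω h
    rcases hC01 ω with h0 | h1
    · exact h0
    · exact absurd ((hDunion ω).2 (Or.inr h1)) h
  have hYeq : ∀ ω, ω ∈ D → Y t ω - Y (t-1) ω = Y0 t ω - Y0 (t-1) ω := by
    intro ω hω
    have hkey : ∀ s, s ≤ t → Y s ω = Y0 s ω := by
      intro s hst
      rw [hobs s ω, if_neg]
      rintro ⟨g', h2, hgs, h1⟩
      have hg'Icc : g' ∈ Finset.Icc 2 T := Finset.mem_Icc.2 ⟨h2, le_trans (le_trans hgs hst) htT⟩
      rcases (hDunion ω).1 hω with hG | hC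
      · have hne : g' ≠ g := by omega
        rw [(hGone ω hG).2 g' hg'Icc hne] at h1
        norm_num at h1
      · rw [hCone ω hC g' hg'Icc] at h1
        norm_num at h1
    rw [hkey t le_rfl, hkey (t-1) (Nat.sub_le t 1)]
  -- overlap consequences
  have hovb : ∀ᵐ ω ∂P, ‖p ω / (1 - p ω)‖ ≤ (1-ε)/ε ∧ ‖p ω‖ ≤ 1 ∧ (1 - p ω) ≠ 0 := by
    filter_upwards [hoverlap] with ω hov
    obtain ⟨h0, h1⟩ := hov
    have hε1 : ε ≤ 1 - p ω := by linarith
    have h1p : 0 < 1 - p ω := lt_of_lt_of_le hε hε1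
    refine ⟨?_, ?_, ne_of_gt h1p⟩
    · rw [Real.norm_eq_abs, abs_of_nonneg (div_nonneg h0 h1p.le), div_le_div_iff₀ h1p hε]
      nlinarith
    · rw [Real.norm_eq_abs, abs_of_nonneg h0]; linarith
  have hwmeas : Measurable (fun ω => p ω * C ω / (1 - p ω)) :=
    (hpM.mul hCmeas).div (measurable_const.sub hpM)
  have hwbound : ∀ᵐ ω ∂P, ‖p ω * C ω / (1 - p ω)‖ ≤ (1-ε)/ε := by
    filter_upwards [hovb] with ω hov
    obtain ⟨h1, -, -⟩ := hov
    have hC1' : ‖C ω‖ ≤ 1 := by rcases hC01 ω with h | h <;> simp [h]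
    calc ‖p ω * C ω / (1 - p ω)‖ = ‖p ω / (1 - p ω)‖ * ‖C ω‖ := by
          rw [show p ω * C ω / (1 - p ω) = p ω / (1 - p ω) * C ω from by ring, norm_mul]
      _ ≤ (1-ε)/ε * 1 := mul_le_mul h1 hC1' (norm_nonneg _) (le_trans (norm_nonneg _) h1)
      _ = (1-ε)/ε := mul_one _
  -- measure positivity
  have hPG1 : P G1 ≠ 0 := hPg.ne'
  have hPC1 : P C1 ≠ 0 := hPC.ne'
  have hG1D : G1 ⊆ D := fun ω h => (hDunion ω).2 (Or.inl h)
  have hC1D : C1 ⊆ D := fun ω h => (hDunion ω).2 (Or.inr h)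
  have hPD : P D ≠ 0 := by
    intro h
    exact hPG1 (le_antisymm (le_trans (measure_mono hG1D) h.le) (by simp))
  haveI hprobD : IsProbabilityMeasure (P[|D]) := cond_isProbabilityMeasure hPD
  have hmemD : ∀ᵐ ω ∂P[|D], ω ∈ D := by
    show ∀ᵐ ω ∂((P D)⁻¹ • P.restrict D), ω ∈ D
    exact Measure.ae_smul_measure (ae_restrict_mem hDm) _
  have hdY0int : Integrable (fun ω => Y0 t ω - Y0 (t-1) ω) P := (hY0int t).sub (hY0int (t-1))
  -- integrability of m ∘ X
  have hmint : ∀ (s : Set Ω), P s ≠ 0 →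
      ((fun ω => m (X ω)) =ᵐ[P[|s]]
        (P[|s])[(fun ω => Y0 t ω - Y0 (t - 1) ω)|MeasurableSpace.comap X inferInstance]) →
      IntegrableOn (fun ω => m (X ω)) s P := by
    intro s hs0 hv
    exact integrableOn_of_integrable_cond s hs0 (measure_ne_top P s)
      (integrable_condExp.congr hv.symm)
  have hmG1int := hmint G1 hPG1 hmG
  have hmC1int := hmint C1 hPC1 hmC
  have hmDint : IntegrableOn (fun ω => m (X ω)) D P := by
    have hDu : D = G1 ∪ C1 := Set.ext fun ω => by
      simpa [hG1def, hC1def, Set.mem_union] using hDunion ω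
    rw [hDu]
    exact hmG1int.union hmC1int
  have hmνint : Integrable (fun ω => m (X ω)) (P[|D]) := by
    show Integrable _ ((P D)⁻¹ • P.restrict D)
    exact hmDint.smul_measure (ENNReal.inv_ne_top.2 hPD)
  -- replacing the outcome trend by m ∘ X on a conditioning set
  have swap_m : ∀ (s : Set Ω), MeasurableSet s → P s ≠ 0 →
      ((fun ω => m (X ω)) =ᵐ[P[|s]]
        (P[|s])[(fun ω => Y0 t ω - Y0 (t - 1) ω)|MeasurableSpace.comap X inferInstance]) →
      ∀ (v : Ω → ℝ), Measurable[MeasurableSpace.comap X inferInstance] v →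
      ∀ (Bv : ℝ), (∀ᵐ ω ∂P, ‖v ω‖ ≤ Bv) →
      ∫ ω in s, v ω * (Y0 t ω - Y0 (t-1) ω) ∂P = ∫ ω in s, v ω * m (X ω) ∂P := by
    intro s hs hs0 hver v hv Bv hvb
    haveI : IsProbabilityMeasure (P[|s]) := cond_isProbabilityMeasure hs0
    have hint1 : Integrable (fun ω => Y0 t ω - Y0 (t-1) ω) (P[|s]) :=
      integrable_cond_of_integrable s hs0 hdY0int
    have hvb' : ∀ᵐ ω ∂P[|s], ‖v ω‖ ≤ Bv := hvb.filter_mono cond_absolutelyContinuous.ae_le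
    have hvmeas : AEStronglyMeasurable v (P[|s]) := (hv.mono h𝔪le le_rfl).aestronglyMeasurable
    have hint2 : Integrable (fun ω => v ω * (Y0 t ω - Y0 (t-1) ω)) (P[|s]) :=
      hint1.bdd_mul hvmeas hvb'
    rw [setIntegral_eq_cond s hs0 (measure_ne_top P s),
      setIntegral_eq_cond s hs0 (measure_ne_top P s)]
    congr 1
    calc ∫ ω, v ω * (Y0 t ω - Y0 (t-1) ω) ∂P[|s]
        = ∫ ω, v ω *
            ((P[|s])[(fun ω => Y0 t ω - Y0 (t - 1) ω)|MeasurableSpace.comap X inferInstance]) ω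
            ∂P[|s] := pullout (P[|s]) h𝔪le hv hint2 hint1
      _ = ∫ ω, v ω * m (X ω) ∂P[|s] := integral_congr_ae (hver.mono fun ω h => by
            dsimp only at h ⊢
            rw [h])
  -- indicator reductions
  have indG : ∀ h : Ω → ℝ, ∫ ω, G g ω * h ω ∂P = ∫ ω in G1, h ω ∂P := by
    intro h
    rw [← integral_indicator hG1m]
    congr 1
    funext ω
    by_cases hω : G g ω = 1
    · have hmem : ω ∈ G1 := hω
      rw [Set.indicator_of_mem hmem, hω, one_mul]
    · have hmem : ω ∉ G1 := hω
      rw [Set.indicator_of_notMem hmem, (hG01 g ω).resolve_right hω, zero_mul]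
  have indC : ∀ h : Ω → ℝ, ∫ ω, C ω * h ω ∂P = ∫ ω in C1, h ω ∂P := by
    intro h
    rw [← integral_indicator hC1m]
    congr 1
    funext ω
    by_cases hω : C ω = 1
    · have hmem : ω ∈ C1 := hω
      rw [Set.indicator_of_mem hmem, hω, one_mul]
    · have hmem : ω ∉ C1 := hω
      rw [Set.indicator_of_notMem hmem, (hC01 ω).resolve_right hω, zero_mul]
  -- main replacement steps
  have stepG : ∀ (f : Ω → ℝ), Measurable[MeasurableSpace.comap X inferInstance] f →
      (∀ ω, ‖f ω‖ ≤ 1) →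
      ∫ ω, G g ω * (f ω * (Y0 t ω - Y0 (t-1) ω)) ∂P = ∫ ω, G g ω * (f ω * m (X ω)) ∂P := by
    intro f hf hfb
    rw [indG, indG]
    exact swap_m G1 hG1m hPG1 hmG f hf 1 (ae_of_all _ hfb)
  have stepC : ∀ (f : Ω → ℝ), Measurable[MeasurableSpace.comap X inferInstance] f →
      (∀ ω, ‖f ω‖ ≤ 1) →
      ∫ ω, (p ω * C ω / (1 - p ω)) * (f ω * (Y0 t ω - Y0 (t-1) ω)) ∂P
        = ∫ ω, (p ω * C ω / (1 - p ω)) * (f ω * m (X ω)) ∂P := by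
    intro f hf hfb
    have hvmeas : Measurable[MeasurableSpace.comap X inferInstance]
        (fun ω => p ω / (1 - p ω) * f ω) :=
      (hpmeas.div (measurable_const.sub hpmeas)).mul hf
    have hvb : ∀ᵐ ω ∂P, ‖p ω / (1 - p ω) * f ω‖ ≤ (1-ε)/ε := by
      filter_upwards [hovb] with ω hov
      obtain ⟨h1, -, -⟩ := hov
      calc ‖p ω / (1 - p ω) * f ω‖ = ‖p ω / (1 - p ω)‖ * ‖f ω‖ := norm_mul _ _
        _ ≤ (1-ε)/ε * 1 := mul_le_mul h1 (hfb ω) (norm_nonneg _) (le_trans (norm_nonneg _) h1)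
        _ = (1-ε)/ε := mul_one _
    have e1 : ∫ ω, (p ω * C ω / (1 - p ω)) * (f ω * (Y0 t ω - Y0 (t-1) ω)) ∂P
        = ∫ ω, C ω * ((p ω / (1 - p ω) * f ω) * (Y0 t ω - Y0 (t-1) ω)) ∂P := by
      congr 1
      funext ω
      ring
    have e2 : ∫ ω, (p ω * C ω / (1 - p ω)) * (f ω * m (X ω)) ∂P
        = ∫ ω, C ω * ((p ω / (1 - p ω) * f ω) * m (X ω)) ∂P := by
      congr 1
      funext ω
      ring
    rw [e1, e2, indC, indC]
    exact swap_m C1 hC1m hPC1 hmC _ hvmeas ((1-ε)/ε) hvb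
  -- propensity pull-out on the conditioning set D
  have hpae : ∀ᵐ ω ∂P[|D], ‖p ω / (1 - p ω)‖ ≤ (1-ε)/ε ∧ ‖p ω‖ ≤ 1 ∧ (1 - p ω) ≠ 0 :=
    hovb.filter_mono cond_absolutelyContinuous.ae_le
  have hGb : ∀ ω, ‖G g ω‖ ≤ 1 := fun ω => by rcases hG01 g ω with h | h <;> simp [h]
  have pull : ∀ r : Ω → ℝ, Measurable[MeasurableSpace.comap X inferInstance] r →
      Integrable r (P[|D]) →
      ∫ ω, r ω * G g ω ∂P[|D] = ∫ ω, r ω * p ω ∂P[|D] := by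
    intro r hr hrint
    have hGint : Integrable (G g) (P[|D]) :=
      Integrable.mono' (integrable_const 1) ((hGmeas g).aestronglyMeasurable)
        (ae_of_all _ hGb)
    have hrG : Integrable (fun ω => r ω * G g ω) (P[|D]) := by
      have h1 := hrint.bdd_mul ((hGmeas g).aestronglyMeasurable) (ae_of_all _ hGb)
      exact h1.congr (ae_of_all _ fun ω => mul_comm _ _)
    calc ∫ ω, r ω * G g ω ∂P[|D]
        = ∫ ω, r ω * ((P[|D])[G g|MeasurableSpace.comap X inferInstance]) ω ∂P[|D] :=
          pullout (P[|D]) h𝔪le hr hrG hGint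
      _ = ∫ ω, r ω * p ω ∂P[|D] := integral_congr_ae (hpver.mono fun ω h => by dsimp only at h ⊢; rw [h])
  -- the key identity on D
  have swapGC : ∀ q : Ω → ℝ, Measurable[MeasurableSpace.comap X inferInstance] q →
      Integrable q (P[|D]) →
      ∫ ω, G g ω * q ω ∂P[|D] = ∫ ω, (p ω * C ω / (1 - p ω)) * q ω ∂P[|D] := by
    intro q hq hqint
    have A : ∫ ω, q ω * G g ω ∂P[|D] = ∫ ω, q ω * p ω ∂P[|D] := pull q hq hqint
    have hr2meas : Measurable[MeasurableSpace.comap X inferInstance]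
        (fun ω => p ω / (1 - p ω) * q ω) :=
      (hpmeas.div (measurable_const.sub hpmeas)).mul hq
    have hr2int : Integrable (fun ω => p ω / (1 - p ω) * q ω) (P[|D]) :=
      hqint.bdd_mul ((hpM.div (measurable_const.sub hpM)).aestronglyMeasurable)
        (hpae.mono fun ω h => h.1)
    have B := pull _ hr2meas hr2int
    have hrpint : Integrable (fun ω => (p ω / (1 - p ω) * q ω) * p ω) (P[|D]) := by
      have h1 := hr2int.bdd_mul (hpM.aestronglyMeasurable) (hpae.mono fun ω h => h.2.1)
      exact h1.congr (ae_of_all _ fun ω => mul_comm _ _)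
    have hrGint : Integrable (fun ω => (p ω / (1 - p ω) * q ω) * G g ω) (P[|D]) := by
      have h1 := hr2int.bdd_mul ((hGmeas g).aestronglyMeasurable) (ae_of_all _ hGb)
      exact h1.congr (ae_of_all _ fun ω => mul_comm _ _)
    have hCD : ∀ᵐ ω ∂P[|D], C ω = 1 - G g ω := by
      filter_upwards [hmemD] with ω hω
      have h1 : G g ω + C ω = 1 := hω
      linarith
    have hwq : ∫ ω, (p ω * C ω / (1 - p ω)) * q ω ∂P[|D]
        = ∫ ω, (p ω / (1 - p ω) * q ω - (p ω / (1 - p ω) * q ω) * G g ω) ∂P[|D] := by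
      refine integral_congr_ae (hCD.mono fun ω hc => ?_)
      dsimp only
      rw [hc]
      ring
    have hsub : ∫ ω, (p ω / (1 - p ω) * q ω - (p ω / (1 - p ω) * q ω) * G g ω) ∂P[|D]
        = ∫ ω, p ω / (1 - p ω) * q ω ∂P[|D] - ∫ ω, (p ω / (1 - p ω) * q ω) * G g ω ∂P[|D] :=
      integral_sub hr2int hrGint
    have hfin : ∫ ω, p ω / (1 - p ω) * q ω ∂P[|D] - ∫ ω, (p ω / (1 - p ω) * q ω) * p ω ∂P[|D]
        = ∫ ω, q ω * p ω ∂P[|D] := by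
      rw [← integral_sub hr2int hrpint]
      refine integral_congr_ae (hpae.mono fun ω h => ?_)
      obtain ⟨-, -, h1p⟩ := h
      dsimp only
      field_simp
    rw [hwq, hsub, B, hfin, ← A]
    exact integral_congr_ae (ae_of_all _ fun ω => mul_comm _ _)
  -- transfer from P to P[|D]
  have toD : ∀ h : Ω → ℝ, (∀ ω, ω ∉ D → h ω = 0) →
      ∫ ω, h ω ∂P = (P D).toReal * ∫ ω, h ω ∂P[|D] := by
    intro h h0
    rw [← setIntegral_eq_cond D hPD (measure_ne_top P D) h]
    exact (setIntegral_eq_integral_of_forall_compl_eq_zero fun ω hω => h0 ω hω).symm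
  -- the master statement, uniform in the bounded σ(X)-measurable weight f
  have key : ∀ (f : Ω → ℝ), Measurable[MeasurableSpace.comap X inferInstance] f →
      (∀ ω, ‖f ω‖ ≤ 1) →
      ∫ ω, (G g ω / (∫ ω', G g ω' ∂P) -
          (p ω * C ω / (1 - p ω)) / (∫ ω', p ω' * C ω' / (1 - p ω') ∂P)) *
          f ω * (Y t ω - Y (t - 1) ω) ∂P = 0 := by
    intro f hf hfb
    have hfM : Measurable f := hf.mono h𝔪le le_rfl
    have hintG : Integrable (fun ω => G g ω * (f ω * (Y0 t ω - Y0 (t-1) ω))) P := by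
      have hb1 : ∀ᵐ ω ∂P, ‖G g ω * f ω‖ ≤ 1 := ae_of_all _ fun ω => by
        rw [norm_mul]
        calc ‖G g ω‖ * ‖f ω‖ ≤ 1 * 1 := mul_le_mul (hGb ω) (hfb ω) (norm_nonneg _) zero_le_one
          _ = 1 := mul_one 1
      have h1 := hdY0int.bdd_mul (((hGmeas g).mul hfM).aestronglyMeasurable) hb1
      exact h1.congr (ae_of_all _ fun ω => mul_assoc _ _ _)
    have hintC : Integrable
        (fun ω => (p ω * C ω / (1 - p ω)) * (f ω * (Y0 t ω - Y0 (t-1) ω))) P := by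
      have hb1 : ∀ᵐ ω ∂P, ‖(p ω * C ω / (1 - p ω)) * f ω‖ ≤ (1-ε)/ε := by
        filter_upwards [hwbound] with ω h
        rw [norm_mul]
        calc ‖p ω * C ω / (1 - p ω)‖ * ‖f ω‖ ≤ (1-ε)/ε * 1 :=
            mul_le_mul h (hfb ω) (norm_nonneg _) (le_trans (norm_nonneg _) h)
          _ = (1-ε)/ε := mul_one _
      have h1 := hdY0int.bdd_mul ((hwmeas.mul hfM).aestronglyMeasurable) hb1
      exact h1.congr (ae_of_all _ fun ω => mul_assoc _ _ _)
    have hrw : ∀ ω, (G g ω / (∫ ω', G g ω' ∂P) -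
          (p ω * C ω / (1 - p ω)) / (∫ ω', p ω' * C ω' / (1 - p ω') ∂P)) *
          f ω * (Y t ω - Y (t - 1) ω)
        = (∫ ω', G g ω' ∂P)⁻¹ * (G g ω * (f ω * (Y0 t ω - Y0 (t-1) ω)))
          - (∫ ω', p ω' * C ω' / (1 - p ω') ∂P)⁻¹ *
            ((p ω * C ω / (1 - p ω)) * (f ω * (Y0 t ω - Y0 (t-1) ω))) := by
      intro ω
      by_cases hω : ω ∈ D
      · rw [hYeq ω hω]; ring
      · rw [hGoff ω hω, hCoff ω hω]; simp
    have hqfm : Integrable (fun ω => f ω * m (X ω)) (P[|D]) :=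
      hmνint.bdd_mul (hfM.aestronglyMeasurable) (ae_of_all _ hfb)
    have hGm_off : ∀ ω, ω ∉ D → G g ω * (f ω * m (X ω)) = 0 := fun ω h => by
      rw [hGoff ω h, zero_mul]
    have hwm_off : ∀ ω, ω ∉ D → (p ω * C ω / (1 - p ω)) * (f ω * m (X ω)) = 0 := fun ω h => by
      rw [hCoff ω h]; simp
    have heqm : ∫ ω, G g ω * (f ω * m (X ω)) ∂P
        = ∫ ω, (p ω * C ω / (1 - p ω)) * (f ω * m (X ω)) ∂P := by
      rw [toD _ hGm_off, toD _ hwm_off,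
        swapGC (fun ω => f ω * m (X ω)) (hf.mul (hmmeas.comp hXm)) hqfm]
    have hab : (∫ ω', G g ω' ∂P) = ∫ ω', p ω' * C ω' / (1 - p ω') ∂P := by
      have hwoffD : ∀ ω, ω ∉ D → p ω * C ω / (1 - p ω) = 0 := fun ω h => by
        rw [hCoff ω h]; simp
      have h2 : ∫ ω, G g ω * (1:ℝ) ∂P[|D] = ∫ ω, (p ω * C ω / (1 - p ω)) * 1 ∂P[|D] :=
        swapGC _ measurable_const (integrable_const 1)
      simp only [mul_one] at h2
      calc (∫ ω', G g ω' ∂P) = (P D).toReal * ∫ ω, G g ω ∂P[|D] := toD _ hGoff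
        _ = (P D).toReal * ∫ ω, p ω * C ω / (1 - p ω) ∂P[|D] := by rw [h2]
        _ = ∫ ω', p ω' * C ω' / (1 - p ω') ∂P := (toD _ hwoffD).symm
    calc ∫ ω, (G g ω / (∫ ω', G g ω' ∂P) -
          (p ω * C ω / (1 - p ω)) / (∫ ω', p ω' * C ω' / (1 - p ω') ∂P)) *
          f ω * (Y t ω - Y (t - 1) ω) ∂P
        = ∫ ω, ((∫ ω', G g ω' ∂P)⁻¹ * (G g ω * (f ω * (Y0 t ω - Y0 (t-1) ω)))
            - (∫ ω', p ω' * C ω' / (1 - p ω') ∂P)⁻¹ *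
              ((p ω * C ω / (1 - p ω)) * (f ω * (Y0 t ω - Y0 (t-1) ω)))) ∂P :=
          integral_congr_ae (ae_of_all _ hrw)
      _ = (∫ ω', G g ω' ∂P)⁻¹ * (∫ ω, G g ω * (f ω * (Y0 t ω - Y0 (t-1) ω)) ∂P)
          - (∫ ω', p ω' * C ω' / (1 - p ω') ∂P)⁻¹ *
            (∫ ω, (p ω * C ω / (1 - p ω)) * (f ω * (Y0 t ω - Y0 (t-1) ω)) ∂P) := by
          rw [integral_sub (hintG.const_mul _) (hintC.const_mul _),
            integral_const_mul, integral_const_mul]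
      _ = (∫ ω', G g ω' ∂P)⁻¹ * (∫ ω, G g ω * (f ω * m (X ω)) ∂P)
          - (∫ ω', p ω' * C ω' / (1 - p ω') ∂P)⁻¹ *
            (∫ ω, (p ω * C ω / (1 - p ω)) * (f ω * m (X ω)) ∂P) := by
          rw [stepG f hf hfb, stepC f hf hfb]
      _ = 0 := by rw [heqm, hab]; ring
  constructor
  · have h1 := key (fun _ => 1) measurable_const (fun ω => by simp)
    simpa using h1
  · intro u
    have hsu : MeasurableSet {x : Fin k → ℝ | ∀ j, x j ≤ u j} := by
      have hset : {x : Fin k → ℝ | ∀ j, x j ≤ u j} = ⋂ j, {x : Fin k → ℝ | x j ≤ u j} := by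
        ext x; simp
      rw [hset]
      exact MeasurableSet.iInter fun j =>
        measurableSet_le (measurable_pi_apply j) measurable_const
    have hfmeas : Measurable[MeasurableSpace.comap X inferInstance]
        fun ω => (if ∀ j, X ω j ≤ u j then (1:ℝ) else 0) :=
      Measurable.comp (Measurable.ite hsu measurable_const measurable_const) hXm
    exact key _ hfmeas (fun ω => by split_ifs <;> simp)
end

section
/- Suppose the one-sided conditional parallel trends condition holds for group g in all periods s with g ≤ s ≤ t: E[Y_s(0) − Y_{s−1}(0) | X, G_g = 1] ≥ E[Y_s(0) − Y_{s−1}(0) | X, C = 1] holds P(· | G_g = 1)-a.s. (as an inequality between versions of the two conditional expectations), together with overlap. Then for 2 ≤ g ≤ t ≤ T the weighted DID estimand is an upper bound for the group-time average treatment effect: ATT(g,t) ≤ E[(w_g^G − w_g^C)(Y_t − Y_{g−1})]. -/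
open MeasureTheory ProbabilityTheory
open scoped Classical ENNReal NNReal

section Aux
variable {Ω : Type*} [MeasurableSpace Ω]

lemma my_pairing {Ω : Type*} {m m0 : MeasurableSpace Ω} (hm : m ≤ m0)
    (μ : @Measure Ω m0) [IsProbabilityMeasure μ]
    {φ f : Ω → ℝ} (hφ : StronglyMeasurable[m] φ) {K : ℝ}
    (hφK : ∀ᵐ ω ∂μ, |φ ω| ≤ K) (hf : Integrable f μ) :
    ∫ ω, φ ω * f ω ∂μ = ∫ ω, φ ω * (μ[f|m]) ω ∂μ := by
  have hint : Integrable (fun ω => φ ω * f ω) μ :=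
    hf.bdd_mul ((hφ.mono hm).aestronglyMeasurable (μ := μ))
      (by simpa [Real.norm_eq_abs] using hφK)
  have h1 : ∫ ω, φ ω * f ω ∂μ = ∫ ω, (μ[(fun ω => φ ω * f ω)|m]) ω ∂μ :=
    (integral_condExp hm).symm
  have h2 : μ[(fun ω => φ ω * f ω)|m] =ᵐ[μ] fun ω => φ ω * (μ[f|m]) ω := by
    have := condExp_mul_of_stronglyMeasurable_left hφ (f := φ) (g := f) (by exact hint) hf
    filter_upwards [this] with ω hω
    exact hω
  rw [h1, integral_congr_ae h2]

lemma my_ind_integral (μ : Measure Ω) [IsFiniteMeasure μ]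
    {c : Ω → ℝ} (hc : Measurable c) (hc01 : ∀ ω, c ω = 0 ∨ c ω = 1)
    (f : Ω → ℝ) :
    ∫ ω, c ω * f ω ∂μ = (μ {ω | c ω = 1}).toReal * ∫ ω, f ω ∂μ[|{ω | c ω = 1}] := by
  set B := {ω | c ω = 1} with hBdef
  have hB : MeasurableSet B := hc (measurableSet_singleton 1)
  have h1 : (fun ω => c ω * f ω) = B.indicator f := by
    funext ω
    rcases hc01 ω with h | h
    · have : ω ∉ B := by simp [hBdef, h]
      simp [Set.indicator_of_notMem this, h]
    · have : ω ∈ B := by simp [hBdef, h]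
      simp [Set.indicator_of_mem this, h]
  rw [h1, integral_indicator hB, ProbabilityTheory.cond, integral_smul_measure,
    ENNReal.toReal_inv, smul_eq_mul, ← mul_assoc]
  rcases eq_or_ne (μ B) 0 with h0 | h0
  · rw [Measure.restrict_eq_zero.mpr h0]
    simp
  · rw [mul_inv_cancel₀ (by simp [ENNReal.toReal_ne_zero, h0, measure_ne_top]), one_mul]

lemma my_cond_ac (μ : Measure Ω) (B : Set Ω) : μ[|B] ≪ μ := by
  refine Measure.AbsolutelyContinuous.mk fun s hs h0 => ?_
  rw [ProbabilityTheory.cond, Measure.smul_apply, smul_eq_mul]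
  have h1 : μ.restrict B s = 0 :=
    le_antisymm (le_trans (Measure.le_iff'.1 Measure.restrict_le_self s) h0.le) zero_le
  rw [h1, mul_zero]

lemma my_restrict_eq_smul_cond (μ : Measure Ω) [IsFiniteMeasure μ] {B : Set Ω}
    (hB0 : μ B ≠ 0) : μ.restrict B = (μ B) • μ[|B] := by
  rw [ProbabilityTheory.cond, smul_smul, ENNReal.mul_inv_cancel hB0 (measure_ne_top _ _), one_smul]

lemma my_integrable_cond {μ : Measure Ω} {f : Ω → ℝ}
    (hf : Integrable f μ) (B : Set Ω) (hB0 : μ B ≠ 0) : Integrable f μ[|B] := by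
  rw [ProbabilityTheory.cond]
  exact (hf.restrict).smul_measure (ENNReal.inv_ne_top.mpr hB0)

lemma my_integrable_of_cond {μ : Measure Ω} [IsFiniteMeasure μ] {f : Ω → ℝ} {B : Set Ω}
    (hB0 : μ B ≠ 0) (hf : Integrable f μ[|B]) : IntegrableOn f B μ := by
  rw [IntegrableOn, my_restrict_eq_smul_cond μ hB0]
  exact hf.smul_measure (measure_ne_top _ _)

end Aux

/-- The measure-theoretic core of the argument. -/
theorem my_core {Ω : Type*} {m mΩ : MeasurableSpace Ω} (hm : m ≤ mΩ)
    (P : Measure Ω) [IsProbabilityMeasure P]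
    (Gg C p : Ω → ℝ)
    (hGm : Measurable Gg) (hCm : Measurable C) (hpm : Measurable[m] p)
    (hG01 : ∀ ω, Gg ω = 0 ∨ Gg ω = 1) (hC01 : ∀ ω, C ω = 0 ∨ C ω = 1)
    (hdisj : ∀ ω, Gg ω = 1 → C ω = 0)
    (hPA0 : P {ω | Gg ω = 1} ≠ 0) (hPB0 : P {ω | C ω = 1} ≠ 0)
    (hpver : p =ᵐ[P[|{ω | Gg ω + C ω = 1}]]
      (P[|{ω | Gg ω + C ω = 1}])[Gg | m])
    (ε : ℝ) (hε : 0 < ε)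
    (hoverlap : ∀ᵐ ω ∂P, 0 ≤ p ω ∧ p ω ≤ 1 - ε)
    (S : Finset ℕ) (Z : ℕ → Ω → ℝ) (hZint : ∀ s ∈ S, Integrable (Z s) P)
    (f1 f2 O : Ω → ℝ) (hf1int : Integrable f1 P)
    (hf2 : ∀ ω, f2 ω = ∑ s ∈ S, Z s ω)
    (vG vC : ℕ → Ω → ℝ)
    (hvCm : ∀ s ∈ S, Measurable[m] (vC s))
    (hverG : ∀ s ∈ S, (vG s) =ᵐ[P[|{ω | Gg ω = 1}]] (P[|{ω | Gg ω = 1}])[Z s | m])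
    (hverC : ∀ s ∈ S, (vC s) =ᵐ[P[|{ω | C ω = 1}]] (P[|{ω | C ω = 1}])[Z s | m])
    (hle : ∀ s ∈ S, ∀ᵐ ω ∂P[|{ω | Gg ω = 1}], vC s ω ≤ vG s ω)
    (hOG : ∀ ω, Gg ω = 1 → O ω = f1 ω)
    (hOC : ∀ ω, C ω = 1 → O ω = f2 ω) :
    ∫ ω, (f1 ω - f2 ω) ∂(P[|{ω | Gg ω = 1}]) ≤
      ∫ ω, (Gg ω / (∫ ω', Gg ω' ∂P) -
          (p ω * C ω / (1 - p ω)) / (∫ ω', p ω' * C ω' / (1 - p ω') ∂P)) * O ω ∂P := by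
  classical
  set A : Set Ω := {ω | Gg ω = 1} with hAdef
  set B : Set Ω := {ω | C ω = 1} with hBdef
  set D : Set Ω := {ω | Gg ω + C ω = 1} with hDdef
  have hA : MeasurableSet A := hGm (measurableSet_singleton 1)
  have hB : MeasurableSet B := hCm (measurableSet_singleton 1)
  have hD : MeasurableSet D := (hGm.add hCm) (measurableSet_singleton 1)
  have hpM : Measurable p := hpm.mono hm le_rfl
  set q : Ω → ℝ := fun ω => p ω / (1 - p ω) with hqdef
  set w : Ω → ℝ := fun ω => p ω * C ω / (1 - p ω) with hwdef
  have hqm : Measurable[m] q := hpm.div (measurable_const.sub hpm)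
  have hqM : Measurable q := hpM.div (measurable_const.sub hpM)
  have hwM : Measurable w := (hpM.mul hCm).div (measurable_const.sub hpM)
  have hwCq : ∀ ω, w ω = C ω * q ω := by
    intro ω; simp only [hwdef, hqdef]; ring
  have hqbd : ∀ᵐ ω ∂P, 0 ≤ q ω ∧ q ω ≤ ε⁻¹ := by
    filter_upwards [hoverlap] with ω hω
    obtain ⟨h0, h1⟩ := hω
    have h1p : ε ≤ 1 - p ω := by linarith
    have h1p' : (0:ℝ) < 1 - p ω := lt_of_lt_of_le hε h1p
    refine ⟨div_nonneg h0 h1p'.le, ?_⟩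
    rw [← one_div]
    exact div_le_div₀ (by linarith) (by linarith) hε h1p
  have hwbd : ∀ᵐ ω ∂P, 0 ≤ w ω ∧ w ω ≤ ε⁻¹ := by
    filter_upwards [hqbd] with ω hω
    obtain ⟨h0, h1⟩ := hω
    rw [hwCq ω]
    rcases hC01 ω with hc | hc
    · simp [hc, inv_nonneg.mpr hε.le]
    · simpa [hc] using ⟨h0, h1⟩
  have hwint : Integrable w P :=
    (integrable_const (ε⁻¹)).mono' hwM.aestronglyMeasurable
      (by filter_upwards [hwbd] with ω hω; rw [Real.norm_eq_abs, abs_of_nonneg hω.1]; exact hω.2)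
  have hAD : A ⊆ D := by
    intro ω hω
    have h1 : Gg ω = 1 := hω
    have h2 : C ω = 0 := hdisj ω h1
    show Gg ω + C ω = 1
    rw [h1, h2]; ring
  have hPD0 : P D ≠ 0 := fun hD0 =>
    hPA0 (le_antisymm (le_trans (measure_mono hAD) hD0.le) zero_le)
  haveI iA : IsProbabilityMeasure P[|A] := cond_isProbabilityMeasure hPA0
  haveI iB : IsProbabilityMeasure P[|B] := cond_isProbabilityMeasure hPB0
  haveI iD : IsProbabilityMeasure P[|D] := cond_isProbabilityMeasure hPD0
  have hacA : P[|A] ≪ P := my_cond_ac P A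
  have hacB : P[|B] ≪ P := my_cond_ac P B
  have hacD : P[|D] ≪ P := my_cond_ac P D
  -- integrability of bounded measurable functions under subordinate probabilities
  have hbint : ∀ (μ' : Measure Ω), μ' ≪ P → ∀ [IsProbabilityMeasure μ'] (f : Ω → ℝ),
      Measurable f → ∀ K : ℝ, (∀ᵐ ω ∂P, |f ω| ≤ K) → Integrable f μ' := by
    intro μ' hac _ f hf K hK
    exact (integrable_const K).mono' hf.aestronglyMeasurable
      (by filter_upwards [hK.filter_mono hac.ae_le] with ω hω
          simpa [Real.norm_eq_abs] using hω)
  have hGbd : ∀ ω, |Gg ω| ≤ 1 := by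
    intro ω; rcases hG01 ω with h | h <;> simp [h]
  have hGint : ∀ (μ' : Measure Ω), μ' ≪ P → ∀ [IsProbabilityMeasure μ'],
      Integrable Gg μ' := fun μ' hac _ =>
    hbint μ' hac Gg hGm 1 (Filter.Eventually.of_forall hGbd)
  have ha : ∫ ω, Gg ω ∂P = (P A).toReal := by
    have h1 : (fun ω => Gg ω) = A.indicator (fun _ => (1:ℝ)) := by
      funext ω
      rcases hG01 ω with h0 | h0
      · have hω : ω ∉ A := by simp [hAdef, h0]
        simp [Set.indicator_of_notMem hω, h0]
      · have hω : ω ∈ A := by simp [hAdef, h0]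
        simp [Set.indicator_of_mem hω, h0]
    calc ∫ ω, Gg ω ∂P = ∫ ω, A.indicator (fun _ => (1:ℝ)) ω ∂P := by rw [h1]
      _ = (P A).toReal := by rw [integral_indicator_const _ hA, smul_eq_mul, mul_one, measureReal_def]
  -- the key identity : for bounded m-measurable χ, ∫ χ w = ∫ χ Gg
  have hqbdD : ∀ᵐ ω ∂P[|D], 0 ≤ q ω ∧ q ω ≤ ε⁻¹ := hqbd.filter_mono hacD.ae_le
  have hQD : ∀ᵐ ω ∂P[|D], ω ∈ D := by
    rw [ProbabilityTheory.cond]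
    exact Measure.ae_smul_measure (ae_restrict_mem hD) _
  have hpairQ : ∀ (φ : Ω → ℝ), StronglyMeasurable[m] φ → ∀ K : ℝ, (∀ᵐ ω ∂P[|D], |φ ω| ≤ K) →
      ∫ ω, φ ω * Gg ω ∂P[|D] = ∫ ω, φ ω * p ω ∂P[|D] := by
    intro φ hφ K hK
    rw [my_pairing hm (P[|D]) hφ hK (hGint _ hacD)]
    refine integral_congr_ae ?_
    filter_upwards [hpver] with ω hω
    rw [hω]
  have hkey : ∀ χ : Ω → ℝ, StronglyMeasurable[m] χ → (∀ ω, |χ ω| ≤ 1) →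
      ∫ ω, χ ω * w ω ∂P = ∫ ω, χ ω * Gg ω ∂P := by
    intro χ hχ hχ1
    have hχM : Measurable χ := (hχ.mono hm).measurable
    have hoffD : ∀ ω, ω ∉ D → Gg ω = 0 ∧ C ω = 0 := by
      intro ω hω
      rcases hG01 ω with h0 | h1
      · rcases hC01 ω with hc0 | hc1
        · exact ⟨h0, hc0⟩
        · exact absurd (show Gg ω + C ω = 1 by rw [h0, hc1]; ring) hω
      · exact absurd (show Gg ω + C ω = 1 by rw [h1, hdisj ω h1]; ring) hω
    have hindw : (fun ω => χ ω * w ω) = D.indicator (fun ω => χ ω * w ω) := by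
      funext ω
      by_cases hω : ω ∈ D
      · rw [Set.indicator_of_mem hω]
      · rw [Set.indicator_of_notMem hω, hwCq ω, (hoffD ω hω).2]; ring
    have hindG : (fun ω => χ ω * Gg ω) = D.indicator (fun ω => χ ω * Gg ω) := by
      funext ω
      by_cases hω : ω ∈ D
      · rw [Set.indicator_of_mem hω]
      · rw [Set.indicator_of_notMem hω, (hoffD ω hω).1]; ring
    have hres : ∀ f : Ω → ℝ, ∫ ω in D, f ω ∂P = (P D).toReal * ∫ ω, f ω ∂P[|D] := by
      intro f
      rw [my_restrict_eq_smul_cond P hPD0, integral_smul_measure, smul_eq_mul]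
    rw [hindw, hindG, integral_indicator hD, integral_indicator hD, hres _, hres _]
    congr 1
    -- work under P[|D]
    have hCQ : ∀ᵐ ω ∂P[|D], C ω = 1 - Gg ω := by
      filter_upwards [hQD] with ω hω
      have h1 : Gg ω + C ω = 1 := hω
      linarith
    have hbd1 : ∀ᵐ ω ∂P, |χ ω * q ω| ≤ ε⁻¹ := by
      filter_upwards [hqbd] with ω hω
      rw [abs_mul, abs_of_nonneg hω.1]
      calc |χ ω| * q ω ≤ 1 * ε⁻¹ :=
            mul_le_mul (hχ1 ω) hω.2 hω.1 zero_le_one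
        _ = ε⁻¹ := one_mul _
    have hbd2 : ∀ᵐ ω ∂P, |χ ω * q ω * Gg ω| ≤ ε⁻¹ := by
      filter_upwards [hbd1] with ω hω
      rw [abs_mul]
      calc |χ ω * q ω| * |Gg ω| ≤ ε⁻¹ * 1 :=
            mul_le_mul hω (hGbd ω) (abs_nonneg _) (le_trans (abs_nonneg _) hω)
        _ = ε⁻¹ := mul_one _
    have hbd3 : ∀ᵐ ω ∂P, |χ ω * q ω * p ω| ≤ ε⁻¹ := by
      filter_upwards [hbd1, hoverlap] with ω hω h2
      rw [abs_mul]
      have hp1 : |p ω| ≤ 1 := by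
        rw [abs_of_nonneg h2.1]; linarith [h2.2, hε]
      calc |χ ω * q ω| * |p ω| ≤ ε⁻¹ * 1 :=
            mul_le_mul hω hp1 (abs_nonneg _) (le_trans (abs_nonneg _) hω)
        _ = ε⁻¹ := mul_one _
    have hint1 : Integrable (fun ω => χ ω * q ω) P[|D] :=
      hbint _ hacD _ (hχM.mul hqM) ε⁻¹ hbd1
    have hint2 : Integrable (fun ω => χ ω * q ω * Gg ω) P[|D] :=
      hbint _ hacD _ ((hχM.mul hqM).mul hGm) ε⁻¹ hbd2
    have hint3 : Integrable (fun ω => χ ω * q ω * p ω) P[|D] :=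
      hbint _ hacD _ ((hχM.mul hqM).mul hpM) ε⁻¹ hbd3
    have e1 : ∫ ω, χ ω * w ω ∂P[|D] = ∫ ω, (χ ω * q ω - χ ω * q ω * Gg ω) ∂P[|D] := by
      refine integral_congr_ae ?_
      filter_upwards [hCQ] with ω hω
      rw [hwCq ω, hω]; ring
    have e2 : ∫ ω, χ ω * q ω * Gg ω ∂P[|D] = ∫ ω, χ ω * q ω * p ω ∂P[|D] :=
      hpairQ (fun ω => χ ω * q ω) (hχ.mul hqm.stronglyMeasurable) ε⁻¹
        (hbd1.filter_mono hacD.ae_le)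
    have e3 : ∫ ω, (χ ω * q ω - χ ω * q ω * p ω) ∂P[|D] = ∫ ω, χ ω * p ω ∂P[|D] := by
      refine integral_congr_ae ?_
      filter_upwards [hoverlap.filter_mono hacD.ae_le] with ω hω
      have hne : (1:ℝ) - p ω ≠ 0 := by
        have : ε ≤ 1 - p ω := by linarith [hω.2]
        linarith [hε]
      have hqp : q ω * (1 - p ω) = p ω := by
        rw [hqdef]; exact div_mul_cancel₀ _ hne
      calc χ ω * q ω - χ ω * q ω * p ω = χ ω * (q ω * (1 - p ω)) := by ring
        _ = χ ω * p ω := by rw [hqp]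
    have e4 : ∫ ω, χ ω * p ω ∂P[|D] = ∫ ω, χ ω * Gg ω ∂P[|D] :=
      (hpairQ χ hχ 1 (Filter.Eventually.of_forall hχ1)).symm
    rw [e1, integral_sub hint1 hint2, e2, ← integral_sub hint1 hint3, e3, e4]
  have hb : ∫ ω, w ω ∂P = (P A).toReal := by
    have h1 := hkey (fun _ => 1) stronglyMeasurable_const (fun ω => by norm_num)
    simpa [ha] using h1
  -- withDensity measures and the trim transfer
  set μ1 : Measure Ω := P.withDensity (fun ω => ENNReal.ofReal (w ω)) with hμ1def
  have hμ2 : P.withDensity (fun ω => ENNReal.ofReal (Gg ω)) = P.restrict A := by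
    have h1 : (fun ω => ENNReal.ofReal (Gg ω)) = A.indicator (1 : Ω → ℝ≥0∞) := by
      funext ω
      rcases hG01 ω with h0 | h0
      · have hω : ω ∉ A := by simp [hAdef, h0]
        simp [Set.indicator_of_notMem hω, h0]
      · have hω : ω ∈ A := by simp [hAdef, h0]
        simp [Set.indicator_of_mem hω, h0]
    rw [h1, withDensity_indicator_one hA]
  have hconv : ∀ f : Ω → ℝ, Integrable f P → (0 ≤ᵐ[P] f) → ∀ S' : Set Ω, MeasurableSet S' →
      (P.withDensity (fun ω => ENNReal.ofReal (f ω))) S'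
        = ENNReal.ofReal (∫ ω, S'.indicator (fun _ => (1:ℝ)) ω * f ω ∂P) := by
    intro f hfint hfnn S' hS'
    rw [withDensity_apply _ hS']
    rw [← ofReal_integral_eq_lintegral_ofReal hfint.restrict (ae_restrict_of_ae hfnn)]
    congr 1
    rw [← integral_indicator hS']
    refine integral_congr_ae (Filter.Eventually.of_forall fun ω => ?_)
    by_cases hω : ω ∈ S' <;> simp [hω]
  have hμeq : μ1.trim hm = (P.restrict A).trim hm := by
    refine @Measure.ext Ω m _ _ (fun S' hS => ?_)
    rw [trim_measurableSet_eq hm hS, trim_measurableSet_eq hm hS]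
    have hS' : MeasurableSet S' := hm S' hS
    have hχS : StronglyMeasurable[m] (S'.indicator (fun _ => (1:ℝ))) :=
      stronglyMeasurable_const.indicator hS
    have hχ1 : ∀ ω, |S'.indicator (fun _ => (1:ℝ)) ω| ≤ 1 := by
      intro ω; by_cases hω : ω ∈ S' <;> simp [hω]
    rw [hμ1def, hconv w hwint (by filter_upwards [hwbd] with ω hω; exact hω.1) S' hS', ← hμ2,
      hconv Gg (hGint P Measure.AbsolutelyContinuous.rfl)
        (Filter.Eventually.of_forall (fun ω => by rcases hG01 ω with h|h <;> simp [h])) S' hS',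
      hkey _ hχS hχ1]
  have htrans : ∀ F : Ω → ℝ, Measurable[m] F → Integrable (fun ω => F ω * w ω) P →
      Integrable F P[|A] ∧ ∫ ω, F ω * w ω ∂P = (P A).toReal * ∫ ω, F ω ∂P[|A] := by
    intro F hFm hFw
    have hFsm : StronglyMeasurable[m] F := hFm.stronglyMeasurable
    have hFM : Measurable F := hFm.mono hm le_rfl
    have hμ1int : Integrable F μ1 := by
      rw [hμ1def, integrable_withDensity_iff hwM.ennreal_ofReal
          (Filter.Eventually.of_forall fun ω => ENNReal.ofReal_lt_top)]
      refine hFw.congr ?_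
      filter_upwards [hwbd] with ω hω
      rw [ENNReal.toReal_ofReal hω.1]
    have hFen : Measurable[m] (fun ω => ‖F ω‖ₑ) := measurable_enorm.comp hFm
    have h1 : Integrable F (μ1.trim hm) := by
      refine ⟨hFsm.aestronglyMeasurable, ?_⟩
      rw [hasFiniteIntegral_def, lintegral_trim hm hFen]
      exact hμ1int.2
    rw [hμeq] at h1
    have h2 : IntegrableOn F A P := integrable_of_integrable_trim hm h1
    have h3 : Integrable F P[|A] := by
      rw [ProbabilityTheory.cond]
      exact h2.smul_measure (ENNReal.inv_ne_top.mpr hPA0)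
    refine ⟨h3, ?_⟩
    have e1 : ∫ ω, F ω * w ω ∂P = ∫ ω, F ω ∂μ1 := by
      have hμ1' : μ1 = P.withDensity (fun ω => ((Real.toNNReal (w ω) : ℝ≥0) : ℝ≥0∞)) := rfl
      rw [hμ1', integral_withDensity_eq_integral_smul hwM.real_toNNReal F]
      refine integral_congr_ae ?_
      filter_upwards [hwbd] with ω hω
      rw [NNReal.smul_def, Real.coe_toNNReal _ hω.1]
      simp only [smul_eq_mul]
      ring
    have e2 : ∫ ω, F ω ∂μ1 = ∫ ω, F ω ∂(P.restrict A) := by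
      calc ∫ ω, F ω ∂μ1 = ∫ ω, F ω ∂(μ1.trim hm) := integral_trim hm hFsm
        _ = ∫ ω, F ω ∂((P.restrict A).trim hm) := by rw [hμeq]
        _ = ∫ ω, F ω ∂(P.restrict A) := (integral_trim hm hFsm).symm
    have e3 : ∫ ω, F ω ∂(P.restrict A) = (P A).toReal * ∫ ω, F ω ∂P[|A] := by
      rw [my_restrict_eq_smul_cond P hPA0, integral_smul_measure, smul_eq_mul]
    rw [e1, e2, e3]
  -- control-side computation
  set MC : Ω → ℝ := fun ω => ∑ s ∈ S, vC s ω with hMCdef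
  have hMCm : Measurable[m] MC := Finset.measurable_sum S (fun s hs => hvCm s hs)
  have hqbdB : ∀ᵐ ω ∂P[|B], 0 ≤ q ω ∧ q ω ≤ ε⁻¹ := hqbd.filter_mono hacB.ae_le
  have hqabs : ∀ᵐ ω ∂P[|B], |q ω| ≤ ε⁻¹ := by
    filter_upwards [hqbdB] with ω hω
    rw [abs_of_nonneg hω.1]; exact hω.2
  have hZintB : ∀ s ∈ S, Integrable (Z s) P[|B] :=
    fun s hs => my_integrable_cond (hZint s hs) B hPB0
  have hvCintB : ∀ s ∈ S, Integrable (vC s) P[|B] :=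
    fun s hs => (integrable_condExp).congr (hverC s hs).symm
  have hqsm : StronglyMeasurable[m] q := hqm.stronglyMeasurable
  have hinner : ∀ s ∈ S, ∫ ω, q ω * Z s ω ∂P[|B] = ∫ ω, q ω * vC s ω ∂P[|B] := by
    intro s hs
    rw [my_pairing hm (P[|B]) hqsm hqabs (hZintB s hs)]
    refine integral_congr_ae ?_
    filter_upwards [hverC s hs] with ω hω
    rw [hω]
  have hqZint : ∀ s ∈ S, Integrable (fun ω => q ω * Z s ω) P[|B] := fun s hs =>
    (hZintB s hs).bdd_mul (hqM.aestronglyMeasurable (μ := P[|B]))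
      (by simpa [Real.norm_eq_abs] using hqabs)
  have hqvCint : ∀ s ∈ S, Integrable (fun ω => q ω * vC s ω) P[|B] := fun s hs =>
    (hvCintB s hs).bdd_mul (hqM.aestronglyMeasurable (μ := P[|B]))
      (by simpa [Real.norm_eq_abs] using hqabs)
  have hH2B : ∫ ω, q ω * f2 ω ∂P[|B] = ∫ ω, q ω * MC ω ∂P[|B] := by
    have l1 : ∫ ω, q ω * f2 ω ∂P[|B] = ∑ s ∈ S, ∫ ω, q ω * Z s ω ∂P[|B] := by
      rw [← integral_finset_sum S hqZint]
      refine integral_congr_ae (Filter.Eventually.of_forall fun ω => ?_)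
      simp only [hf2, Finset.mul_sum]
    have l2 : ∫ ω, q ω * MC ω ∂P[|B] = ∑ s ∈ S, ∫ ω, q ω * vC s ω ∂P[|B] := by
      rw [← integral_finset_sum S hqvCint]
      refine integral_congr_ae (Filter.Eventually.of_forall fun ω => ?_)
      simp only [hMCdef, Finset.mul_sum]
    rw [l1, l2]
    exact Finset.sum_congr rfl hinner
  have hindB : ∀ f : Ω → ℝ, ∫ ω, w ω * f ω ∂P = (P B).toReal * ∫ ω, q ω * f ω ∂P[|B] := by
    intro f
    have h1 : (fun ω => w ω * f ω) = fun ω => C ω * (q ω * f ω) := by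
      funext ω; rw [hwCq ω]; ring
    rw [h1]
    exact my_ind_integral P hCm hC01 (fun ω => q ω * f ω)
  have hH2 : ∫ ω, w ω * f2 ω ∂P = ∫ ω, w ω * MC ω ∂P := by
    rw [hindB f2, hindB MC, hH2B]
  -- integrability of products against w
  have hmulw : ∀ F : Ω → ℝ, Measurable[m] F → Integrable F P[|B] →
      Integrable (fun ω => F ω * w ω) P := by
    intro F hFm hFB
    have hind : Integrable (B.indicator F) P :=
      (integrable_indicator_iff hB).mpr (my_integrable_of_cond hPB0 hFB)
    refine Integrable.mono' (hind.norm.const_mul ε⁻¹)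
      (((hFm.mono hm le_rfl)).mul hwM).aestronglyMeasurable ?_
    filter_upwards [hwbd] with ω hω
    rcases hC01 ω with hc | hc
    · have hw0 : w ω = 0 := by rw [hwCq ω, hc]; ring
      rw [hw0, mul_zero, norm_zero]
      have h2 : (0:ℝ) ≤ ‖B.indicator F ω‖ := norm_nonneg _
      have h3 : (0:ℝ) ≤ ε⁻¹ := inv_nonneg.mpr hε.le
      positivity
    · have hωB : ω ∈ B := hc
      rw [Set.indicator_of_mem hωB, Real.norm_eq_abs, Real.norm_eq_abs, abs_mul]
      calc |F ω| * |w ω| ≤ |F ω| * ε⁻¹ :=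
            mul_le_mul_of_nonneg_left (by rw [abs_of_nonneg hω.1]; exact hω.2) (abs_nonneg _)
        _ = ε⁻¹ * |F ω| := mul_comm _ _
  have hMCintB : Integrable MC P[|B] := integrable_finset_sum S hvCintB
  obtain ⟨hMCintA, hMCtrans⟩ := htrans MC hMCm (hmulw MC hMCm hMCintB)
  have hvCA : ∀ s ∈ S, Integrable (vC s) P[|A] := fun s hs =>
    (htrans (vC s) (hvCm s hs) (hmulw (vC s) (hvCm s hs) (hvCintB s hs))).1
  -- comparison on the treated group
  have hf2int : Integrable f2 P := by
    have h1 : f2 = fun ω => ∑ s ∈ S, Z s ω := funext hf2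
    rw [h1]; exact integrable_finset_sum S hZint
  have hf2A : Integrable f2 P[|A] := my_integrable_cond hf2int A hPA0
  have hZintA : ∀ s ∈ S, Integrable (Z s) P[|A] :=
    fun s hs => my_integrable_cond (hZint s hs) A hPA0
  have hvGA : ∀ s ∈ S, Integrable (vG s) P[|A] :=
    fun s hs => integrable_condExp.congr (hverG s hs).symm
  have hcomp : ∫ ω, MC ω ∂P[|A] ≤ ∫ ω, f2 ω ∂P[|A] := by
    have l1 : ∫ ω, f2 ω ∂P[|A] = ∑ s ∈ S, ∫ ω, Z s ω ∂P[|A] := by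
      rw [← integral_finset_sum S hZintA]
      exact integral_congr_ae (Filter.Eventually.of_forall fun ω => hf2 ω)
    have l2 : ∫ ω, MC ω ∂P[|A] = ∑ s ∈ S, ∫ ω, vC s ω ∂P[|A] :=
      integral_finset_sum S hvCA
    rw [l1, l2]
    refine Finset.sum_le_sum fun s hs => ?_
    calc ∫ ω, vC s ω ∂P[|A] ≤ ∫ ω, vG s ω ∂P[|A] :=
          integral_mono_ae (hvCA s hs) (hvGA s hs) (hle s hs)
      _ = ∫ ω, ((P[|A])[Z s|m]) ω ∂P[|A] := integral_congr_ae (hverG s hs)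
      _ = ∫ ω, Z s ω ∂P[|A] := integral_condExp hm
  -- final assembly
  have hr0 : (0:ℝ) < (P A).toReal := ENNReal.toReal_pos hPA0 (measure_ne_top P A)
  have hGf1int : Integrable (fun ω => Gg ω * f1 ω) P :=
    hf1int.bdd_mul hGm.aestronglyMeasurable
      (Filter.Eventually.of_forall (fun ω => by simpa [Real.norm_eq_abs] using hGbd ω))
  have hwf2int : Integrable (fun ω => w ω * f2 ω) P :=
    hf2int.bdd_mul hwM.aestronglyMeasurable
      (by filter_upwards [hwbd] with ω hω
          rw [Real.norm_eq_abs, abs_of_nonneg hω.1]; exact hω.2)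
  have hstep : ∀ ω, (Gg ω / (P A).toReal - p ω * C ω / (1 - p ω) / (P A).toReal) * O ω
      = ((P A).toReal)⁻¹ * (Gg ω * f1 ω) - ((P A).toReal)⁻¹ * (w ω * f2 ω) := by
    intro ω
    have hwω : p ω * C ω / (1 - p ω) = w ω := rfl
    rw [hwω]
    rcases hG01 ω with h0 | h1
    · rcases hC01 ω with hc0 | hc1
      · have hw0 : w ω = 0 := by rw [hwCq ω, hc0]; ring
        rw [h0, hw0]; ring
      · rw [h0, hOC ω hc1]
        ring
    · have hc0 : C ω = 0 := hdisj ω h1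
      have hw0 : w ω = 0 := by rw [hwCq ω, hc0]; ring
      rw [h1, hOG ω h1, hw0]
      ring
  rw [ha, hb]
  have hRHS : ∫ ω, (Gg ω / (P A).toReal - p ω * C ω / (1 - p ω) / (P A).toReal) * O ω ∂P
      = ((P A).toReal)⁻¹ * ∫ ω, Gg ω * f1 ω ∂P
        - ((P A).toReal)⁻¹ * ∫ ω, w ω * f2 ω ∂P := by
    rw [← integral_const_mul, ← integral_const_mul,
      ← integral_sub (hGf1int.const_mul _) (hwf2int.const_mul _)]
    exact integral_congr_ae (Filter.Eventually.of_forall hstep)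
  rw [hRHS]
  have hf1A : Integrable f1 P[|A] := my_integrable_cond hf1int A hPA0
  have hLHS : ∫ ω, (f1 ω - f2 ω) ∂P[|A] = ∫ ω, f1 ω ∂P[|A] - ∫ ω, f2 ω ∂P[|A] :=
    integral_sub hf1A hf2A
  rw [hLHS]
  have hGf1 : ∫ ω, Gg ω * f1 ω ∂P = (P A).toReal * ∫ ω, f1 ω ∂P[|A] :=
    my_ind_integral P hGm hG01 f1
  have hwf2 : ∫ ω, w ω * f2 ω ∂P = (P A).toReal * ∫ ω, MC ω ∂P[|A] := by
    rw [hH2]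
    have h1 : ∫ ω, w ω * MC ω ∂P = ∫ ω, MC ω * w ω ∂P :=
      integral_congr_ae (Filter.Eventually.of_forall fun ω => mul_comm _ _)
    rw [h1]
    exact hMCtrans
  rw [hGf1, hwf2, ← mul_assoc, inv_mul_cancel₀ hr0.ne', one_mul,
    ← mul_assoc, inv_mul_cancel₀ hr0.ne', one_mul]
  exact sub_le_sub_left hcomp _
/-- one-sided conditional parallel trends gives an upper bound.
If `E[Y_s(0) − Y_{s−1}(0) | X, G_g = 1] ≥ E[Y_s(0) − Y_{s−1}(0) | X, C = 1]`
(`P(·|G_g=1)`-a.s., as an inequality between versions) for all `g ≤ s ≤ t`,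
together with overlap, then for `2 ≤ g ≤ t ≤ T`
`ATT(g,t) ≤ E[(w_g^G − w_g^C)(Y_t − Y_{g−1})]`. -/
theorem one_sided_parallel_trends_upper_bound
    {Ω : Type*} [MeasurableSpace Ω] (P : Measure Ω) [IsProbabilityMeasure P]
    (k T : ℕ) (hT : 2 ≤ T)
    -- potential outcomes, observed outcomes, covariates, group/control indicators
    (Y0 Y1 Y : ℕ → Ω → ℝ) (X : Ω → (Fin k → ℝ)) (G : ℕ → Ω → ℝ) (C : Ω → ℝ)
    -- measurability and integrability
    (hY0meas : ∀ s, Measurable (Y0 s)) (hY1meas : ∀ s, Measurable (Y1 s))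
    (hY0int : ∀ s, Integrable (Y0 s) P) (hY1int : ∀ s, Integrable (Y1 s) P)
    (hXmeas : Measurable X) (hGmeas : ∀ g, Measurable (G g)) (hCmeas : Measurable C)
    -- indicator structure
    (hG01 : ∀ g ω, G g ω = 0 ∨ G g ω = 1)
    (hC01 : ∀ ω, C ω = 0 ∨ C ω = 1)
    (hsum : ∀ ω, (∑ g ∈ Finset.Icc 2 T, G g ω) + C ω = 1)
    -- observed outcomes
    (hobs : ∀ s ω, Y s ω =
      if ∃ g', 2 ≤ g' ∧ g' ≤ s ∧ G g' ω = 1 then Y1 s ω else Y0 s ω)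
    -- the pair (g, t) under consideration, 2 ≤ g ≤ t ≤ T
    (g t : ℕ) (hg : 2 ≤ g) (hgt : g ≤ t) (htT : t ≤ T)
    (hPg : 0 < P {ω | G g ω = 1}) (hPC : 0 < P {ω | C ω = 1})
    -- the generalized propensity score: a σ(X)-measurable version of E[G_g | X, G_g + C = 1]
    (p : Ω → ℝ)
    (hpmeas : Measurable[MeasurableSpace.comap X inferInstance] p)
    (hpver : p =ᵐ[P[|{ω | G g ω + C ω = 1}]]
      (P[|{ω | G g ω + C ω = 1}])[G g | MeasurableSpace.comap X inferInstance])
    -- overlap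
    (ε : ℝ) (hε : 0 < ε)
    (hoverlap : ∀ᵐ ω ∂P, 0 ≤ p ω ∧ p ω ≤ 1 - ε)
    -- one-sided conditional parallel trends for group g in all periods g ≤ s ≤ t
    (hOS : ∀ s, g ≤ s → s ≤ t →
      ∃ mG mC : (Fin k → ℝ) → ℝ, Measurable mG ∧ Measurable mC ∧
        (fun ω => mG (X ω)) =ᵐ[P[|{ω | G g ω = 1}]]
          (P[|{ω | G g ω = 1}])[fun ω => Y0 s ω - Y0 (s - 1) ω |
            MeasurableSpace.comap X inferInstance] ∧
        (fun ω => mC (X ω)) =ᵐ[P[|{ω | C ω = 1}]]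
          (P[|{ω | C ω = 1}])[fun ω => Y0 s ω - Y0 (s - 1) ω |
            MeasurableSpace.comap X inferInstance] ∧
        (∀ᵐ ω ∂(P[|{ω | G g ω = 1}]), mC (X ω) ≤ mG (X ω))) :
    -- conclusion: the weighted DID estimand is an upper bound for ATT(g,t)
    ∫ ω, (Y1 t ω - Y0 t ω) ∂(P[|{ω | G g ω = 1}]) ≤
      ∫ ω,
        (G g ω / (∫ ω', G g ω' ∂P) -
          (p ω * C ω / (1 - p ω)) / (∫ ω', p ω' * C ω' / (1 - p ω') ∂P)) *
        (Y t ω - Y (g - 1) ω) ∂P := by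
  classical
  -- pointwise facts about indicators
  have hGnn : ∀ g' ω, 0 ≤ G g' ω := fun g' ω => by rcases hG01 g' ω with h | h <;> simp [h]
  have hCnn : ∀ ω, 0 ≤ C ω := fun ω => by rcases hC01 ω with h | h <;> simp [h]
  have hgT : g ∈ Finset.Icc 2 T := Finset.mem_Icc.mpr ⟨hg, hgt.trans htT⟩
  have hdisj : ∀ ω, G g ω = 1 → C ω = 0 := by
    intro ω h1
    by_contra hne
    have hC1 : C ω = 1 := (hC01 ω).resolve_left hne
    have hle : G g ω ≤ ∑ g' ∈ Finset.Icc 2 T, G g' ω :=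
      Finset.single_le_sum (fun i _ => hGnn i ω) hgT
    have hs := hsum ω
    rw [h1] at hle; rw [hC1] at hs
    linarith
  have honeG : ∀ ω g', g' ∈ Finset.Icc 2 T → g' ≠ g → G g ω = 1 → G g' ω = 0 := by
    intro ω g' hg'mem hne h1
    by_contra hne'
    have h1' : G g' ω = 1 := (hG01 g' ω).resolve_left hne'
    have hsub : ({g, g'} : Finset ℕ) ⊆ Finset.Icc 2 T := by
      intro x hx
      rcases Finset.mem_insert.mp hx with rfl | hx
      · exact hgT
      · rw [Finset.mem_singleton.mp hx]; exact hg'mem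
    have hle : (∑ g'' ∈ ({g, g'} : Finset ℕ), G g'' ω) ≤ ∑ g'' ∈ Finset.Icc 2 T, G g'' ω :=
      Finset.sum_le_sum_of_subset_of_nonneg hsub (fun i _ _ => hGnn i ω)
    rw [Finset.sum_pair (by omega : g ≠ g')] at hle
    have hs := hsum ω
    have hc := hCnn ω
    rw [h1, h1'] at hle
    linarith
  have hCzero : ∀ ω, C ω = 1 → ∀ g', g' ∈ Finset.Icc 2 T → G g' ω = 0 := by
    intro ω hC1 g' hg'
    by_contra hne'
    have h1' : G g' ω = 1 := (hG01 g' ω).resolve_left hne'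
    have hle : G g' ω ≤ ∑ g'' ∈ Finset.Icc 2 T, G g'' ω :=
      Finset.single_le_sum (fun i _ => hGnn i ω) hg'
    have hs := hsum ω
    rw [h1'] at hle; rw [hC1] at hs
    linarith
  -- observed outcomes
  have hYtA : ∀ ω, G g ω = 1 → Y t ω = Y1 t ω := by
    intro ω h1
    rw [hobs t ω, if_pos ⟨g, hg, hgt, h1⟩]
  have hYg1A : ∀ ω, G g ω = 1 → Y (g - 1) ω = Y0 (g - 1) ω := by
    intro ω h1
    rw [hobs (g - 1) ω, if_neg]
    rintro ⟨g', h2, hle, hg'1⟩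
    have hmem : g' ∈ Finset.Icc 2 T := Finset.mem_Icc.mpr ⟨h2, by omega⟩
    have h0 : G g' ω = 0 := honeG ω g' hmem (by omega) h1
    linarith
  have hYB : ∀ s, s ≤ T → ∀ ω, C ω = 1 → Y s ω = Y0 s ω := by
    intro s hsT ω hC1
    rw [hobs s ω, if_neg]
    rintro ⟨g', h2, hle, hg'1⟩
    have h0 : G g' ω = 0 := hCzero ω hC1 g' (Finset.mem_Icc.mpr ⟨h2, hle.trans hsT⟩)
    linarith
  -- telescoping
  have htel : ∀ ω, Y0 t ω - Y0 (g - 1) ω = ∑ s ∈ Finset.Icc g t, (Y0 s ω - Y0 (s - 1) ω) := by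
    intro ω
    have h1 : ∀ n, g ≤ n → (∑ s ∈ Finset.Icc g n, (Y0 s ω - Y0 (s - 1) ω))
        = Y0 n ω - Y0 (g - 1) ω := by
      intro n hn
      induction n, hn using Nat.le_induction with
      | base => rw [Finset.Icc_self, Finset.sum_singleton]
      | succ n hgn ih =>
        rw [Finset.sum_Icc_succ_top (by omega), ih, Nat.add_sub_cancel]
        ring
    exact (h1 t hgt).symm
  -- extract the version functions
  have hOS' : ∀ s : ℕ, ∃ mm : ((Fin k → ℝ) → ℝ) × ((Fin k → ℝ) → ℝ),
      Measurable mm.1 ∧ Measurable mm.2 ∧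
      (g ≤ s → s ≤ t →
        (((fun ω => mm.1 (X ω)) =ᵐ[P[|{ω | G g ω = 1}]]
          (P[|{ω | G g ω = 1}])[fun ω => Y0 s ω - Y0 (s - 1) ω |
            MeasurableSpace.comap X inferInstance]) ∧
        ((fun ω => mm.2 (X ω)) =ᵐ[P[|{ω | C ω = 1}]]
          (P[|{ω | C ω = 1}])[fun ω => Y0 s ω - Y0 (s - 1) ω |
            MeasurableSpace.comap X inferInstance]) ∧
        (∀ᵐ ω ∂(P[|{ω | G g ω = 1}]), mm.2 (X ω) ≤ mm.1 (X ω)))) := by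
    intro s
    by_cases hs : g ≤ s ∧ s ≤ t
    · obtain ⟨mG, mC, h1, h2, h3, h4, h5⟩ := hOS s hs.1 hs.2
      exact ⟨(mG, mC), h1, h2, fun _ _ => ⟨h3, h4, h5⟩⟩
    · exact ⟨(fun _ => 0, fun _ => 0), measurable_const, measurable_const,
        fun h1 h2 => absurd ⟨h1, h2⟩ hs⟩
  choose mf hmG hmC hver using hOS'
  -- measurability of X with respect to the comap σ-algebra
  have hXm : Measurable[MeasurableSpace.comap X inferInstance] X :=
    measurable_iff_comap_le.mpr le_rfl
  -- apply the core lemma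
  have hmain := my_core (m := MeasurableSpace.comap X inferInstance)
    (measurable_iff_comap_le.mp hXmeas) P (G g) C p
    (hGmeas g) hCmeas hpmeas (hG01 g) hC01 hdisj hPg.ne' hPC.ne' hpver ε hε hoverlap
    (Finset.Icc g t) (fun s ω => Y0 s ω - Y0 (s - 1) ω)
    (fun s _ => (hY0int s).sub (hY0int (s - 1)))
    (fun ω => Y1 t ω - Y0 (g - 1) ω) (fun ω => Y0 t ω - Y0 (g - 1) ω)
    (fun ω => Y t ω - Y (g - 1) ω)
    ((hY1int t).sub (hY0int (g - 1)))
    htel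
    (fun s ω => (mf s).1 (X ω)) (fun s ω => (mf s).2 (X ω))
    (fun s _ => (hmC s).comp hXm)
    (fun s hs => ((hver s (Finset.mem_Icc.mp hs).1 (Finset.mem_Icc.mp hs).2).1))
    (fun s hs => ((hver s (Finset.mem_Icc.mp hs).1 (Finset.mem_Icc.mp hs).2).2.1))
    (fun s hs => ((hver s (Finset.mem_Icc.mp hs).1 (Finset.mem_Icc.mp hs).2).2.2))
    (fun ω h1 => by
      show Y t ω - Y (g - 1) ω = Y1 t ω - Y0 (g - 1) ω
      rw [hYtA ω h1, hYg1A ω h1])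
    (fun ω hc => by
      show Y t ω - Y (g - 1) ω = Y0 t ω - Y0 (g - 1) ω
      rw [hYB t htT ω hc, hYB (g - 1) (by omega) ω hc])
  calc ∫ ω, (Y1 t ω - Y0 t ω) ∂(P[|{ω | G g ω = 1}])
      = ∫ ω, ((Y1 t ω - Y0 (g - 1) ω) - (Y0 t ω - Y0 (g - 1) ω)) ∂(P[|{ω | G g ω = 1}]) :=
        integral_congr_ae (Filter.Eventually.of_forall fun ω => by ring)
    _ ≤ _ := hmain
end
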